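/- arXiv:1806.06683 — 7 statements merged into one kernel-verified Lean document; each statement's English description precedes it below -/
import Mathlib

section
/- Let Γ = {X_n}_{n∈ℕ₀} be a difference-bounded supermartingale adapted to a filtration {F_n}_{n∈ℕ₀} such that (1) X_0 is an almost-surely constant random variable, (2) for all n and all ω one has X_n(ω) ≥ 0, and X_n(ω) = 0 implies X_{n+1}(ω) = 0, and (3) Γ satisfies the LBCAD condition with some parameter δ ∈ (0,∞). Then P(Z_Γ < ∞) = 1, and the tail probabilities satisfy P(Z_Γ ≥ k) ∈ O(1/√k), i.e., there exist C > 0 and K ∈ ℕ such that P(Z_Γ ≥ k) ≤ C/√k for all k ≥ K. -/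
open MeasureTheory ProbabilityTheory Real

section Aux

lemma two_mul_le_exp_sub (x : ℝ) (hx : 0 ≤ x) : 2*x ≤ Real.exp x - Real.exp (-x) := by
  have h := Real.quadratic_le_exp_of_nonneg hx
  have hp := Real.exp_pos x
  have h2 : 1 - x + x^2/2 ≤ Real.exp x - 2*x := by linarith
  have h3 : (0:ℝ) < 1 - x + x^2/2 := by nlinarith [sq_nonneg (x-1)]
  have key : 0 ≤ Real.exp x * (Real.exp x - 2*x) - 1 := by
    nlinarith [mul_le_mul h h2 h3.le (by positivity : (0:ℝ) ≤ Real.exp x), sq_nonneg (x^2)]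
  have hInv : Real.exp x * (Real.exp x)⁻¹ = 1 := mul_inv_cancel₀ hp.ne'
  rw [Real.exp_neg]
  nlinarith [key, hp, hInv, inv_pos.2 hp]

lemma psi_lb {u : ℝ} (h0 : 0 ≤ u) (h1 : u ≤ 1) : u^2/5 ≤ Real.exp (-u) - 1 + u := by
  have hb := Real.exp_bound (x := -u) (by rwa [abs_neg, abs_of_nonneg h0]) (n := 3) (by norm_num)
  have hs : ∑ i ∈ Finset.range 3, (-u)^i / (Nat.factorial i) = 1 - u + u^2/2 := by
    simp [Finset.sum_range_succ, Nat.factorial]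
    ring
  rw [hs, abs_neg, abs_of_nonneg h0] at hb
  have hb1 := (abs_le.1 hb).1
  norm_num [Nat.factorial] at hb1
  have hcube : u^3 ≤ u^2 := pow_le_pow_of_le_one h0 h1 (by norm_num)
  nlinarith [hb1, hcube]

/-- core scalar inequality on the survival region -/
lemma master_pos (t δ a a' : ℝ) (ht : 0 < t) (hδ : 0 < δ) :
    Real.exp (-(t*a)) - t * (Real.exp (-(t*a)) * (a' - a))
      + ((Real.exp (-(t*δ)) - 1 + t*δ) * Real.exp (-(t*a))
         + ((1 - Real.exp (-(t*δ))) * t) * (Real.exp (-(t*a)) * |a' - a| - δ * Real.exp (-(t*a))))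
      ≤ Real.exp (-(t*a')) := by
  set d := a' - a with hd
  set u := t*δ with hu
  set v := t*|d| with hv
  have hrhs : Real.exp (-(t*a')) = Real.exp (-(t*a)) * Real.exp (-(t*d)) := by
    rw [← Real.exp_add, hd]; ring_nf
  have he := Real.exp_pos (-(t*a))
  -- reduce to the normalized inequality
  have hnorm : 1 - t*d + ((Real.exp (-u) - 1 + u) + (1 - Real.exp (-u)) * (v - u))
      ≤ Real.exp (-(t*d)) := by
    have h2 : (Real.exp (-u) - 1 + u) + (1 - Real.exp (-u)) * (v - u)
        ≤ Real.exp (-v) - 1 + v := by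
      have hexp : Real.exp (-u) * (1 + (u - v)) ≤ Real.exp (-v) := by
        have h1 := Real.add_one_le_exp (u - v)
        have := mul_le_mul_of_nonneg_left h1 (Real.exp_pos (-u)).le
        calc Real.exp (-u) * (1 + (u-v)) = Real.exp (-u) * ((u-v) + 1) := by ring
          _ ≤ Real.exp (-u) * Real.exp (u - v) := this
          _ = Real.exp (-v) := by rw [← Real.exp_add]; ring_nf
      nlinarith [hexp]
    have h1 : 1 - t*d + (Real.exp (-v) - 1 + v) ≤ Real.exp (-(t*d)) := by
      rcases le_or_gt 0 d with hd0 | hd0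
      · have : v = t*d := by rw [hv, abs_of_nonneg hd0]
        rw [this]; simp
      · have hx : 0 ≤ -(t*d) := by nlinarith
        have : v = -(t*d) := by rw [hv, abs_of_neg hd0]; ring
        rw [this]
        have := two_mul_le_exp_sub (-(t*d)) hx
        have hrw : Real.exp (-(-(t*d))) = Real.exp (t*d) := by ring_nf
        rw [hrw] at this
        have hrw2 : Real.exp (- -(t * d)) = Real.exp (t*d) := by ring_nf
        rw [hrw2]
        linarith
    linarith
  rw [hrhs]
  have hvd : Real.exp (-(t*a)) * |d| = Real.exp (-(t*a)) * |d| := rfl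
  calc Real.exp (-(t*a)) - t * (Real.exp (-(t*a)) * d)
      + ((Real.exp (-u) - 1 + u) * Real.exp (-(t*a))
         + ((1 - Real.exp (-u)) * t) * (Real.exp (-(t*a)) * |d| - δ * Real.exp (-(t*a))))
      = Real.exp (-(t*a)) * (1 - t*d + ((Real.exp (-u) - 1 + u) + (1 - Real.exp (-u)) * (v - u))) := by
        rw [hv, hu]; ring
    _ ≤ Real.exp (-(t*a)) * Real.exp (-(t*d)) :=
        mul_le_mul_of_nonneg_left hnorm he.le

lemma step_ineq {Ω : Type*} {m0 : MeasurableSpace Ω} {μ : Measure Ω} [IsProbabilityMeasure μ]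
    (ℱ : Filtration ℕ m0) (X : ℕ → Ω → ℝ)
    (hsup : Supermartingale X ℱ μ)
    (hnonneg : ∀ n ω, 0 ≤ X n ω)
    (habsorb : ∀ n ω, X n ω = 0 → X (n + 1) ω = 0)
    (δ : ℝ) (hδ : 0 < δ)
    (hLBCAD : ∀ n : ℕ, ∀ᵐ ω ∂μ,
      0 < X n ω → δ ≤ (μ[fun ω' => |X (n + 1) ω' - X n ω'| | ℱ n]) ω)
    (t : ℝ) (ht : 0 < t) (n : ℕ) :
    (∫ ω, Real.exp (-(t * X n ω)) ∂μ)
      + (Real.exp (-(t*δ)) - 1 + t*δ)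
        * ∫ ω, ({ω' | 0 < X n ω'}).indicator (fun ω' => Real.exp (-(t * X n ω'))) ω ∂μ
      ≤ ∫ ω, Real.exp (-(t * X (n+1) ω)) ∂μ := by
  set G : Ω → ℝ := fun ω => Real.exp (-(t * X n ω)) with hG
  set G' : Ω → ℝ := fun ω => Real.exp (-(t * X (n+1) ω)) with hG'
  set D : Ω → ℝ := fun ω => X (n+1) ω - X n ω with hD
  set AbsD : Ω → ℝ := fun ω' => |X (n + 1) ω' - X n ω'| with hAbsD
  set S : Set Ω := {ω' | 0 < X n ω'} with hS
  set g : Ω → ℝ := S.indicator G with hg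
  set ψ : ℝ := Real.exp (-(t*δ)) - 1 + t*δ with hψ
  set κ : ℝ := (1 - Real.exp (-(t*δ))) * t with hκ
  have hXsm : StronglyMeasurable[ℱ n] (X n) := hsup.stronglyMeasurable n
  have hXm : Measurable[ℱ n] (X n) := hXsm.measurable
  have hGsm : StronglyMeasurable[ℱ n] G := by
    have : Measurable[ℱ n] fun ω => -(t * X n ω) := (hXm.const_mul t).neg
    exact (Real.measurable_exp.comp this).stronglyMeasurable
  have hSmeas : MeasurableSet[ℱ n] S := measurableSet_lt measurable_const hXm
  have hgsm : StronglyMeasurable[ℱ n] g := hGsm.indicator hSmeas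
  have hG0 : ∀ ω, 0 < G ω := fun ω => Real.exp_pos _
  have hG1 : ∀ ω, G ω ≤ 1 := by
    intro ω
    rw [hG]
    refine Real.exp_le_one_iff.2 ?_
    simp only [neg_nonpos]
    exact mul_nonneg ht.le (hnonneg n ω)
  have hg0 : ∀ ω, 0 ≤ g ω := fun ω => Set.indicator_nonneg (fun ω' _ => (hG0 ω').le) ω
  have hg1 : ∀ ω, g ω ≤ 1 := by
    intro ω
    refine Set.indicator_le' (fun ω' _ => hG1 ω') (fun _ _ => zero_le_one) ω
  have hGb : ∀ᵐ ω ∂μ, ‖G ω‖ ≤ 1 := ae_of_all _ fun ω => by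
    rw [Real.norm_eq_abs, abs_of_pos (hG0 ω)]; exact hG1 ω
  have hgb : ∀ᵐ ω ∂μ, ‖g ω‖ ≤ 1 := ae_of_all _ fun ω => by
    rw [Real.norm_eq_abs, abs_of_nonneg (hg0 ω)]; exact hg1 ω
  have hDint : Integrable D μ := (hsup.integrable (n+1)).sub (hsup.integrable n)
  have hAbsDint : Integrable AbsD μ := hDint.abs
  have hGaesm : AEStronglyMeasurable G μ := (hGsm.mono (ℱ.le n)).aestronglyMeasurable
  have hgaesm : AEStronglyMeasurable g μ := (hgsm.mono (ℱ.le n)).aestronglyMeasurable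
  have hGint : Integrable G μ := (integrable_const (1:ℝ)).mono' hGaesm hGb
  have hgint : Integrable g μ := (integrable_const (1:ℝ)).mono' hgaesm hgb
  have hGDint : Integrable (fun ω => G ω * D ω) μ :=
    hDint.bdd_mul hGaesm (c := 1) (ae_of_all _ fun ω => by rw [Real.norm_eq_abs, abs_of_pos (hG0 ω)]; exact hG1 ω)
  have hF4int : Integrable (fun ω => g ω * AbsD ω) μ :=
    hAbsDint.bdd_mul hgaesm (c := 1) (ae_of_all _ fun ω => by rw [Real.norm_eq_abs, abs_of_nonneg (hg0 ω)]; exact hg1 ω)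
  -- (a) the drift term is nonpositive
  have hA : ∫ ω, G ω * D ω ∂μ ≤ 0 := by
    have hpull : μ[G * D|ℱ n] =ᵐ[μ] G * μ[D|ℱ n] :=
      condExp_stronglyMeasurable_mul_of_bound (ℱ.le n) hGsm hDint 1 hGb
    have hcondD : μ[D|ℱ n] ≤ᵐ[μ] 0 := by
      have h1 : μ[D|ℱ n] =ᵐ[μ] μ[X (n+1)|ℱ n] - μ[X n|ℱ n] :=
        condExp_sub (hsup.integrable (n+1)) (hsup.integrable n) _
      have h2 : μ[X n|ℱ n] = X n :=
        condExp_of_stronglyMeasurable (ℱ.le n) hXsm (hsup.integrable n)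
      have h3 : μ[X (n+1)|ℱ n] ≤ᵐ[μ] X n := hsup.condExp_ae_le (Nat.le_succ n)
      filter_upwards [h1, h3] with ω hω1 hω3
      have he : (μ[D|ℱ n]) ω = (μ[X (n+1)|ℱ n]) ω - X n ω := by
        rw [hω1, Pi.sub_apply, h2]
      show (μ[D|ℱ n]) ω ≤ (0 : Ω → ℝ) ω
      simp only [Pi.zero_apply]
      rw [he]
      linarith
    calc ∫ ω, G ω * D ω ∂μ = ∫ ω, (μ[G * D|ℱ n]) ω ∂μ :=
          (integral_condExp (ℱ.le n)).symm
      _ = ∫ ω, (G * μ[D|ℱ n]) ω ∂μ := integral_congr_ae hpull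
      _ ≤ 0 := by
          refine integral_nonpos_of_ae ?_
          filter_upwards [hcondD] with ω hω
          exact mul_nonpos_of_nonneg_of_nonpos (hG0 ω).le hω
  -- (b) conditional progress
  have hB : δ * ∫ ω, g ω ∂μ ≤ ∫ ω, g ω * AbsD ω ∂μ := by
    have hpull : μ[g * AbsD|ℱ n] =ᵐ[μ] g * μ[AbsD|ℱ n] :=
      condExp_stronglyMeasurable_mul_of_bound (ℱ.le n) hgsm hAbsDint 1 hgb
    have h1 : ∫ ω, g ω * AbsD ω ∂μ = ∫ ω, (g * μ[AbsD|ℱ n]) ω ∂μ := by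
      calc ∫ ω, g ω * AbsD ω ∂μ = ∫ ω, (μ[g * AbsD|ℱ n]) ω ∂μ :=
            (integral_condExp (ℱ.le n)).symm
        _ = _ := integral_congr_ae hpull
    rw [h1, ← integral_const_mul]
    refine integral_mono_ae (hgint.const_mul δ)
      (integrable_condExp.bdd_mul hgaesm (c := 1)
        (ae_of_all _ fun ω => by rw [Real.norm_eq_abs, abs_of_nonneg (hg0 ω)]; exact hg1 ω)) ?_
    filter_upwards [hLBCAD n] with ω hω
    simp only [Pi.mul_apply]
    by_cases hmem : ω ∈ S
    · have hgω : g ω = G ω := Set.indicator_of_mem hmem _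
      have := hω hmem
      rw [hgω, mul_comm δ (G ω)]
      exact mul_le_mul_of_nonneg_left this (hG0 ω).le
    · have hgω : g ω = 0 := Set.indicator_of_notMem hmem _
      simp [hgω]
  -- pointwise master inequality
  have hpt : ∀ ω, G ω - t * (G ω * D ω)
      + (ψ * g ω + κ * (g ω * AbsD ω - δ * g ω)) ≤ G' ω := by
    intro ω
    by_cases hmem : ω ∈ S
    · have hgω : g ω = G ω := Set.indicator_of_mem hmem _
      rw [hgω]
      exact master_pos t δ (X n ω) (X (n+1) ω) ht hδ
    · have hX0 : X n ω = 0 := le_antisymm (not_lt.1 hmem) (hnonneg n ω)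
      have hX1 : X (n+1) ω = 0 := habsorb n ω hX0
      have hgω : g ω = 0 := Set.indicator_of_notMem hmem _
      simp only [hG, hG', hD, hgω, hX0, hX1, mul_zero, sub_zero, zero_sub, mul_neg, neg_zero,
        Real.exp_zero, mul_one, zero_mul, add_zero, sub_self]
      norm_num
  -- integrate
  have hi3 : Integrable (fun ω => t * (G ω * D ω)) μ := hGDint.const_mul t
  have hi4 : Integrable (fun ω => ψ * g ω) μ := hgint.const_mul ψ
  have hi5 : Integrable (fun ω => g ω * AbsD ω - δ * g ω) μ := hF4int.sub (hgint.const_mul δ)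
  have hi6 : Integrable (fun ω => κ * (g ω * AbsD ω - δ * g ω)) μ := hi5.const_mul κ
  have hi1 : Integrable (fun ω => G ω - t * (G ω * D ω)) μ := hGint.sub hi3
  have hi2 : Integrable (fun ω => ψ * g ω + κ * (g ω * AbsD ω - δ * g ω)) μ := hi4.add hi6
  have hLHSint : Integrable (fun ω => G ω - t * (G ω * D ω)
      + (ψ * g ω + κ * (g ω * AbsD ω - δ * g ω))) μ := hi1.add hi2
  have hG'int : Integrable G' μ := by
    refine (integrable_const (1:ℝ)).mono' ?_ (ae_of_all _ fun ω => ?_)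
    · have hXsm' : StronglyMeasurable[ℱ (n+1)] (X (n+1)) := hsup.stronglyMeasurable (n+1)
      have : Measurable[ℱ (n+1)] fun ω => -(t * X (n+1) ω) := (hXsm'.measurable.const_mul t).neg
      exact ((Real.measurable_exp.comp this).stronglyMeasurable.mono (ℱ.le (n+1))).aestronglyMeasurable
    · rw [Real.norm_eq_abs, abs_of_pos (Real.exp_pos _)]
      refine Real.exp_le_one_iff.2 ?_
      simp only [neg_nonpos]
      exact mul_nonneg ht.le (hnonneg (n+1) ω)
  have hint_le : ∫ ω, (G ω - t * (G ω * D ω)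
      + (ψ * g ω + κ * (g ω * AbsD ω - δ * g ω))) ∂μ ≤ ∫ ω, G' ω ∂μ :=
    integral_mono hLHSint hG'int hpt
  have hsplit : ∫ ω, (G ω - t * (G ω * D ω)
      + (ψ * g ω + κ * (g ω * AbsD ω - δ * g ω))) ∂μ
      = (∫ ω, G ω ∂μ) - t * (∫ ω, G ω * D ω ∂μ)
        + (ψ * (∫ ω, g ω ∂μ) + κ * ((∫ ω, g ω * AbsD ω ∂μ) - δ * (∫ ω, g ω ∂μ))) := by
    rw [integral_add hi1 hi2, integral_sub hGint hi3,
      integral_add hi4 hi6, integral_const_mul, integral_const_mul, integral_const_mul,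
      integral_sub hF4int (hgint.const_mul δ), integral_const_mul]
  rw [hsplit] at hint_le
  have hκ0 : 0 ≤ κ := by
    rw [hκ]
    refine mul_nonneg ?_ ht.le
    have : Real.exp (-(t*δ)) ≤ 1 := Real.exp_le_one_iff.2 (by nlinarith)
    linarith
  have ht1 : t * (∫ ω, G ω * D ω ∂μ) ≤ 0 := mul_nonpos_of_nonneg_of_nonpos ht.le hA
  have ht2 : 0 ≤ κ * ((∫ ω, g ω * AbsD ω ∂μ) - δ * (∫ ω, g ω ∂μ)) :=
    mul_nonneg hκ0 (by linarith)
  linarith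

end Aux


/-- **Difference-bounded supermartingales terminate a.s. with `O(1/√k)` tail bound.**
`Z_Γ(ω) = min {n | X n ω ≤ 0}`; hence `P(Z_Γ < ∞) = μ {ω | ∃ n, X n ω ≤ 0}` and
`P(Z_Γ ≥ k) = μ {ω | ∀ n < k, 0 < X n ω}`. -/
theorem difference_bounded_supermartingale_as_termination
    {Ω : Type*} {m0 : MeasurableSpace Ω} {μ : Measure Ω} [IsProbabilityMeasure μ]
    (ℱ : Filtration ℕ m0) (X : ℕ → Ω → ℝ)
    (hsup : Supermartingale X ℱ μ)
    (c : ℝ) (hc : 0 < c)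
    (hdiff : ∀ n : ℕ, ∀ᵐ ω ∂μ, |X (n + 1) ω - X n ω| ≤ c)
    (x₀ : ℝ) (hX0 : ∀ᵐ ω ∂μ, X 0 ω = x₀)
    (hnonneg : ∀ n ω, 0 ≤ X n ω)
    (habsorb : ∀ n ω, X n ω = 0 → X (n + 1) ω = 0)
    (δ : ℝ) (hδ : 0 < δ)
    (hLBCAD : ∀ n : ℕ, ∀ᵐ ω ∂μ,
      0 < X n ω → δ ≤ (μ[fun ω' => |X (n + 1) ω' - X n ω'| | ℱ n]) ω) :
    μ {ω | ∃ n : ℕ, X n ω ≤ 0} = 1 ∧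
      ∃ C > (0 : ℝ), ∃ K : ℕ, ∀ k : ℕ, K ≤ k →
        (μ {ω | ∀ n < k, 0 < X n ω}).toReal ≤ C / Real.sqrt k := by
  have hx₀ : 0 ≤ x₀ := by
    obtain ⟨ω, hω⟩ := hX0.exists
    rw [← hω]; exact hnonneg 0 ω
  obtain ⟨C, hC⟩ : ∃ C : ℝ, C = x₀ * (1 + 5 * Real.exp 1 / δ^2) + 1 := ⟨_, rfl⟩
  have hq : 0 ≤ 5 * Real.exp 1 / δ^2 := by positivity
  have hCpos : 0 < C := by nlinarith [mul_nonneg hx₀ hq]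
  obtain ⟨K, hK⟩ : ∃ K : ℕ, K = max 1 ⌈δ^2⌉₊ := ⟨_, rfl⟩
  -- measurability of the basic sets
  have hXm : ∀ n, Measurable (X n) :=
    fun n => ((hsup.stronglyMeasurable n).mono (ℱ.le n)).measurable
  have hSm : ∀ n, MeasurableSet {ω | 0 < X n ω} :=
    fun n => measurableSet_lt measurable_const (hXm n)
  have hTm : ∀ k : ℕ, MeasurableSet {ω | ∀ n < k, 0 < X n ω} := by
    intro k
    have : {ω | ∀ n < k, 0 < X n ω} = ⋂ n, ⋂ _ : n < k, {ω | 0 < X n ω} := by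
      ext ω; simp [Set.mem_iInter]
    rw [this]
    exact MeasurableSet.iInter fun n => MeasurableSet.iInter fun _ => hSm n
  -- expectation bound : ∫ X n ≤ x₀
  have hmean : ∀ n, ∫ ω, X n ω ∂μ ≤ x₀ := by
    intro n
    have h1 := hsup.setIntegral_le (Nat.zero_le n) (@MeasurableSet.univ Ω (ℱ 0))
    rw [setIntegral_univ, setIntegral_univ] at h1
    refine h1.trans ?_
    have h2 : ∫ ω, X 0 ω ∂μ = ∫ _ω, x₀ ∂μ := integral_congr_ae hX0
    rw [h2, integral_const]
    simp
  -- the key quantitative bound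
  have main : ∀ k : ℕ, K ≤ k →
      (μ {ω | ∀ n < k, 0 < X n ω}).toReal ≤ C / Real.sqrt k := by
    intro k hk
    rw [hK] at hk
    have hk1 : 1 ≤ k := le_trans (le_max_left _ _) hk
    have hkpos : (0:ℝ) < k := by exact_mod_cast hk1
    have hkδ : δ^2 ≤ (k:ℝ) := by
      refine le_trans (Nat.le_ceil (δ^2)) ?_
      exact_mod_cast le_trans (le_max_right 1 ⌈δ^2⌉₊) hk
    obtain ⟨s, hs⟩ : ∃ s : ℝ, s = Real.sqrt k := ⟨_, rfl⟩
    have hspos : 0 < s := by rw [hs]; exact Real.sqrt_pos.2 hkpos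
    have hs2 : s^2 = k := by rw [hs]; exact Real.sq_sqrt hkpos.le
    have hδs : δ ≤ s := by
      rw [hs]
      calc δ = Real.sqrt (δ^2) := (Real.sqrt_sq hδ.le).symm
        _ ≤ Real.sqrt k := Real.sqrt_le_sqrt hkδ
    obtain ⟨t, htdef⟩ : ∃ t : ℝ, t = 1/s := ⟨_, rfl⟩
    have ht : 0 < t := by rw [htdef]; positivity
    have hts : t * s = 1 := by rw [htdef]; field_simp
    obtain ⟨ψ, hψdef⟩ : ∃ ψ : ℝ, ψ = Real.exp (-(t*δ)) - 1 + t*δ := ⟨_, rfl⟩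
    have hu0 : 0 ≤ t*δ := by positivity
    have hu1 : t*δ ≤ 1 := by
      rw [htdef, div_mul_eq_mul_div, one_mul, div_le_one hspos]
      exact hδs
    have hψlb : (t*δ)^2/5 ≤ ψ := by rw [hψdef]; exact psi_lb hu0 hu1
    have hψlb' : δ^2/(5*k) ≤ ψ := by
      refine le_trans (le_of_eq ?_) hψlb
      rw [← hs2, htdef]
      field_simp
    have hψpos : 0 < ψ := by
      have : (0:ℝ) < δ^2/(5*k) := by positivity
      linarith
    -- integrability of the exponential process
    have hGaesm : ∀ n, AEStronglyMeasurable (fun ω => Real.exp (-(t * X n ω))) μ :=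
      fun n => (Real.measurable_exp.comp ((hXm n).const_mul t).neg).aestronglyMeasurable
    have hGb : ∀ n ω, ‖Real.exp (-(t * X n ω))‖ ≤ 1 := by
      intro n ω
      rw [Real.norm_eq_abs, abs_of_pos (Real.exp_pos _)]
      refine Real.exp_le_one_iff.2 ?_
      simp only [neg_nonpos]
      exact mul_nonneg ht.le (hnonneg n ω)
    have hGint : ∀ n, Integrable (fun ω => Real.exp (-(t * X n ω))) μ :=
      fun n => (integrable_const (1:ℝ)).mono' (hGaesm n) (ae_of_all _ (hGb n))
    have hgint : ∀ n, Integrable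
        (fun ω => ({ω' | 0 < X n ω'}).indicator (fun ω' => Real.exp (-(t * X n ω'))) ω) μ :=
      fun n => ((hGint n).indicator (hSm n))
    -- telescoping sum from the one-step inequality
    obtain ⟨E, hE⟩ : ∃ E : ℕ → ℝ, E = fun n => ∫ ω, Real.exp (-(t * X n ω)) ∂μ := ⟨_, rfl⟩
    obtain ⟨I, hI⟩ : ∃ I : ℕ → ℝ, I = fun n =>
      ∫ ω, ({ω' | 0 < X n ω'}).indicator (fun ω' => Real.exp (-(t * X n ω'))) ω ∂μ := ⟨_, rfl⟩
    have hstep : ∀ n, E n + ψ * I n ≤ E (n+1) := by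
      intro n
      rw [hE, hI, hψdef]
      exact step_ineq ℱ X hsup hnonneg habsorb δ hδ hLBCAD t ht n
    have hsum : ∀ m : ℕ, E 0 + ψ * (∑ n ∈ Finset.range m, I n) ≤ E m := by
      intro m
      induction m with
      | zero => simp
      | succ m ih =>
        rw [Finset.sum_range_succ, mul_add]
        have := hstep m
        linarith
    have hEk1 : E k ≤ 1 := by
      rw [hE]
      calc ∫ ω, Real.exp (-(t * X k ω)) ∂μ ≤ ∫ _ω, (1:ℝ) ∂μ := by
            refine integral_mono (hGint k) (integrable_const 1) ?_
            intro ω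
            have := hGb k ω
            rw [Real.norm_eq_abs, abs_of_pos (Real.exp_pos _)] at this
            exact this
        _ = 1 := by simp
    have hE0 : E 0 = Real.exp (-(t * x₀)) := by
      rw [hE]
      show (∫ ω, Real.exp (-(t * X 0 ω)) ∂μ) = Real.exp (-(t * x₀))
      have h2 : ∫ ω, Real.exp (-(t * X 0 ω)) ∂μ = ∫ _ω, Real.exp (-(t * x₀)) ∂μ :=
        integral_congr_ae (hX0.mono fun ω hω => by simp [hω])
      rw [h2, integral_const]
      simp
    have hsum_ub : ψ * (∑ n ∈ Finset.range k, I n) ≤ x₀ / s := by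
      have h1 := hsum k
      have h2 : 1 - Real.exp (-(t * x₀)) ≤ t * x₀ := by
        have := Real.add_one_le_exp (-(t * x₀))
        linarith
      have h3 : t * x₀ = x₀ / s := by rw [htdef]; ring
      rw [hE0] at h1
      linarith
    -- lower bound for each I n
    obtain ⟨P, hP⟩ : ∃ P : ℝ, P = (μ {ω | ∀ n < k, 0 < X n ω}).toReal := ⟨_, rfl⟩
    have hIn_lb : ∀ n < k, Real.exp (-1) * (P - x₀ / s) ≤ I n := by
      intro n hn
      have hVm : MeasurableSet {ω | s ≤ X n ω} := measurableSet_le measurable_const (hXm n)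
      have hVle : (μ {ω | s ≤ X n ω}).toReal ≤ x₀ / s := by
        rw [le_div_iff₀ hspos]
        have hmar := mul_meas_ge_le_integral_of_nonneg
          (ae_of_all μ (hnonneg n)) (hsup.integrable n) s
        have h' : s * (μ {ω | s ≤ X n ω}).toReal ≤ x₀ := le_trans hmar (hmean n)
        linarith
      have hWm : MeasurableSet ({ω | ∀ m < k, 0 < X m ω} ∩ {ω | X n ω ≤ s}) :=
        (hTm k).inter (measurableSet_le (hXm n) measurable_const)
      have hPW : P ≤ (μ ({ω | ∀ m < k, 0 < X m ω} ∩ {ω | X n ω ≤ s})).toReal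
          + (μ {ω | s ≤ X n ω}).toReal := by
        have hsub : {ω | ∀ m < k, 0 < X m ω} ⊆
            ({ω | ∀ m < k, 0 < X m ω} ∩ {ω | X n ω ≤ s}) ∪ {ω | s ≤ X n ω} := by
          intro ω hω
          rcases le_or_gt (X n ω) s with h | h
          · exact Or.inl ⟨hω, h⟩
          · exact Or.inr h.le
        have h1 : μ {ω | ∀ m < k, 0 < X m ω} ≤
            μ ({ω | ∀ m < k, 0 < X m ω} ∩ {ω | X n ω ≤ s}) + μ {ω | s ≤ X n ω} :=
          (measure_mono hsub).trans (measure_union_le _ _)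
        have h2 := ENNReal.toReal_add (measure_ne_top μ
            ({ω | ∀ m < k, 0 < X m ω} ∩ {ω | X n ω ≤ s})) (measure_ne_top μ {ω | s ≤ X n ω})
        rw [hP, ← h2]
        exact ENNReal.toReal_mono (ENNReal.add_ne_top.2
          ⟨measure_ne_top μ _, measure_ne_top μ _⟩) h1
      have hWI : Real.exp (-1) * (μ ({ω | ∀ m < k, 0 < X m ω} ∩ {ω | X n ω ≤ s})).toReal
          ≤ I n := by
        have hle : ∀ ω, (({ω | ∀ m < k, 0 < X m ω} ∩ {ω | X n ω ≤ s}).indicator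
            (fun _ => Real.exp (-1))) ω ≤
            ({ω' | 0 < X n ω'}).indicator (fun ω' => Real.exp (-(t * X n ω'))) ω := by
          intro ω
          by_cases hω : ω ∈ ({ω | ∀ m < k, 0 < X m ω} ∩ {ω | X n ω ≤ s})
          · rw [Set.indicator_of_mem hω]
            have hωS : ω ∈ {ω' | 0 < X n ω'} := hω.1 n hn
            rw [Set.indicator_of_mem hωS]
            refine Real.exp_le_exp.2 ?_
            have hXle : X n ω ≤ s := hω.2
            have h1 : t * X n ω ≤ 1 := by
              calc t * X n ω ≤ t * s := mul_le_mul_of_nonneg_left hXle ht.le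
                _ = 1 := hts
            linarith
          · rw [Set.indicator_of_notMem hω]
            exact Set.indicator_nonneg (fun ω' _ => (Real.exp_pos _).le) ω
        have hii : Integrable (({ω | ∀ m < k, 0 < X m ω} ∩ {ω | X n ω ≤ s}).indicator
            fun _ => Real.exp (-1)) μ := (integrable_const _).indicator hWm
        have hmono := integral_mono hii (hgint n) hle
        rw [integral_indicator_const _ hWm] at hmono
        rw [hI]
        calc Real.exp (-1) * (μ ({ω | ∀ m < k, 0 < X m ω} ∩ {ω | X n ω ≤ s})).toReal
            = (μ ({ω | ∀ m < k, 0 < X m ω} ∩ {ω | X n ω ≤ s})).toReal • Real.exp (-1) := by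
              rw [smul_eq_mul]; ring
          _ ≤ _ := hmono
      calc Real.exp (-1) * (P - x₀ / s)
          ≤ Real.exp (-1) * (μ ({ω | ∀ m < k, 0 < X m ω} ∩ {ω | X n ω ≤ s})).toReal := by
            refine mul_le_mul_of_nonneg_left ?_ (Real.exp_pos _).le
            linarith
        _ ≤ I n := hWI
    -- combine
    have hsum_lb : (k:ℝ) * (Real.exp (-1) * (P - x₀ / s)) ≤ ∑ n ∈ Finset.range k, I n := by
      have h1 := Finset.card_nsmul_le_sum (Finset.range k)
        (fun n => I n) (Real.exp (-1) * (P - x₀ / s)) (fun n hn => hIn_lb n (Finset.mem_range.1 hn))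
      rw [Finset.card_range, nsmul_eq_mul] at h1
      exact h1
    have hfinal : P ≤ C / s := by
      rcases le_or_gt P (x₀ / s) with hcase | hcase
      · calc P ≤ x₀ / s := hcase
          _ ≤ C / s := by
            rw [div_le_div_iff_of_pos_right hspos, hC]
            nlinarith [mul_nonneg hx₀ hq]
      · have hQpos : 0 < P - x₀ / s := by linarith
        have h1 : ψ * ((k:ℝ) * (Real.exp (-1) * (P - x₀ / s))) ≤ x₀ / s := by
          refine le_trans ?_ hsum_ub
          exact mul_le_mul_of_nonneg_left hsum_lb hψpos.le
        have h2 : δ^2/(5*k) * ((k:ℝ) * (Real.exp (-1) * (P - x₀ / s))) ≤ x₀ / s := by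
          refine le_trans ?_ h1
          refine mul_le_mul_of_nonneg_right hψlb' ?_
          positivity
        have hk0 : (k:ℝ) ≠ 0 := hkpos.ne'
        have h4 : δ^2/5 * (Real.exp (-1) * (P - x₀ / s)) ≤ x₀ / s := by
          have heq : δ^2/5 * (Real.exp (-1) * (P - x₀ / s))
              = δ^2/(5*(k:ℝ)) * ((k:ℝ) * (Real.exp (-1) * (P - x₀ / s))) := by
            field_simp
          rw [heq]
          exact h2
        have he1 : 0 < Real.exp 1 := Real.exp_pos 1
        have h4' : δ^2/(5*Real.exp 1) * (P - x₀/s) ≤ x₀/s := by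
          have heq : δ^2/5 * (Real.exp (-1) * (P - x₀ / s))
              = δ^2/(5*Real.exp 1) * (P - x₀/s) := by
            rw [Real.exp_neg]
            ring
          rw [← heq]
          exact h4
        have h5 : P - x₀/s ≤ (5*Real.exp 1/δ^2) * (x₀/s) := by
          have hone : (5*Real.exp 1/δ^2) * (δ^2/(5*Real.exp 1)) = 1 := by
            field_simp
          calc P - x₀/s = (5*Real.exp 1/δ^2) * (δ^2/(5*Real.exp 1) * (P - x₀/s)) := by
                rw [← mul_assoc, hone, one_mul]
            _ ≤ (5*Real.exp 1/δ^2) * (x₀/s) :=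
                mul_le_mul_of_nonneg_left h4' (by positivity)
        calc P ≤ x₀ / s + 5 * Real.exp 1/δ^2 * (x₀/s) := by linarith
          _ = (x₀ * (1 + 5 * Real.exp 1 / δ^2)) / s := by
            field_simp
          _ ≤ C / s := by
            rw [div_le_div_iff_of_pos_right hspos, hC]
            linarith
    rw [← hs, ← hP]
    exact hfinal
  refine ⟨?_, C, hCpos, K, main⟩
  -- almost-sure termination
  have hAm : MeasurableSet {ω | ∀ n, 0 < X n ω} := by
    have h1 : {ω | ∀ n, 0 < X n ω} = ⋂ n, {ω | 0 < X n ω} := by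
      ext ω; simp [Set.mem_iInter]
    rw [h1]; exact MeasurableSet.iInter fun n => hSm n
  have hA0 : μ {ω | ∀ n, 0 < X n ω} = 0 := by
    have hbound : ∀ k : ℕ, K ≤ k →
        (μ {ω | ∀ n, 0 < X n ω}).toReal ≤ C / Real.sqrt k := by
      intro k hk
      refine le_trans ?_ (main k hk)
      refine ENNReal.toReal_mono (measure_ne_top μ _) (measure_mono ?_)
      intro ω hω n _
      exact hω n
    have htend : Filter.Tendsto (fun k : ℕ => C / Real.sqrt k) Filter.atTop (nhds 0) := by
      refine Filter.Tendsto.div_atTop tendsto_const_nhds ?_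
      have h1 : Filter.Tendsto (fun x : ℝ => x ^ (1/2 : ℝ)) Filter.atTop Filter.atTop :=
        tendsto_rpow_atTop (by norm_num)
      have h2 : Filter.Tendsto (fun k : ℕ => (k:ℝ)) Filter.atTop Filter.atTop :=
        tendsto_natCast_atTop_atTop
      refine (h1.comp h2).congr ?_
      intro k
      simp only [Function.comp_apply]
      rw [Real.sqrt_eq_rpow]
    have hle0 : (μ {ω | ∀ n, 0 < X n ω}).toReal ≤ 0 := by
      refine ge_of_tendsto htend ?_
      filter_upwards [Filter.eventually_ge_atTop K] with k hk
      exact hbound k hk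
    have h0 : (μ {ω | ∀ n, 0 < X n ω}).toReal = 0 :=
      le_antisymm hle0 ENNReal.toReal_nonneg
    rcases (ENNReal.toReal_eq_zero_iff _).1 h0 with h | h
    · exact h
    · exact absurd h (measure_ne_top μ _)
  have hcompl : {ω | ∃ n : ℕ, X n ω ≤ 0} = {ω | ∀ n, 0 < X n ω}ᶜ := by
    ext ω
    simp only [Set.mem_setOf_eq, Set.mem_compl_iff, not_forall, not_lt]
  rw [hcompl, measure_compl hAm (measure_ne_top μ _), hA0, measure_univ, tsub_zero]
end

section
/- Let Γ = {X_n}_{n∈ℕ₀} be a difference-bounded supermartingale adapted to a filtration {F_n}_{n∈ℕ₀} such that (1) X_0 is an almost-surely constant random variable, (2) for all n and all ω one has X_n(ω) ≥ 0, and X_n(ω) = 0 implies X_{n+1}(ω) = 0, and (3) Γ satisfies the LBCAD condition with some parameter δ ∈ (0,∞). Then there exists K ∈ ℕ such that for all k ≥ K, P(Z_Γ ≥ k) ≤ (1 − e^{−E(X_0)/√k}) / (1 − (1 + δ²/(4k))^{−k}). -/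
open MeasureTheory ProbabilityTheory

private lemma exp_taylor_lb {x : ℝ} (hx : |x| ≤ 1) :
    1 + x + x ^ 2 / 2 - |x| ^ 3 / 2 ≤ Real.exp x := by
  have h := Real.exp_bound hx (n := 3) (by norm_num)
  have hsum : ∑ m ∈ Finset.range 3, x ^ m / (m.factorial : ℝ) = 1 + x + x ^ 2 / 2 := by
    simp [Finset.sum_range_succ, Nat.factorial]
  rw [hsum] at h
  have h1 := (abs_le.1 h).1
  have h2 : (0:ℝ) ≤ |x| ^ 3 := pow_nonneg (abs_nonneg x) 3
  norm_num [Nat.factorial] at h1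
  nlinarith

set_option maxHeartbeats 1000000 in
/-- **Explicit tail bound for difference-bounded supermartingales.**
For all sufficiently large `k`,
`P(Z_Γ ≥ k) ≤ (1 − e^{−E(X₀)/√k}) / (1 − (1 + δ²/(4k))^{−k})`, where
`P(Z_Γ ≥ k) = μ {ω | ∀ n < k, 0 < X n ω}`. -/
theorem difference_bounded_supermartingale_explicit_tail_bound
    {Ω : Type*} {m0 : MeasurableSpace Ω} {μ : Measure Ω} [IsProbabilityMeasure μ]
    (ℱ : Filtration ℕ m0) (X : ℕ → Ω → ℝ)
    (hsup : Supermartingale X ℱ μ)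
    (c : ℝ) (hc : 0 < c)
    (hdiff : ∀ n : ℕ, ∀ᵐ ω ∂μ, |X (n + 1) ω - X n ω| ≤ c)
    (x₀ : ℝ) (hX0 : ∀ᵐ ω ∂μ, X 0 ω = x₀)
    (hnonneg : ∀ n ω, 0 ≤ X n ω)
    (habsorb : ∀ n ω, X n ω = 0 → X (n + 1) ω = 0)
    (δ : ℝ) (hδ : 0 < δ)
    (hLBCAD : ∀ n : ℕ, ∀ᵐ ω ∂μ,
      0 < X n ω → δ ≤ (μ[fun ω' => |X (n + 1) ω' - X n ω'| | ℱ n]) ω) :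
    ∃ K : ℕ, ∀ k : ℕ, K ≤ k →
      (μ {ω | ∀ n < k, 0 < X n ω}).toReal ≤
        (1 - Real.exp (-(∫ ω, X 0 ω ∂μ) / Real.sqrt k)) /
          (1 - ((1 + δ ^ 2 / (4 * (k : ℝ))) ^ k)⁻¹) := by
  classical
  have hXm : ∀ n, StronglyMeasurable[ℱ n] (X n) := hsup.1
  have hXint : ∀ n, Integrable (X n) μ := hsup.2.2
  refine ⟨⌈(4:ℝ) * c ^ 2⌉₊ + 1, fun k hk => ?_⟩
  have hk1 : 1 ≤ k := le_trans (Nat.le_add_left 1 _) hk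
  have hkc : (4:ℝ) * c ^ 2 ≤ k := by
    have h1 : ⌈(4:ℝ) * c ^ 2⌉₊ ≤ k := le_trans (Nat.le_succ _) hk
    exact_mod_cast Nat.ceil_le.mp h1
  have hk0 : (0:ℝ) < k := by
    have : (1:ℝ) ≤ k := by exact_mod_cast hk1
    linarith
  have hsq : 0 < Real.sqrt k := Real.sqrt_pos.2 hk0
  set t : ℝ := (Real.sqrt k)⁻¹ with ht
  have ht0 : 0 < t := inv_pos.2 hsq
  have ht2 : t ^ 2 = (k:ℝ)⁻¹ := by rw [ht, inv_pow, Real.sq_sqrt hk0.le]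
  have h2c : 2 * c ≤ Real.sqrt k := by
    have h1 : Real.sqrt (4 * c ^ 2) = 2 * c := by
      rw [show (4:ℝ) * c ^ 2 = (2 * c) ^ 2 by ring, Real.sqrt_sq (by positivity)]
    rw [← h1]; exact Real.sqrt_le_sqrt hkc
  have htc : t * c ≤ 1 / 2 := by
    rw [ht, inv_mul_eq_div, div_le_div_iff₀ hsq (by norm_num : (0:ℝ) < 2)]
    linarith
  set a : ℝ := 1 + δ ^ 2 / (4 * (k:ℝ)) with ha
  have haq : a = 1 + t ^ 2 * δ ^ 2 / 4 := by rw [ha, ht2]; ring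
  have ha1 : 1 < a := by
    have : 0 < δ ^ 2 / (4 * (k:ℝ)) := by positivity
    rw [ha]; linarith
  have ha0 : 0 < a := lt_trans one_pos ha1
  obtain ⟨σ, hσ⟩ : ∃ σ' : ℕ → Ω → ℕ,
      σ' = fun n ω => ((Finset.range n).filter fun m => 0 < X m ω).card := ⟨_, rfl⟩
  obtain ⟨M, hM⟩ : ∃ M' : ℕ → Ω → ℝ,
      M' = fun n ω => (a ^ σ n ω)⁻¹ * Real.exp (-(t * X n ω)) := ⟨_, rfl⟩
  have hMpos : ∀ n ω, 0 < M n ω := fun n ω => by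
    rw [hM]; exact mul_pos (inv_pos.2 (pow_pos ha0 _)) (Real.exp_pos _)
  have hMle : ∀ n ω, M n ω ≤ 1 := by
    intro n ω
    rw [hM]
    have h1 : (a ^ σ n ω)⁻¹ ≤ 1 := inv_le_one_of_one_le₀ (one_le_pow₀ ha1.le)
    have h2 : Real.exp (-(t * X n ω)) ≤ 1 :=
      Real.exp_le_one_iff.2 (neg_nonpos.2 (mul_nonneg ht0.le (hnonneg n ω)))
    exact mul_le_one₀ h1 (Real.exp_pos _).le h2
  have hBm : ∀ n, MeasurableSet[ℱ n] {ω | 0 < X n ω} := fun n =>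
    measurableSet_lt measurable_const (hXm n).measurable
  have hσm : ∀ n, Measurable[ℱ n] (σ n) := by
    intro n
    have heq : σ n = fun ω => ∑ m ∈ Finset.range n, if 0 < X m ω then 1 else 0 := by
      funext ω; rw [hσ]; exact Finset.card_filter _ _
    rw [heq]
    exact Finset.measurable_sum _ fun m hm =>
      Measurable.ite (ℱ.mono (Finset.mem_range.1 hm).le _ (hBm m)) measurable_const
        measurable_const
  have hMmeas : ∀ n, StronglyMeasurable[ℱ n] (M n) := by
    intro n
    rw [hM]
    have h1 : Measurable[ℱ n] fun ω => (a ^ σ n ω)⁻¹ :=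
      (measurable_from_top (f := fun i : ℕ => (a ^ i)⁻¹)).comp (hσm n)
    have h2 : Measurable[ℱ n] fun ω => Real.exp (-(t * X n ω)) :=
      (((hXm n).measurable.const_mul t).neg).exp
    exact (h1.mul h2).stronglyMeasurable
  have hMint : ∀ n, Integrable (M n) μ := by
    intro n
    refine ⟨((hMmeas n).mono (ℱ.le n)).aestronglyMeasurable,
      HasFiniteIntegral.of_bounded (C := 1) (ae_of_all _ fun ω => ?_)⟩
    rw [Real.norm_eq_abs, abs_of_pos (hMpos n ω)]
    exact hMle n ω
  -- the key one-step inequality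
  have key : ∀ n, ∫ ω, M n ω ∂μ ≤ ∫ ω, M (n + 1) ω ∂μ := by
    intro n
    set D : Ω → ℝ := X (n + 1) - X n with hD
    set AD : Ω → ℝ := fun ω' => |X (n + 1) ω' - X n ω'| with hAD
    have hDint : Integrable D μ := (hXint (n + 1)).sub (hXint n)
    have hADint : Integrable AD μ := hDint.abs
    have hMb : ∃ C, ∀ ω, ‖M n ω‖ ≤ C :=
      ⟨1, fun ω => by rw [Real.norm_eq_abs, abs_of_pos (hMpos n ω)]; exact hMle n ω⟩
    have hMsm : AEStronglyMeasurable (M n) μ :=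
      ((hMmeas n).mono (ℱ.le n)).aestronglyMeasurable
    have hf1int : Integrable (M n * D) μ := hDint.bdd_mul hMsm (ae_of_all _ hMb.choose_spec)
    have hf2int : Integrable (M n * AD) μ := hADint.bdd_mul hMsm (ae_of_all _ hMb.choose_spec)
    have hpull1 : μ[M n * D|ℱ n] =ᵐ[μ] M n * μ[D|ℱ n] :=
      condExp_mul_of_stronglyMeasurable_left (hMmeas n) hf1int hDint
    have hpull2 : μ[M n * AD|ℱ n] =ᵐ[μ] M n * μ[AD|ℱ n] :=
      condExp_mul_of_stronglyMeasurable_left (hMmeas n) hf2int hADint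
    have hDle : μ[D|ℱ n] ≤ᵐ[μ] 0 := by
      have h1 := condExp_sub (μ := μ) (m := ℱ n) (hXint (n + 1)) (hXint n)
      have h2 : μ[X n|ℱ n] = X n :=
        condExp_of_stronglyMeasurable (ℱ.le n) (hXm n) (hXint n)
      have h3 := hsup.2.1 n (n + 1) (Nat.le_succ n)
      rw [hD]
      filter_upwards [h1, h3] with ω hω h3ω
      rw [hω, h2, Pi.sub_apply, Pi.zero_apply]
      linarith
    set B : Set Ω := {ω | 0 < X n ω} with hBdef
    have hB : MeasurableSet[ℱ n] B := hBm n
    have hB0 : MeasurableSet B := ℱ.le n _ hB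
    -- a.e. pointwise bound on B
    have hptwise : ∀ᵐ ω ∂μ, ω ∈ B →
        a⁻¹ * ((1 - t ^ 2 * δ ^ 2 / 4) * M n ω - t * ((M n * D) ω)
          + (t ^ 2 * δ / 2) * ((M n * AD) ω)) ≤ M (n + 1) ω := by
      filter_upwards [hdiff n] with ω hdω hωB
      have hx : 0 < X n ω := hωB
      have hDc : |D ω| ≤ c := hdω
      have hADω : AD ω = |D ω| := rfl
      have hσs : σ (n + 1) ω = σ n ω + 1 := by
        rw [hσ]
        simp only [Finset.range_add_one, Finset.filter_insert, if_pos hx]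
        rw [Finset.card_insert_of_notMem (fun hmem => by
          simpa using (Finset.mem_filter.1 hmem).1)]
      have hMs : M (n + 1) ω = a⁻¹ * M n ω * Real.exp (-(t * D ω)) := by
        rw [hM]
        simp only [hσs, pow_succ, mul_inv]
        rw [show -(t * X (n + 1) ω) = -(t * X n ω) + -(t * D ω) by
          simp only [hD, Pi.sub_apply]; ring]
        rw [Real.exp_add]; ring
      have habs : |(-(t * D ω))| ≤ 1 := by
        rw [abs_neg, abs_mul, abs_of_pos ht0]
        have : t * |D ω| ≤ t * c := mul_le_mul_of_nonneg_left hDc ht0.le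
        linarith
      have hexp := exp_taylor_lb habs
      rw [abs_neg, abs_mul, abs_of_pos ht0] at hexp
      have h2 : t * |D ω| ≤ 1 / 2 := le_trans
        (mul_le_mul_of_nonneg_left hDc ht0.le) htc
      have h3 : (0:ℝ) ≤ (t * |D ω|) ^ 2 := sq_nonneg _
      have e4 : (t * |D ω|) ^ 3 ≤ (1 / 2) * (t * |D ω|) ^ 2 := by
        calc (t * |D ω|) ^ 3 = (t * |D ω|) * (t * |D ω|) ^ 2 := by ring
          _ ≤ (1 / 2) * (t * |D ω|) ^ 2 := mul_le_mul_of_nonneg_right h2 h3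
      have hpow : (t * |D ω|) ^ 2 = t ^ 2 * (D ω) ^ 2 := by
        rw [mul_pow, sq_abs]
      have hpow2 : (-(t * D ω)) ^ 2 = t ^ 2 * (D ω) ^ 2 := by ring
      have h4 : (0:ℝ) ≤ (|D ω| - δ) ^ 2 := sq_nonneg _
      have h5 : (0:ℝ) ≤ t ^ 2 * (|D ω| - δ) ^ 2 := mul_nonneg (sq_nonneg t) h4
      have hexp2 : (1 - t ^ 2 * δ ^ 2 / 4) - t * D ω + (t ^ 2 * δ / 2) * AD ω ≤
          Real.exp (-(t * D ω)) := by
        rw [hADω]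
        nlinarith [hexp, e4, hpow, hpow2, h5]
      have hM1 : (M n * D) ω = M n ω * D ω := rfl
      have hM2 : (M n * AD) ω = M n ω * AD ω := rfl
      rw [hM1, hM2]
      calc a⁻¹ * ((1 - t ^ 2 * δ ^ 2 / 4) * M n ω - t * (M n ω * D ω)
            + (t ^ 2 * δ / 2) * (M n ω * AD ω))
          = (a⁻¹ * M n ω) * ((1 - t ^ 2 * δ ^ 2 / 4) - t * D ω
            + (t ^ 2 * δ / 2) * AD ω) := by ring
        _ ≤ (a⁻¹ * M n ω) * Real.exp (-(t * D ω)) :=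
            mul_le_mul_of_nonneg_left hexp2
              (mul_nonneg (inv_nonneg.2 ha0.le) (hMpos n ω).le)
        _ = M (n + 1) ω := by rw [hMs]
    -- integral identities via conditional expectation
    have hI1 : ∫ ω in B, (M n * D) ω ∂μ ≤ 0 := by
      have e1 : ∫ ω in B, (M n * D) ω ∂μ = ∫ ω in B, (M n * μ[D|ℱ n]) ω ∂μ := by
        rw [← setIntegral_condExp (ℱ.le n) hf1int hB]
        exact setIntegral_congr_ae hB0 (by filter_upwards [hpull1] with ω hω _; exact hω)
      rw [e1]
      refine integral_nonpos_of_ae (ae_restrict_of_ae ?_)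
      filter_upwards [hDle] with ω hω
      have h1 := (hMpos n ω).le
      simp only [Pi.mul_apply, Pi.zero_apply] at *
      exact mul_nonpos_of_nonneg_of_nonpos h1 hω
    have hI2 : δ * ∫ ω in B, M n ω ∂μ ≤ ∫ ω in B, (M n * AD) ω ∂μ := by
      have e1 : ∫ ω in B, (M n * AD) ω ∂μ = ∫ ω in B, (M n * μ[AD|ℱ n]) ω ∂μ := by
        rw [← setIntegral_condExp (ℱ.le n) hf2int hB]
        exact setIntegral_congr_ae hB0 (by filter_upwards [hpull2] with ω hω _; exact hω)
      rw [e1, ← integral_const_mul]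
      refine setIntegral_mono_on_ae ((hMint n).const_mul δ).integrableOn
        (integrable_condExp.congr hpull2).integrableOn hB0 ?_
      filter_upwards [hLBCAD n] with ω hω hωB
      have h1 : δ ≤ (μ[AD|ℱ n]) ω := hω hωB
      have h2 := (hMpos n ω).le
      simp only [Pi.mul_apply]
      calc δ * M n ω = M n ω * δ := by ring
        _ ≤ M n ω * (μ[AD|ℱ n]) ω := mul_le_mul_of_nonneg_left h1 h2
    have hI0 : 0 ≤ ∫ ω in B, M n ω ∂μ :=
      setIntegral_nonneg hB0 fun ω _ => (hMpos n ω).le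
    -- combine
    have hcombInt : Integrable (fun ω => a⁻¹ * ((1 - t ^ 2 * δ ^ 2 / 4) * M n ω
        - t * ((M n * D) ω) + (t ^ 2 * δ / 2) * ((M n * AD) ω))) μ :=
      ((((hMint n).const_mul _).sub (hf1int.const_mul t)).add
        (hf2int.const_mul _)).const_mul a⁻¹
    have hstepB : ∫ ω in B, M n ω ∂μ ≤ ∫ ω in B, M (n + 1) ω ∂μ := by
      have h5 : ∫ ω in B, a⁻¹ * ((1 - t ^ 2 * δ ^ 2 / 4) * M n ω - t * ((M n * D) ω)
            + (t ^ 2 * δ / 2) * ((M n * AD) ω)) ∂μ ≤ ∫ ω in B, M (n + 1) ω ∂μ := by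
        refine setIntegral_mono_on_ae hcombInt.integrableOn
          (hMint (n + 1)).integrableOn hB0 ?_
        filter_upwards [hptwise] with ω hω hωB
        exact hω hωB
      have h6 : ∫ ω in B, a⁻¹ * ((1 - t ^ 2 * δ ^ 2 / 4) * M n ω - t * ((M n * D) ω)
            + (t ^ 2 * δ / 2) * ((M n * AD) ω)) ∂μ
          = a⁻¹ * ((1 - t ^ 2 * δ ^ 2 / 4) * (∫ ω in B, M n ω ∂μ)
            - t * (∫ ω in B, (M n * D) ω ∂μ)
            + (t ^ 2 * δ / 2) * (∫ ω in B, (M n * AD) ω ∂μ)) := by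
        have int1 : Integrable (fun ω => (1 - t ^ 2 * δ ^ 2 / 4) * M n ω) (μ.restrict B) :=
          ((hMint n).const_mul _).integrableOn
        have int2 : Integrable (fun ω => t * ((M n * D) ω)) (μ.restrict B) :=
          (hf1int.const_mul t).integrableOn
        have int3 : Integrable (fun ω => (t ^ 2 * δ / 2) * ((M n * AD) ω)) (μ.restrict B) :=
          (hf2int.const_mul _).integrableOn
        have int12 : Integrable (fun ω => (1 - t ^ 2 * δ ^ 2 / 4) * M n ω
            - t * ((M n * D) ω)) (μ.restrict B) := int1.sub int2
        rw [integral_const_mul]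
        congr 1
        rw [integral_add int12 int3, integral_sub int1 int2,
          integral_const_mul, integral_const_mul, integral_const_mul]
      rw [h6] at h5
      set I := ∫ ω in B, M n ω ∂μ
      set J1 := ∫ ω in B, (M n * D) ω ∂μ
      set J2 := ∫ ω in B, (M n * AD) ω ∂μ
      have h8 : (1 - t ^ 2 * δ ^ 2 / 4) * I - t * J1 + (t ^ 2 * δ / 2) * J2 ≥ a * I := by
        have hb1 : 0 ≤ -(t * J1) := by nlinarith
        have hb2 : (t ^ 2 * δ / 2) * (δ * I) ≤ (t ^ 2 * δ / 2) * J2 := by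
          have hr : (0:ℝ) ≤ t ^ 2 * δ / 2 := by positivity
          exact mul_le_mul_of_nonneg_left hI2 hr
        rw [haq]; nlinarith
      have h7 : I ≤ a⁻¹ * ((1 - t ^ 2 * δ ^ 2 / 4) * I - t * J1 + (t ^ 2 * δ / 2) * J2) := by
        calc I = a⁻¹ * (a * I) := by field_simp
          _ ≤ a⁻¹ * ((1 - t ^ 2 * δ ^ 2 / 4) * I - t * J1 + (t ^ 2 * δ / 2) * J2) :=
            mul_le_mul_of_nonneg_left h8 (inv_nonneg.2 ha0.le)
      linarith
    have hcompl : ∫ ω in Bᶜ, M (n + 1) ω ∂μ = ∫ ω in Bᶜ, M n ω ∂μ := by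
      refine setIntegral_congr_fun hB0.compl fun ω hω => ?_
      have hz : X n ω = 0 := le_antisymm (not_lt.1 hω) (hnonneg n ω)
      have hz1 : X (n + 1) ω = 0 := habsorb n ω hz
      have hσe : σ (n + 1) ω = σ n ω := by
        have hnot : ¬ (0 < X n ω) := by simp [hz]
        rw [hσ]
        simp only [Finset.range_add_one, Finset.filter_insert]
        rw [if_neg hnot]
      rw [hM]
      simp only [hσe, hz, hz1]
    calc ∫ ω, M n ω ∂μ = ∫ ω in B, M n ω ∂μ + ∫ ω in Bᶜ, M n ω ∂μ :=
          (integral_add_compl hB0 (hMint n)).symm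
      _ ≤ ∫ ω in B, M (n + 1) ω ∂μ + ∫ ω in Bᶜ, M (n + 1) ω ∂μ := by
          rw [hcompl]; linarith
      _ = ∫ ω, M (n + 1) ω ∂μ := integral_add_compl hB0 (hMint (n + 1))
  -- iterate
  have hiter : ∀ n, ∫ ω, M 0 ω ∂μ ≤ ∫ ω, M n ω ∂μ := by
    intro n
    induction n with
    | zero => exact le_rfl
    | succ n ih => exact ih.trans (key n)
  have hM0 : ∫ ω, M 0 ω ∂μ = Real.exp (-(t * x₀)) := by
    have h1 : ∫ ω, M 0 ω ∂μ = ∫ _ω, Real.exp (-(t * x₀)) ∂μ := by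
      refine integral_congr_ae ?_
      filter_upwards [hX0] with ω hω
      rw [hM]
      simp [hσ, hω]
    rw [h1, integral_const, probReal_univ, one_smul]
  -- final bound
  set S : Set Ω := {ω | ∀ n < k, 0 < X n ω} with hSdef
  have hS : MeasurableSet S := by
    have h1 : S = ⋂ n, ⋂ (_ : n < k), {ω | 0 < X n ω} := by
      ext ω; simp [hSdef]
    rw [h1]
    exact MeasurableSet.iInter fun n => MeasurableSet.iInter fun _ => ℱ.le n _ (hBm n)
  set p : ℝ := (μ S).toReal with hp
  have hp1 : p ≤ 1 := by
    rw [hp]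
    exact ENNReal.toReal_mono ENNReal.one_ne_top prob_le_one
  have hup : ∫ ω in S, M k ω ∂μ ≤ (a ^ k)⁻¹ * p := by
    have h1 : ∀ ω ∈ S, M k ω ≤ (a ^ k)⁻¹ := by
      intro ω hω
      have hσk : σ k ω = k := by
        rw [hσ]
        simp only []
        rw [Finset.filter_true_of_mem fun m hm => hω m (Finset.mem_range.1 hm),
          Finset.card_range]
      rw [hM]
      simp only [hσk]
      have h2 : Real.exp (-(t * X k ω)) ≤ 1 :=
        Real.exp_le_one_iff.2 (neg_nonpos.2 (mul_nonneg ht0.le (hnonneg k ω)))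
      calc (a ^ k)⁻¹ * Real.exp (-(t * X k ω)) ≤ (a ^ k)⁻¹ * 1 :=
            mul_le_mul_of_nonneg_left h2 (inv_nonneg.2 (pow_pos ha0 k).le)
        _ = (a ^ k)⁻¹ := mul_one _
    calc ∫ ω in S, M k ω ∂μ ≤ ∫ _ω in S, (a ^ k)⁻¹ ∂μ :=
          setIntegral_mono_on (hMint k).integrableOn (integrableOn_const
            (measure_lt_top μ S).ne) hS h1
      _ = (a ^ k)⁻¹ * p := by rw [setIntegral_const, smul_eq_mul, hp, measureReal_def]; ring
  have hupc : ∫ ω in Sᶜ, M k ω ∂μ ≤ 1 - p := by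
    have h1 : ∀ ω ∈ Sᶜ, M k ω ≤ 1 := fun ω _ => hMle k ω
    have h2 : (μ Sᶜ).toReal = 1 - p := by
      rw [measure_compl hS (measure_ne_top μ S), measure_univ,
        ENNReal.toReal_sub_of_le prob_le_one ENNReal.one_ne_top, ENNReal.toReal_one, hp]
    calc ∫ ω in Sᶜ, M k ω ∂μ ≤ ∫ _ω in Sᶜ, (1:ℝ) ∂μ :=
          setIntegral_mono_on (hMint k).integrableOn (integrableOn_const
            (measure_lt_top μ Sᶜ).ne) hS.compl h1
      _ = 1 - p := by rw [setIntegral_const, smul_eq_mul, measureReal_def, h2, mul_one]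
  have hmaster : Real.exp (-(t * x₀)) ≤ (a ^ k)⁻¹ * p + (1 - p) := by
    calc Real.exp (-(t * x₀)) = ∫ ω, M 0 ω ∂μ := hM0.symm
      _ ≤ ∫ ω, M k ω ∂μ := hiter k
      _ = ∫ ω in S, M k ω ∂μ + ∫ ω in Sᶜ, M k ω ∂μ := (integral_add_compl hS (hMint k)).symm
      _ ≤ (a ^ k)⁻¹ * p + (1 - p) := add_le_add hup hupc
  have hint0 : ∫ ω, X 0 ω ∂μ = x₀ := by
    rw [integral_congr_ae hX0, integral_const, probReal_univ, one_smul]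
  have hDen : 0 < 1 - (a ^ k)⁻¹ := by
    have h1 : 1 < a ^ k := one_lt_pow₀ ha1 (by omega)
    have h2 : (a ^ k)⁻¹ < 1 := inv_lt_one_of_one_lt₀ h1
    linarith
  have hexpeq : -(∫ ω, X 0 ω ∂μ) / Real.sqrt k = -(t * x₀) := by
    rw [hint0, ht, div_eq_mul_inv]; ring
  rw [hexpeq, le_div_iff₀ hDen]
  nlinarith [hmaster]
end

section
/- Let {X_n}_{n∈ℕ₀} be a difference-bounded supermartingale (with a.s. difference bound c ∈ (0,∞)) adapted to a filtration {F_n}_{n∈ℕ₀} satisfying the LBCAD condition with parameter δ ∈ (0,∞). Let t ∈ (0,∞) satisfy e^{c·t} − (1 + c·t + (c·t)²/2) ≤ (δ²/4)·t². Then for every n it holds a.s. that X_n > 0 implies E[e^{−t·(X_{n+1} − X_n)} | F_n] ≥ 1 + (δ²/4)·t². -/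
open MeasureTheory ProbabilityTheory

-- cosh inequality
lemma cosh_aux (s : ℝ) (hs : 0 ≤ s) : 2 + s ^ 2 ≤ Real.exp s + Real.exp (-s) := by
  -- f' monotone
  have hg : Monotone (fun u : ℝ => Real.exp u - Real.exp (-u) - 2 * u) := by
    apply monotone_of_deriv_nonneg
    · fun_prop
    · intro x
      have hd : HasDerivAt (fun u : ℝ => Real.exp u - Real.exp (-u) - 2 * u)
          (Real.exp x - (Real.exp (-x) * (-1)) - 2) x := by
        have h1 := Real.hasDerivAt_exp x
        have h2 : HasDerivAt (fun u : ℝ => Real.exp (-u)) (Real.exp (-x) * (-1)) x :=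
          (Real.hasDerivAt_exp (-x)).comp x (hasDerivAt_neg x)
        have h3 : HasDerivAt (fun u : ℝ => 2 * u) 2 x := by
          simpa using (hasDerivAt_id x).const_mul (2 : ℝ)
        exact (h1.sub h2).sub h3
      rw [hd.deriv]
      have he : Real.exp x * Real.exp (-x) = 1 := by
        rw [← Real.exp_add]; simp
      nlinarith [sq_nonneg (Real.exp x - 1), Real.exp_pos x, Real.exp_pos (-x)]
  have hf : MonotoneOn (fun u : ℝ => Real.exp u + Real.exp (-u) - 2 - u ^ 2) (Set.Ici 0) := by
    apply monotoneOn_of_deriv_nonneg (convex_Ici 0)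
    · fun_prop
    · intro x _
      apply DifferentiableAt.differentiableWithinAt
      fun_prop
    · intro x hx
      rw [interior_Ici] at hx
      have hd : HasDerivAt (fun u : ℝ => Real.exp u + Real.exp (-u) - 2 - u ^ 2)
          (Real.exp x + Real.exp (-x) * (-1) - 0 - 2 * x) x := by
        have h1 := Real.hasDerivAt_exp x
        have h2 : HasDerivAt (fun u : ℝ => Real.exp (-u)) (Real.exp (-x) * (-1)) x :=
          (Real.hasDerivAt_exp (-x)).comp x (hasDerivAt_neg x)
        have h3 : HasDerivAt (fun u : ℝ => u ^ 2) (2 * x) x := by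
          simpa using hasDerivAt_pow 2 x
        exact ((h1.add h2).sub (hasDerivAt_const x 2)).sub h3
      rw [hd.deriv]
      have := hg (le_of_lt hx : (0:ℝ) ≤ x)
      simp only [Real.exp_zero, neg_zero, mul_zero, sub_zero] at this
      linarith
  have := hf (Set.self_mem_Ici) (Set.mem_Ici.2 hs) hs
  simp only [Real.exp_zero, neg_zero] at this
  linarith

-- h monotone
lemma h_mono : Monotone (fun u : ℝ => Real.exp u - u - u ^ 2 / 2) := by
  apply monotone_of_deriv_nonneg
  · fun_prop
  · intro x
    have hd : HasDerivAt (fun u : ℝ => Real.exp u - u - u ^ 2 / 2)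
        (Real.exp x - 1 - 2 * x / 2) x := by
      have h1 := Real.hasDerivAt_exp x
      have h2 := hasDerivAt_id x
      have h3 : HasDerivAt (fun u : ℝ => u ^ 2 / 2) (2 * x / 2) x :=
        (hasDerivAt_pow 2 x).div_const 2 |>.congr_deriv (by ring)
      exact (h1.sub h2).sub h3
    rw [hd.deriv]
    have := Real.add_one_le_exp x
    nlinarith

lemma pointwise_ineq (t c y : ℝ) (ht : 0 < t) (hy : |y| ≤ c) :
    1 - t * y + t ^ 2 / 2 * y ^ 2 - (Real.exp (c * t) - (1 + c * t + (c * t) ^ 2 / 2))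
      ≤ Real.exp (-t * y) := by
  have hyc := abs_le.1 hy
  have hle : -(c * t) ≤ -t * y := by nlinarith
  have hm := h_mono hle
  simp only at hm
  have hcosh := cosh_aux (c * t) (by nlinarith [abs_nonneg y])
  nlinarith [hm, hcosh, sq_nonneg (t * y)]

/-- **Lower bound on the conditional exponential moment.**
If `{X_n}` is a difference-bounded supermartingale (bound `c`) with the LBCAD
condition (parameter `δ`) and `t > 0` satisfies
`e^{c·t} − (1 + c·t + (c·t)²/2) ≤ (δ²/4)·t²`, then a.s.
`X_n > 0` implies `E[e^{−t·(X_{n+1} − X_n)} | F_n] ≥ 1 + (δ²/4)·t²`. -/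
theorem conditional_exponential_moment_lower_bound
    {Ω : Type*} {m0 : MeasurableSpace Ω} {μ : Measure Ω} [IsProbabilityMeasure μ]
    (ℱ : Filtration ℕ m0) (X : ℕ → Ω → ℝ)
    (hsup : Supermartingale X ℱ μ)
    (c : ℝ) (hc : 0 < c)
    (hdiff : ∀ n : ℕ, ∀ᵐ ω ∂μ, |X (n + 1) ω - X n ω| ≤ c)
    (δ : ℝ) (hδ : 0 < δ)
    (hLBCAD : ∀ n : ℕ, ∀ᵐ ω ∂μ,
      0 < X n ω → δ ≤ (μ[fun ω' => |X (n + 1) ω' - X n ω'| | ℱ n]) ω)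
    (t : ℝ) (ht : 0 < t)
    (ht' : Real.exp (c * t) - (1 + c * t + (c * t) ^ 2 / 2) ≤ δ ^ 2 / 4 * t ^ 2) :
    ∀ n : ℕ, ∀ᵐ ω ∂μ, 0 < X n ω →
      1 + δ ^ 2 / 4 * t ^ 2 ≤
        (μ[fun ω' => Real.exp (-t * (X (n + 1) ω' - X n ω')) | ℱ n]) ω := by
  intro n
  set K : ℝ := Real.exp (c * t) - (1 + c * t + (c * t) ^ 2 / 2) with hK
  set Y : Ω → ℝ := fun ω => X (n + 1) ω - X n ω with hYdef
  have hYint : Integrable Y μ := (hsup.integrable (n + 1)).sub (hsup.integrable n)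
  have hYabs : Integrable (fun ω => |Y ω|) μ := hYint.abs
  have hY2 : Integrable (fun ω => Y ω ^ 2) μ := by
    refine Integrable.mono' (integrable_const (c ^ 2)) ?_ ?_
    · exact (hYint.1.mul hYint.1).congr (Filter.Eventually.of_forall (fun ω => by simp [pow_two]))
    · filter_upwards [hdiff n] with ω h
      rw [Real.norm_eq_abs, abs_pow]
      exact pow_le_pow_left₀ (abs_nonneg _) h 2
  have hexp : Integrable (fun ω => Real.exp (-t * Y ω)) μ := by
    refine Integrable.mono' (integrable_const (Real.exp (t * c))) ?_ ?_
    · exact (Real.continuous_exp.comp_aestronglyMeasurable (hYint.1.const_mul (-t)))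
    · filter_upwards [hdiff n] with ω h
      rw [Real.norm_eq_abs, abs_of_pos (Real.exp_pos _)]
      apply Real.exp_le_exp.2
      have h2 : -c ≤ Y ω := (abs_le.1 h).1
      nlinarith [mul_le_mul_of_nonneg_left h2 ht.le]
  -- lower bound function
  have hg_int : Integrable (fun ω => (1 - K) + (-t) * Y ω + t ^ 2 / 2 * Y ω ^ 2) μ :=
    ((integrable_const (1 - K)).add (hYint.const_mul (-t))).add (hY2.const_mul (t ^ 2 / 2))
  have hpt : (fun ω => (1 - K) + (-t) * Y ω + t ^ 2 / 2 * Y ω ^ 2)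
      ≤ᵐ[μ] fun ω => Real.exp (-t * Y ω) := by
    filter_upwards [hdiff n] with ω h
    have := pointwise_ineq t c (Y ω) ht h
    rw [← hK] at this
    linarith
  have hmono := condExp_mono (m := ℱ n) hg_int hexp hpt
  -- compute condexp of the lower bound function
  have hsplit : μ[fun ω => (1 - K) + (-t) * Y ω + t ^ 2 / 2 * Y ω ^ 2 | ℱ n]
      =ᵐ[μ] fun ω => (1 - K) + (-t) * (μ[Y | ℱ n]) ω
        + t ^ 2 / 2 * (μ[fun ω' => Y ω' ^ 2 | ℱ n]) ω := by
    have h1 := condExp_add (m := ℱ n) ((integrable_const (1 - K)).add (hYint.const_mul (-t)))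
      (hY2.const_mul (t ^ 2 / 2))
    have h2 := condExp_add (m := ℱ n) (integrable_const (1 - K)) (hYint.const_mul (-t))
    have h3 := condExp_smul (μ := μ) (m := ℱ n) (-t) Y
    have h4 := condExp_smul (μ := μ) (m := ℱ n) (t ^ 2 / 2) (fun ω => Y ω ^ 2)
    have h5 := condExp_const (μ := μ) (ℱ.le n) (1 - K)
    filter_upwards [h1, h2, h3, h4] with ω e1 e2 e3 e4
    simp only [Pi.add_apply] at e1 e2
    have e3' : (μ[(-t) • Y | ℱ n]) ω = -t * (μ[Y | ℱ n]) ω := by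
      rw [e3]; simp
    have e4' : (μ[(t ^ 2 / 2) • (fun ω' => Y ω' ^ 2) | ℱ n]) ω
        = t ^ 2 / 2 * (μ[fun ω' => Y ω' ^ 2 | ℱ n]) ω := by
      rw [e4]; simp
    calc (μ[fun ω => (1 - K) + (-t) * Y ω + t ^ 2 / 2 * Y ω ^ 2 | ℱ n]) ω
        = (μ[(fun ω => (1 - K) + (-t) * Y ω) + fun ω => (t ^ 2 / 2) * Y ω ^ 2 | ℱ n]) ω := rfl
      _ = (μ[fun ω => (1 - K) + (-t) * Y ω | ℱ n]) ω
            + (μ[fun ω => (t ^ 2 / 2) * Y ω ^ 2 | ℱ n]) ω := e1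
      _ = (μ[(fun _ => (1 - K)) + fun ω => (-t) * Y ω | ℱ n]) ω
            + (μ[(t ^ 2 / 2) • (fun ω' => Y ω' ^ 2) | ℱ n]) ω := rfl
      _ = ((μ[fun _ => (1 - K) | ℱ n]) ω + (μ[fun ω => (-t) * Y ω | ℱ n]) ω)
            + (t ^ 2 / 2 * (μ[fun ω' => Y ω' ^ 2 | ℱ n]) ω) := by rw [e2, e4']
      _ = ((1 - K) + -t * (μ[Y | ℱ n]) ω)
            + t ^ 2 / 2 * (μ[fun ω' => Y ω' ^ 2 | ℱ n]) ω := by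
          rw [h5, show (μ[fun ω => (-t) * Y ω | ℱ n]) = (μ[(-t) • Y | ℱ n]) from rfl, e3']
  -- supermartingale: μ[Y|ℱ n] ≤ 0 a.e.
  have hYcond : μ[Y | ℱ n] ≤ᵐ[μ] 0 := by
    have hs := condExp_sub (m := ℱ n) (hsup.integrable (n + 1)) (hsup.integrable n)
    have hXn : μ[X n | ℱ n] = X n :=
      condExp_of_stronglyMeasurable (ℱ.le n) (hsup.stronglyAdapted n) (hsup.integrable n)
    have hle := hsup.2.1 n (n + 1) (Nat.le_succ n)
    filter_upwards [hs, hle] with ω e1 e2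
    have : (μ[Y | ℱ n]) ω = (μ[X (n + 1) | ℱ n]) ω - X n ω := by
      rw [show Y = X (n + 1) - X n from rfl] at *
      rw [e1, Pi.sub_apply, hXn]
    rw [Pi.zero_apply, this]
    linarith
  -- second moment lower bound
  have hsq : μ[fun ω => 2 * δ * |Y ω| - δ ^ 2 | ℱ n] ≤ᵐ[μ] μ[fun ω => Y ω ^ 2 | ℱ n] := by
    apply condExp_mono ((hYabs.const_mul (2 * δ)).sub (integrable_const (δ ^ 2))) hY2
    filter_upwards with ω
    simp only [Pi.sub_apply]
    nlinarith [sq_nonneg (|Y ω| - δ), sq_abs (Y ω)]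
  have hsq2 : μ[fun ω => 2 * δ * |Y ω| - δ ^ 2 | ℱ n]
      =ᵐ[μ] fun ω => 2 * δ * (μ[fun ω' => |Y ω'| | ℱ n]) ω - δ ^ 2 := by
    have h1 := condExp_sub (m := ℱ n) (hYabs.const_mul (2 * δ)) (integrable_const (δ ^ 2))
    have h2 := condExp_smul (μ := μ) (m := ℱ n) (2 * δ) (fun ω => |Y ω|)
    have h3 := condExp_const (μ := μ) (ℱ.le n) (δ ^ 2)
    filter_upwards [h1, h2] with ω e1 e2
    calc (μ[fun ω => 2 * δ * |Y ω| - δ ^ 2 | ℱ n]) ω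
        = (μ[(2 * δ) • (fun ω' => |Y ω'|) - fun _ => δ ^ 2 | ℱ n]) ω := rfl
      _ = (μ[(2 * δ) • (fun ω' => |Y ω'|) | ℱ n]) ω - (μ[fun _ => δ ^ 2 | ℱ n]) ω := e1
      _ = 2 * δ * (μ[fun ω' => |Y ω'| | ℱ n]) ω - δ ^ 2 := by rw [e2, h3]; simp
  -- combine
  filter_upwards [hmono, hsplit, hYcond, hsq, hsq2, hLBCAD n] with ω e1 e2 e3 e4 e5 e6 hXpos
  have hδle := e6 hXpos
  rw [e2] at e1
  rw [e5] at e4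
  have hYc : (μ[Y | ℱ n]) ω ≤ 0 := e3
  have hE : (μ[fun ω' => Real.exp (-t * Y ω') | ℱ n]) ω
      = (μ[fun ω' => Real.exp (-t * (X (n + 1) ω' - X n ω')) | ℱ n]) ω := rfl
  rw [hE] at e1
  set E := (μ[fun ω' => Real.exp (-t * (X (n + 1) ω' - X n ω')) | ℱ n]) ω
  set a := (μ[Y | ℱ n]) ω
  set b := (μ[fun ω' => Y ω' ^ 2 | ℱ n]) ω
  set m := (μ[fun ω' => |X (n + 1) ω' - X n ω'| | ℱ n]) ω
  -- e1 : 1 - K + -t*a + t^2/2*b ≤ E ; e4 : 2δm - δ² ≤ b ; hδle : δ ≤ m ; hYc : a ≤ 0 ; ht' : K ≤ δ²/4 t²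
  have h1 : t ^ 2 / 2 * (2 * δ * m - δ ^ 2) ≤ t ^ 2 / 2 * b :=
    mul_le_mul_of_nonneg_left e4 (by positivity)
  have h2 : 0 ≤ -t * a := by nlinarith [mul_nonneg ht.le (neg_nonneg.2 hYc)]
  nlinarith [mul_le_mul_of_nonneg_left hδle (le_of_lt hδ), sq_nonneg t]
end

section
/- Let Γ = {X_n}_{n∈ℕ₀} be a difference-bounded supermartingale (with a.s. difference bound c ∈ (0,∞)) adapted to a filtration {F_n}_{n∈ℕ₀} such that X_0 is a.s. constant with X_0 > 0, for all n and ω one has X_n(ω) ≥ 0 and X_n(ω) = 0 implies X_{n+1}(ω) = 0, and Γ satisfies the LBCAD condition with parameter δ ∈ (0,∞). Then for every t ∈ (0,∞) with e^{c·t} − (1 + c·t + (c·t)²/2) ≤ (δ²/4)·t² and every k ∈ ℕ, e^{−t·E(X_0)} ≤ 1 − (1 − (1 + (δ²/4)·t²)^{−k}) · P(Z_Γ ≥ k). -/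
open MeasureTheory ProbabilityTheory

private lemma emt_hasDerivAt_h (y : ℝ) :
    HasDerivAt (fun y : ℝ => Real.exp y - 1 - y - y ^ 2 / 2) (Real.exp y - 1 - y) y := by
  have h1 := ((Real.hasDerivAt_exp y).sub_const 1).sub (hasDerivAt_id y)
  have h2 : HasDerivAt (fun y : ℝ => y ^ 2 / 2) y y := by
    simpa using (hasDerivAt_pow 2 y).div_const 2
  exact h1.sub h2

private lemma emt_mono_h : Monotone (fun y : ℝ => Real.exp y - 1 - y - y ^ 2 / 2) := by
  apply monotone_of_deriv_nonneg
  · exact fun y => (emt_hasDerivAt_h y).differentiableAt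
  · intro y
    rw [(emt_hasDerivAt_h y).deriv]
    linarith [Real.add_one_le_exp y]

private lemma emt_h_nonneg {y : ℝ} (hy : 0 ≤ y) : 0 ≤ Real.exp y - 1 - y - y ^ 2 / 2 := by
  have := emt_mono_h hy
  simpa using this

private lemma emt_g_deriv (y : ℝ) :
    HasDerivAt (fun x : ℝ => Real.exp x + Real.exp (-x) - 2 - x ^ 2)
      (Real.exp y - Real.exp (-y) - 2 * y) y := by
  have h1 := (Real.hasDerivAt_exp y).add
    ((Real.hasDerivAt_exp (-y)).comp y (hasDerivAt_neg y))
  have h2 : HasDerivAt (fun x : ℝ => x ^ 2) (2 * y) y := by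
    simpa using hasDerivAt_pow 2 y
  have := (h1.sub_const 2).sub h2
  exact this.congr_deriv (by ring)

private lemma emt_cosh_aux {x : ℝ} (hx : 0 ≤ x) :
    2 + x ^ 2 ≤ Real.exp x + Real.exp (-x) := by
  have hmono : MonotoneOn (fun x : ℝ => Real.exp x + Real.exp (-x) - 2 - x ^ 2) (Set.Ici 0) := by
    apply monotoneOn_of_deriv_nonneg (convex_Ici 0)
    · fun_prop
    · exact fun y _ => (emt_g_deriv y).differentiableAt.differentiableWithinAt
    · intro y hy
      have hy' : 0 ≤ y := le_of_lt (by simpa using hy)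
      rw [(emt_g_deriv y).deriv]
      have := emt_mono_h (a := -y) (b := y) (by linarith)
      simp only [neg_sq, sub_neg_eq_add] at this
      linarith
  have := hmono Set.self_mem_Ici (Set.mem_Ici.2 hx) hx
  simp only [Real.exp_zero, neg_zero] at this
  nlinarith [this]

private lemma emt_key_real {x b : ℝ} (hxb : |x| ≤ b) :
    1 + x + x ^ 2 / 2 - (Real.exp b - (1 + b + b ^ 2 / 2)) ≤ Real.exp x := by
  have hb : 0 ≤ b := le_trans (abs_nonneg x) hxb
  have hb' := emt_h_nonneg hb
  rcases le_or_gt 0 x with hx | hx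
  · have := emt_h_nonneg hx
    linarith
  · have hxb' : -x ≤ b := by rwa [abs_of_neg hx] at hxb
    have hcosh := emt_cosh_aux (x := -x) (by linarith)
    rw [neg_neg] at hcosh
    have hmono := emt_mono_h hxb'
    simp only [neg_sq] at hmono
    nlinarith [hmono, hcosh]


section Main
variable {Ω : Type*} {m0 : MeasurableSpace Ω} {μ : Measure Ω} [IsProbabilityMeasure μ]

private lemma emt_key
    (ℱ : Filtration ℕ m0) (X : ℕ → Ω → ℝ)
    (hsup : Supermartingale X ℱ μ)
    (c : ℝ) (hc : 0 < c)
    (hdiff : ∀ n : ℕ, ∀ᵐ ω ∂μ, |X (n + 1) ω - X n ω| ≤ c)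
    (x₀ : ℝ) (hx₀pos : 0 < x₀) (hX0 : ∀ᵐ ω ∂μ, X 0 ω = x₀)
    (hnonneg : ∀ n ω, 0 ≤ X n ω)
    (habsorb : ∀ n ω, X n ω = 0 → X (n + 1) ω = 0)
    (δ : ℝ) (hδ : 0 < δ)
    (hLBCAD : ∀ n : ℕ, ∀ᵐ ω ∂μ,
      0 < X n ω → δ ≤ (μ[fun ω' => |X (n + 1) ω' - X n ω'| | ℱ n]) ω)
    (t : ℝ) (ht : 0 < t)
    (hεle : Real.exp (c * t) - (1 + c * t + (c * t) ^ 2 / 2) ≤ δ ^ 2 / 4 * t ^ 2) :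
    ∀ n : ℕ, ∀ᵐ ω ∂μ, 0 < X n ω →
      (1 + δ ^ 2 / 4 * t ^ 2) * Real.exp (-t * X n ω) ≤
        (μ[fun ω' => Real.exp (-t * X (n + 1) ω')|ℱ n]) ω := by
  intro n
  set ε := Real.exp (c * t) - (1 + c * t + (c * t) ^ 2 / 2) with hεdef
  clear_value ε
  set E : ℕ → Ω → ℝ := fun m ω => Real.exp (-t * X m ω) with hEdef
  set D : Ω → ℝ := fun ω => X (n + 1) ω - X n ω with hDdef
  show ∀ᵐ ω ∂μ, 0 < X n ω → (1 + δ ^ 2 / 4 * t ^ 2) * E n ω ≤ (μ[E (n + 1)|ℱ n]) ω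
  have hXm : ∀ m, Measurable (X m) := fun m => ((hsup.stronglyAdapted m).mono (ℱ.le m)).measurable
  have hXmF : ∀ m, Measurable[ℱ m] (X m) := fun m => (hsup.stronglyAdapted m).measurable
  have hEpos : ∀ m ω, 0 < E m ω := fun m ω => Real.exp_pos _
  have hEle1 : ∀ m ω, E m ω ≤ 1 := by
    intro m ω
    have h1 : -t * X m ω ≤ 0 := by nlinarith [hnonneg m ω]
    calc E m ω ≤ Real.exp 0 := Real.exp_le_exp.2 h1
    _ = 1 := Real.exp_zero
  have hEmeas : ∀ m, Measurable (E m) :=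
    fun m => Real.measurable_exp.comp ((hXm m).const_mul (-t))
  have hEmeasF : ∀ m, StronglyMeasurable[ℱ m] (E m) :=
    fun m => (Real.measurable_exp.comp ((hXmF m).const_mul (-t))).stronglyMeasurable
  have hEint : ∀ m, Integrable (E m) μ := by
    intro m
    refine Integrable.mono' (integrable_const 1) (hEmeas m).aestronglyMeasurable
      (ae_of_all _ fun ω => ?_)
    rw [Real.norm_eq_abs, abs_of_pos (hEpos m ω)]
    exact hEle1 m ω
  have hDint : Integrable D μ := (hsup.integrable (n + 1)).sub (hsup.integrable n)
  have hDm : Measurable D := (hXm (n + 1)).sub (hXm n)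
  have hEDint : Integrable (E n * D) μ := by
    refine Integrable.mono' (integrable_const c)
      ((hEmeas n).mul hDm).aestronglyMeasurable ?_
    filter_upwards [hdiff n] with ω hω
    rw [Pi.mul_apply, Real.norm_eq_abs, abs_mul, abs_of_pos (hEpos n ω)]
    calc E n ω * |D ω| ≤ 1 * c := by
          exact mul_le_mul (hEle1 n ω) hω (abs_nonneg _) zero_le_one
    _ = c := one_mul c
  have hDabsint : Integrable (fun ω => |D ω|) μ := hDint.abs
  have hEDabsint : Integrable (E n * fun ω => |D ω|) μ := by
    refine Integrable.mono' (integrable_const c)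
      ((hEmeas n).mul hDm.abs).aestronglyMeasurable ?_
    filter_upwards [hdiff n] with ω hω
    rw [Pi.mul_apply, Real.norm_eq_abs, abs_mul, abs_of_pos (hEpos n ω), abs_abs]
    calc E n ω * |D ω| ≤ 1 * c := by
          exact mul_le_mul (hEle1 n ω) hω (abs_nonneg _) zero_le_one
    _ = c := one_mul c
  -- supermartingale: conditional expectation of D is nonpositive
  have hDcond : μ[D|ℱ n] ≤ᵐ[μ] 0 := by
    have h1 := hsup.2.1 n (n + 1) (Nat.le_succ n)
    have hsub := condExp_sub (μ := μ) (m := ℱ n) (hsup.integrable (n + 1)) (hsup.integrable n)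
    have hXn : μ[X n|ℱ n] = X n :=
      condExp_of_stronglyMeasurable (ℱ.le n) (hsup.stronglyAdapted n) (hsup.integrable n)
    rw [hXn] at hsub
    have hDeq : D = X (n + 1) - X n := rfl
    rw [hDeq]
    filter_upwards [h1, hsub] with ω h1ω h2ω
    simp only [Pi.sub_apply, Pi.zero_apply] at *
    rw [h2ω]
    linarith
  have habs : (fun ω' => |X (n + 1) ω' - X n ω'|) = fun ω => |D ω| := rfl
  clear_value E D
  -- the pointwise lower bound function G
  set G : Ω → ℝ := (1 - δ ^ 2 * t ^ 2 / 2 - ε) • E n + ((-t) • (E n * D) +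
      (δ * t ^ 2) • (E n * fun ω => |D ω|)) with hGdef
  have hGint : Integrable G μ :=
    ((hEint n).smul _).add ((hEDint.smul _).add (hEDabsint.smul _))
  have hGle : G ≤ᵐ[μ] E (n + 1) := by
    filter_upwards [hdiff n] with ω hω
    have hmul : E (n + 1) ω = E n ω * Real.exp (-t * D ω) := by
      rw [hEdef, hDdef]
      simp only
      rw [← Real.exp_add]
      ring_nf
    have hDc : |D ω| ≤ c := by rw [hDdef]; exact hω
    have hbound : |(-t) * D ω| ≤ c * t := by
      rw [abs_mul, abs_neg, abs_of_pos ht]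
      calc t * |D ω| ≤ t * c := by nlinarith
      _ = c * t := mul_comm t c
    have hkr := emt_key_real hbound
    have hsq : 2 * δ * |D ω| - δ ^ 2 ≤ D ω ^ 2 := by
      nlinarith [sq_nonneg (|D ω| - δ), sq_abs (D ω)]
    rw [← hεdef] at hkr
    have h2 : 1 + (-t) * D ω + t ^ 2 * (2 * δ * |D ω| - δ ^ 2) / 2 - ε ≤
        Real.exp ((-t) * D ω) := by
      have h3 : t ^ 2 * (2 * δ * |D ω| - δ ^ 2) ≤ t ^ 2 * D ω ^ 2 := by
        nlinarith [hsq, sq_nonneg t]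
      have h4 : ((-t) * D ω) ^ 2 / 2 = t ^ 2 * D ω ^ 2 / 2 := by ring
      calc 1 + (-t) * D ω + t ^ 2 * (2 * δ * |D ω| - δ ^ 2) / 2 - ε
          ≤ 1 + (-t) * D ω + ((-t) * D ω) ^ 2 / 2 - ε := by rw [h4]; linarith
        _ ≤ Real.exp ((-t) * D ω) := hkr
    have hGω : G ω = E n ω * (1 + (-t) * D ω + t ^ 2 * (2 * δ * |D ω| - δ ^ 2) / 2 - ε) := by
      simp only [hGdef, Pi.add_apply, Pi.smul_apply, Pi.mul_apply, smul_eq_mul]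
      ring
    rw [hGω, hmul]
    have := mul_le_mul_of_nonneg_left h2 (hEpos n ω).le
    calc E n ω * (1 + (-t) * D ω + t ^ 2 * (2 * δ * |D ω| - δ ^ 2) / 2 - ε)
        ≤ E n ω * Real.exp ((-t) * D ω) := this
    _ = E n ω * Real.exp (-t * D ω) := by ring_nf
  have hle := condExp_mono (m := ℱ n) hGint (hEint (n + 1)) hGle
  -- compute the conditional expectation of G
  have hpull1 : μ[E n * D|ℱ n] =ᵐ[μ] E n * μ[D|ℱ n] :=
    condExp_mul_of_stronglyMeasurable_left (hEmeasF n) hEDint hDint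
  have hpull2 : μ[(E n * fun ω => |D ω|)|ℱ n] =ᵐ[μ] E n * μ[(fun ω => |D ω|)|ℱ n] :=
    condExp_mul_of_stronglyMeasurable_left (hEmeasF n) hEDabsint hDabsint
  have hEcond : μ[E n|ℱ n] = E n :=
    condExp_of_stronglyMeasurable (ℱ.le n) (hEmeasF n) (hEint n)
  have heq : μ[G|ℱ n] =ᵐ[μ]
      (1 - δ ^ 2 * t ^ 2 / 2 - ε) • E n + ((-t) • (E n * μ[D|ℱ n]) +
        (δ * t ^ 2) • (E n * μ[(fun ω => |D ω|)|ℱ n])) := by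
    refine (condExp_add ((hEint n).smul _) ((hEDint.smul _).add (hEDabsint.smul _)) (ℱ n)).trans ?_
    refine Filter.EventuallyEq.add ?_ ?_
    · refine (condExp_smul _ _ (ℱ n)).trans ?_
      rw [hEcond]
    · refine (condExp_add (hEDint.smul _) (hEDabsint.smul _) (ℱ n)).trans ?_
      refine Filter.EventuallyEq.add ?_ ?_
      · exact (condExp_smul _ _ (ℱ n)).trans (hpull1.mono fun ω h => by simp [h])
      · exact (condExp_smul _ _ (ℱ n)).trans (hpull2.mono fun ω h => by simp [h])
  -- combine
  filter_upwards [hle, heq, hDcond, hLBCAD n] with ω hleω heqω hDω hLω hpos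
  have hL : δ ≤ (μ[(fun ω => |D ω|)|ℱ n]) ω := by
    rw [← habs]; exact hLω hpos
  simp only [Pi.add_apply, Pi.smul_apply, Pi.mul_apply, smul_eq_mul, Pi.zero_apply] at heqω hDω
  rw [heqω] at hleω
  have key1 : 0 ≤ (-t) * (E n ω * (μ[D|ℱ n]) ω) := by
    nlinarith [hDω, mul_pos ht (hEpos n ω)]
  have key2 : δ * t ^ 2 * (E n ω * δ) ≤ δ * t ^ 2 * (E n ω * (μ[(fun ω => |D ω|)|ℱ n]) ω) := by
    refine mul_le_mul_of_nonneg_left ?_ (by positivity)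
    exact mul_le_mul_of_nonneg_left hL (hEpos n ω).le
  have key3 : 0 ≤ E n ω * (δ ^ 2 / 4 * t ^ 2 - ε) := mul_nonneg (hEpos n ω).le (by linarith)
  nlinarith [hleω, key1, key2, key3]
end Main

/-- **Key inequality relating the exponential moment and the non-termination tail.**
`e^{−t·E(X₀)} ≤ 1 − (1 − (1 + (δ²/4)·t²)^{−k}) · P(Z_Γ ≥ k)`, where
`P(Z_Γ ≥ k) = μ {ω | ∀ n < k, 0 < X n ω}`. -/
theorem exponential_moment_tail_inequality
    {Ω : Type*} {m0 : MeasurableSpace Ω} {μ : Measure Ω} [IsProbabilityMeasure μ]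
    (ℱ : Filtration ℕ m0) (X : ℕ → Ω → ℝ)
    (hsup : Supermartingale X ℱ μ)
    (c : ℝ) (hc : 0 < c)
    (hdiff : ∀ n : ℕ, ∀ᵐ ω ∂μ, |X (n + 1) ω - X n ω| ≤ c)
    (x₀ : ℝ) (hx₀pos : 0 < x₀) (hX0 : ∀ᵐ ω ∂μ, X 0 ω = x₀)
    (hnonneg : ∀ n ω, 0 ≤ X n ω)
    (habsorb : ∀ n ω, X n ω = 0 → X (n + 1) ω = 0)
    (δ : ℝ) (hδ : 0 < δ)
    (hLBCAD : ∀ n : ℕ, ∀ᵐ ω ∂μ,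
      0 < X n ω → δ ≤ (μ[fun ω' => |X (n + 1) ω' - X n ω'| | ℱ n]) ω) :
    ∀ t : ℝ, 0 < t →
      Real.exp (c * t) - (1 + c * t + (c * t) ^ 2 / 2) ≤ δ ^ 2 / 4 * t ^ 2 →
      ∀ k : ℕ,
        Real.exp (-t * ∫ ω, X 0 ω ∂μ) ≤
          1 - (1 - ((1 + δ ^ 2 / 4 * t ^ 2) ^ k)⁻¹) *
            (μ {ω | ∀ n < k, 0 < X n ω}).toReal := by
  intro t ht hεle k
  have key := emt_key ℱ X hsup c hc hdiff x₀ hx₀pos hX0 hnonneg habsorb δ hδ hLBCAD t ht hεle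
  set q := 1 + δ ^ 2 / 4 * t ^ 2 with hqdef
  have hq1 : 1 ≤ q := by rw [hqdef]; nlinarith [sq_nonneg (δ * t)]
  have hq0 : 0 < q := lt_of_lt_of_le one_pos hq1
  set A : ℕ → Set Ω := fun j => {ω | ∀ n < j, 0 < X n ω} with hAdef
  have hgoal : {ω | ∀ n < k, 0 < X n ω} = A k := rfl
  rw [hgoal]
  set E : ℕ → Ω → ℝ := fun m ω => Real.exp (-t * X m ω) with hEdef
  have hXm : ∀ m, Measurable (X m) := fun m => ((hsup.stronglyAdapted m).mono (ℱ.le m)).measurable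
  have hEpos : ∀ m ω, 0 < E m ω := fun m ω => Real.exp_pos _
  have hEle1 : ∀ m ω, E m ω ≤ 1 := by
    intro m ω
    have h1 : -t * X m ω ≤ 0 := by nlinarith [hnonneg m ω]
    calc E m ω ≤ Real.exp 0 := Real.exp_le_exp.2 h1
    _ = 1 := Real.exp_zero
  have hEmeas : ∀ m, Measurable (E m) :=
    fun m => Real.measurable_exp.comp ((hXm m).const_mul (-t))
  have hEint : ∀ m, Integrable (E m) μ := by
    intro m
    refine Integrable.mono' (integrable_const 1) (hEmeas m).aestronglyMeasurable
      (ae_of_all _ fun ω => ?_)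
    rw [Real.norm_eq_abs, abs_of_pos (hEpos m ω)]
    exact hEle1 m ω
  have hAmeas : ∀ j i : ℕ, (∀ n, n < j → n ≤ i) → MeasurableSet[ℱ i] (A j) := by
    intro j i hj
    have hset : A j = ⋂ n ∈ Set.Iio j, {ω | 0 < X n ω} := by
      ext ω; simp [hAdef]
    rw [hset]
    exact MeasurableSet.biInter (Set.to_countable _) fun n hn =>
      measurableSet_lt measurable_const
        ((hsup.stronglyAdapted n).mono (ℱ.mono (hj n hn))).measurable
  have hAm0 : ∀ j, MeasurableSet (A j) :=
    fun j => ℱ.le j _ (hAmeas j j fun n hn => le_of_lt hn)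
  have hsubset : ∀ j, A (j + 1) ⊆ A j :=
    fun j ω h n hn => h n (hn.trans (Nat.lt_succ_self j))
  have hμne : ∀ j, μ (A j) ≠ ⊤ := fun j => measure_ne_top μ _
  -- the one-step integral inequality
  have step : ∀ j : ℕ, q * ∫ ω in A (j + 1), E j ω ∂μ ≤ ∫ ω in A (j + 1), E (j + 1) ω ∂μ := by
    intro j
    have hmeasA : MeasurableSet[ℱ j] (A (j + 1)) :=
      hAmeas (j + 1) j fun n hn => Nat.lt_succ_iff.mp hn
    have h1 : ∫ ω in A (j + 1), E (j + 1) ω ∂μ = ∫ ω in A (j + 1), (μ[E (j + 1)|ℱ j]) ω ∂μ :=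
      (setIntegral_condExp (ℱ.le j) (hEint (j + 1)) hmeasA).symm
    rw [h1, ← integral_const_mul]
    refine integral_mono_ae (((hEint j).const_mul q).integrableOn)
      (integrable_condExp.integrableOn) ?_
    filter_upwards [ae_restrict_of_ae (key j), ae_restrict_mem (hAm0 (j + 1))] with ω h1ω h2ω
    exact h1ω (h2ω j (Nat.lt_succ_self j))
  -- splitting the integral over A j
  have split : ∀ j : ℕ, ∫ ω in A j, E j ω ∂μ =
      (∫ ω in A (j + 1), E j ω ∂μ) + ((μ (A j)).toReal - (μ (A (j + 1))).toReal) := by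
    intro j
    have hdisj : Disjoint (A (j + 1)) (A j \ A (j + 1)) := disjoint_sdiff_self_right
    have hmdiff : MeasurableSet (A j \ A (j + 1)) := (hAm0 j).diff (hAm0 (j + 1))
    have hunion : A j = A (j + 1) ∪ (A j \ A (j + 1)) :=
      (Set.union_diff_cancel (hsubset j)).symm
    have h1 : ∫ ω in A j, E j ω ∂μ =
        (∫ ω in A (j + 1), E j ω ∂μ) + ∫ ω in A j \ A (j + 1), E j ω ∂μ := by
      calc ∫ ω in A j, E j ω ∂μ
          = ∫ ω in A (j + 1) ∪ (A j \ A (j + 1)), E j ω ∂μ := by rw [← hunion]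
        _ = _ := setIntegral_union hdisj hmdiff
            ((hEint j).integrableOn) ((hEint j).integrableOn)
    have h2 : ∫ ω in A j \ A (j + 1), E j ω ∂μ = (μ (A j \ A (j + 1))).toReal := by
      have hEq : Set.EqOn (E j) (fun _ => (1 : ℝ)) (A j \ A (j + 1)) := by
        intro ω hω
        obtain ⟨hωj, hωj1⟩ := hω
        have hXj : X j ω = 0 := by
          by_contra hne
          have hpos : 0 < X j ω := lt_of_le_of_ne (hnonneg j ω) (Ne.symm hne)
          exact hωj1 fun n hn => by
            rcases Nat.lt_succ_iff_lt_or_eq.mp hn with h | h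
            · exact hωj n h
            · rw [h]; exact hpos
        simp only [hEdef]
        rw [hXj]
        simp
      rw [setIntegral_congr_fun hmdiff hEq]
      simp [setIntegral_const, Measure.real]
    have h3 : (μ (A j \ A (j + 1))).toReal = (μ (A j)).toReal - (μ (A (j + 1))).toReal := by
      have hadd : μ (A j) = μ (A (j + 1)) + μ (A j \ A (j + 1)) := by
        calc μ (A j) = μ (A (j + 1) ∪ (A j \ A (j + 1))) := by rw [← hunion]
          _ = _ := measure_union hdisj hmdiff
      rw [hadd, ENNReal.toReal_add (hμne (j + 1)) (measure_ne_top μ _)]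
      ring
    rw [h1, h2, h3]
  -- nonnegativity and boundedness of the partial integrals
  have hSnonneg : ∀ j i : ℕ, 0 ≤ ∫ ω in A i, E j ω ∂μ :=
    fun j i => setIntegral_nonneg (hAm0 i) fun ω _ => (hEpos j ω).le
  have hmono : ∀ j, (μ (A (j + 1))).toReal ≤ (μ (A j)).toReal := by
    intro j
    exact ENNReal.toReal_mono (hμne j) (measure_mono (hsubset j))
  -- the main induction
  have main : ∀ j : ℕ, Real.exp (-t * x₀) ≤
      (q ^ j)⁻¹ * ∫ ω in A j, E j ω ∂μ + (1 - (μ (A j)).toReal) := by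
    intro j
    induction j with
    | zero =>
      have hA0 : A 0 = Set.univ := by ext ω; simp [hAdef]
      rw [hA0]
      have hint0 : ∫ ω in Set.univ, E 0 ω ∂μ = Real.exp (-t * x₀) := by
        rw [Measure.restrict_univ]
        have : (E 0) =ᵐ[μ] fun _ => Real.exp (-t * x₀) := by
          filter_upwards [hX0] with ω hω
          simp only [hEdef]
          rw [hω]
        rw [integral_congr_ae this]
        simp
      rw [hint0]
      simp
    | succ j ih =>
      have hpow : (q ^ (j + 1))⁻¹ * q = (q ^ j)⁻¹ := by
        rw [pow_succ]
        field_simp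
      have hinvle : (q ^ j)⁻¹ ≤ 1 := by
        rw [inv_le_one_iff₀]
        right
        exact one_le_pow₀ hq1
      have hinv1pos : (0:ℝ) < (q ^ (j + 1))⁻¹ := by positivity
      have e3 : (q ^ j)⁻¹ * ∫ ω in A (j + 1), E j ω ∂μ ≤
          (q ^ (j + 1))⁻¹ * ∫ ω in A (j + 1), E (j + 1) ω ∂μ := by
        have := mul_le_mul_of_nonneg_left (step j) hinv1pos.le
        calc (q ^ j)⁻¹ * ∫ ω in A (j + 1), E j ω ∂μ
            = (q ^ (j + 1))⁻¹ * (q * ∫ ω in A (j + 1), E j ω ∂μ) := by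
              rw [← mul_assoc, hpow]
          _ ≤ _ := this
      have e1 : (q ^ j)⁻¹ * ∫ ω in A j, E j ω ∂μ =
          (q ^ j)⁻¹ * ∫ ω in A (j + 1), E j ω ∂μ +
            (q ^ j)⁻¹ * ((μ (A j)).toReal - (μ (A (j + 1))).toReal) := by
        rw [split j]
        ring
      have e2 : (q ^ j)⁻¹ * ((μ (A j)).toReal - (μ (A (j + 1))).toReal) ≤
          (μ (A j)).toReal - (μ (A (j + 1))).toReal := by
        have h := hmono j
        nlinarith [hinvle, inv_nonneg.mpr (pow_nonneg hq0.le j)]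
      linarith [ih, e1, e2, e3]
  -- conclusion
  have hintX0 : ∫ ω, X 0 ω ∂μ = x₀ := by
    have : (fun ω => X 0 ω) =ᵐ[μ] fun _ => x₀ := hX0
    rw [integral_congr_ae this]
    simp
  rw [hintX0]
  have hSk : ∫ ω in A k, E k ω ∂μ ≤ (μ (A k)).toReal := by
    have h1 : ∫ ω in A k, E k ω ∂μ ≤ ∫ ω in A k, (1:ℝ) ∂μ :=
      integral_mono_ae ((hEint k).integrableOn) ((integrable_const 1).integrableOn)
        (ae_of_all _ fun ω => hEle1 k ω)
    calc ∫ ω in A k, E k ω ∂μ ≤ ∫ ω in A k, (1:ℝ) ∂μ := h1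
    _ = (μ (A k)).toReal := by simp [setIntegral_const, Measure.real]
  have hfin := main k
  have hinvnn : (0:ℝ) ≤ (q ^ k)⁻¹ := by positivity
  have h2 : (q ^ k)⁻¹ * ∫ ω in A k, E k ω ∂μ ≤ (q ^ k)⁻¹ * (μ (A k)).toReal :=
    mul_le_mul_of_nonneg_left hSk hinvnn
  nlinarith [hfin, h2]
end

section
/- Let Γ = {X_n}_{n∈ℕ₀} be a supermartingale (not necessarily difference-bounded) adapted to a filtration {F_n}_{n∈ℕ₀} such that (1) X_0 is an almost-surely constant random variable, (2) for all n and all ω one has X_n(ω) ≥ 0, and X_n(ω) = 0 implies X_{n+1}(ω) = 0, and (3) Γ satisfies the LBCAD condition with some parameter δ ∈ (0,∞). Then P(Z_Γ < ∞) = 1 and P(Z_Γ ≥ k) ∈ O(k^{−1/6}), i.e., there exist C > 0 and K ∈ ℕ such that P(Z_Γ ≥ k) ≤ C·k^{−1/6} for all k ≥ K. -/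
open MeasureTheory ProbabilityTheory Filter Finset

namespace GSATaux

variable {Ω : Type*} {m0 : MeasurableSpace Ω} {μ : Measure Ω} [IsProbabilityMeasure μ]
  {ℱ : Filtration ℕ m0} {X : ℕ → Ω → ℝ} {b : ℝ}
set_option linter.unusedSectionVars false

/-- integrability from an a.e. bound -/
lemma intBdd {C : ℝ} {f : Ω → ℝ} (hf : AEStronglyMeasurable f μ)
    (h : ∀ᵐ ω ∂μ, |f ω| ≤ C) : Integrable f μ :=
  Integrable.mono' (integrable_const C) hf (by filter_upwards [h] with ω hω using hω)

/-- pull-out: ∫ f*g = ∫ f*E[g|ℱ j] for f ℱ j-measurable. -/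
lemma integral_mul_condexp (j : ℕ) {f g : Ω → ℝ} (hf : StronglyMeasurable[ℱ j] f)
    (hg : Integrable g μ) (hfg : Integrable (f * g) μ) :
    ∫ ω, f ω * g ω ∂μ = ∫ ω, f ω * (μ[g|ℱ j]) ω ∂μ := by
  have h1 := condExp_mul_of_stronglyMeasurable_left hf hfg hg
  calc ∫ ω, f ω * g ω ∂μ = ∫ ω, (μ[f * g|ℱ j]) ω ∂μ :=
    (integral_condExp (μ := μ) (f := f * g) (ℱ.le j)).symm
    _ = ∫ ω, (f * μ[g|ℱ j]) ω ∂μ := integral_congr_ae h1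
    _ = ∫ ω, f ω * (μ[g|ℱ j]) ω ∂μ := rfl

lemma mul3 {g w d b : ℝ} (hg0 : 0 ≤ g) (hg1 : g ≤ 1) (hw0 : 0 ≤ w) (hwb : w ≤ b)
    (hd0 : 0 ≤ d) (hdb : d ≤ b) : g * w * d ≤ b * b := by
  have hb0 : 0 ≤ b := hw0.trans hwb
  have h1 : g * w * d = g * (w * d) := by ring
  rw [h1]
  calc g * (w * d) ≤ w * d := mul_le_of_le_one_left (mul_nonneg hw0 hd0) hg1
    _ ≤ b * b := mul_le_mul hwb hdb hd0 hb0

/-- telescoping bound for the stopped martingale sum -/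
lemma telescoping (k : ℕ) (b : ℝ) (hb : 0 ≤ b) (u av : ℕ → ℝ)
    (hu : ∀ j, j ≤ k → 0 ≤ u j ∧ u j ≤ b) (ha : ∀ j, j < k → 0 ≤ av j) :
    |∑ j ∈ Finset.range k, (if (∑ i ∈ Finset.range (j+1), av i) ≤ b then (1:ℝ) else 0) *
      ((u (j+1) - u j) + av j)| ≤ 2 * b := by
  classical
  have key : ∀ n, n ≤ k → ∃ m, m ≤ n ∧ (∑ i ∈ Finset.range m, av i) ≤ b ∧
      (m = n ∨ ¬ ((∑ i ∈ Finset.range (m+1), av i) ≤ b)) ∧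
      (∑ j ∈ Finset.range n, (if (∑ i ∈ Finset.range (j+1), av i) ≤ b then (1:ℝ) else 0) *
        ((u (j+1) - u j) + av j)) = u m - u 0 + ∑ i ∈ Finset.range m, av i := by
    intro n
    induction n with
    | zero => intro _; exact ⟨0, le_rfl, by simpa using hb, Or.inl rfl, by simp⟩
    | succ n ih =>
      intro hnk
      obtain ⟨m, hmn, hmb, hdisj, hsum⟩ := ih (by omega)
      by_cases hq : (∑ i ∈ Finset.range (n+1), av i) ≤ b
      · have hmn' : m = n := by
          rcases hdisj with h | h
          · exact h
          · exfalso
            refine h (le_trans (Finset.sum_le_sum_of_subset_of_nonneg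
              (Finset.range_subset_range.mpr (by omega)) ?_) hq)
            intro i hi _
            exact ha i (by have := Finset.mem_range.mp hi; omega)
        subst hmn'
        refine ⟨m+1, le_rfl, hq, Or.inl rfl, ?_⟩
        rw [Finset.sum_range_succ
          (fun j => (if (∑ i ∈ Finset.range (j+1), av i) ≤ b then (1:ℝ) else 0) *
            ((u (j+1) - u j) + av j)), hsum, if_pos hq, Finset.sum_range_succ]
        ring
      · refine ⟨m, by omega, hmb, Or.inr ?_, ?_⟩
        · rcases hdisj with h | h
          · subst h; exact hq
          · exact h
        · rw [Finset.sum_range_succ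
            (fun j => (if (∑ i ∈ Finset.range (j+1), av i) ≤ b then (1:ℝ) else 0) *
              ((u (j+1) - u j) + av j)), hsum, if_neg hq]
          ring
  obtain ⟨m, hmk, hmb, _, hsum⟩ := key k le_rfl
  rw [hsum]
  have h1 := hu m hmk
  have h2 := hu 0 (Nat.zero_le _)
  have h3 : 0 ≤ ∑ i ∈ Finset.range m, av i :=
    Finset.sum_nonneg (fun i hi => ha i (by have := Finset.mem_range.mp hi; omega))
  rw [abs_le]
  exact ⟨by linarith [h1.1, h2.2, h3], by linarith [h1.2, h2.1, hmb]⟩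

end GSATaux

namespace GSAT

variable {Ω : Type*} {m0 : MeasurableSpace Ω} (μ : Measure Ω) [IsProbabilityMeasure μ]
  (ℱ : Filtration ℕ m0) (X : ℕ → Ω → ℝ) (b : ℝ)

/-- capped process -/
noncomputable def Y : ℕ → Ω → ℝ := fun n ω => min (X n ω) b

/-- overshoot -/
noncomputable def V : ℕ → Ω → ℝ := fun n ω => max (X n ω - b) 0

/-- drift of capped process -/
noncomputable def a (j : ℕ) : Ω → ℝ := fun ω => Y X b j ω - (μ[Y X b (j+1)|ℱ j]) ω

/-- martingale increment of capped process -/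
noncomputable def D (j : ℕ) : Ω → ℝ := fun ω => Y X b (j+1) ω - (μ[Y X b (j+1)|ℱ j]) ω

/-- conditional absolute increment -/
noncomputable def ww (j : ℕ) : Ω → ℝ := μ[fun ω => |D μ ℱ X b j ω| | ℱ j]

/-- conditional overshoot -/
noncomputable def hh (j : ℕ) : Ω → ℝ := μ[V X b (j+1)|ℱ j]

/-- cutoff indicator -/
noncomputable def g (j : ℕ) : Ω → ℝ :=
  Set.indicator {ω | (∑ i ∈ range (j+1), a μ ℱ X b i ω) ≤ b} (fun _ => 1)

variable {μ ℱ X b}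
set_option linter.unusedSectionVars false

section basic

variable (hsup : Supermartingale X ℱ μ) (hnonneg : ∀ n ω, 0 ≤ X n ω) (hb : 0 < b)
include hsup hnonneg hb

lemma Y_nonneg (n : ℕ) (ω : Ω) : 0 ≤ Y X b n ω := le_min (hnonneg n ω) hb.le
lemma Y_le (n : ℕ) (ω : Ω) : Y X b n ω ≤ b := min_le_right _ _
lemma Y_sm (n : ℕ) : StronglyMeasurable[ℱ n] (Y X b n) :=
  ((hsup.stronglyMeasurable n).measurable.min measurable_const).stronglyMeasurable
lemma Y_int (n : ℕ) : Integrable (Y X b n) μ :=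
  GSATaux.intBdd ((Y_sm hsup hnonneg hb n).mono (ℱ.le n)).aestronglyMeasurable
    (Eventually.of_forall fun ω => abs_le.2
      ⟨by linarith [Y_nonneg hsup hnonneg hb n ω], Y_le hsup hnonneg hb n ω⟩)

lemma condY_le_b (j : ℕ) : μ[Y X b (j+1)|ℱ j] ≤ᵐ[μ] fun _ => b := by
  have h := condExp_mono (m := ℱ j) (Y_int hsup hnonneg hb (j+1)) (integrable_const b)
    (Eventually.of_forall fun ω => min_le_right _ _)
  rwa [condExp_const (ℱ.le j)] at h

lemma Y_sup : Supermartingale (Y X b) ℱ μ := by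
  refine supermartingale_nat
    (fun n => ((hsup.stronglyMeasurable n).measurable.min measurable_const).stronglyMeasurable)
    (fun n => Y_int hsup hnonneg hb n) (fun n => ?_)
  have h1 : μ[Y X b (n+1)|ℱ n] ≤ᵐ[μ] μ[X (n+1)|ℱ n] :=
    condExp_mono (Y_int hsup hnonneg hb (n+1)) (hsup.integrable (n+1))
      (Eventually.of_forall fun ω => min_le_left _ _)
  filter_upwards [h1, condY_le_b hsup hnonneg hb n, hsup.condExp_ae_le (Nat.le_succ n)]
    with ω a1 a2 a3
  exact le_min (a1.trans a3) a2

/-- a.e. facts about the conditional expectation of `Y (j+1)` -/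
lemma condY_bdd (j : ℕ) : ∀ᵐ ω ∂μ, 0 ≤ (μ[Y X b (j+1)|ℱ j]) ω ∧ (μ[Y X b (j+1)|ℱ j]) ω ≤ b ∧
    (μ[Y X b (j+1)|ℱ j]) ω ≤ Y X b j ω := by
  have h0 : (0 : Ω → ℝ) ≤ᵐ[μ] μ[Y X b (j+1)|ℱ j] :=
    condExp_nonneg (Eventually.of_forall fun ω => Y_nonneg hsup hnonneg hb (j+1) ω)
  filter_upwards [h0, condY_le_b hsup hnonneg hb j,
    (Y_sup hsup hnonneg hb).condExp_ae_le (Nat.le_succ j)] with ω a1 a2 a3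
  exact ⟨a1, a2, a3⟩

lemma a_nonneg_ae (j : ℕ) : ∀ᵐ ω ∂μ, 0 ≤ a μ ℱ X b j ω ∧ a μ ℱ X b j ω ≤ b := by
  filter_upwards [condY_bdd hsup hnonneg hb j] with ω ⟨h0, hb', hy⟩
  have := Y_le hsup hnonneg hb j ω
  constructor <;> simp only [a] <;> linarith

lemma D_bdd_ae (j : ℕ) : ∀ᵐ ω ∂μ, |D μ ℱ X b j ω| ≤ b := by
  filter_upwards [condY_bdd hsup hnonneg hb j] with ω ⟨h0, hb', _⟩
  have h1 := Y_nonneg hsup hnonneg hb (j+1) ω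
  have h2 := Y_le hsup hnonneg hb (j+1) ω
  rw [abs_le]; constructor <;> simp only [D] <;> linarith

lemma D_sm (j : ℕ) : StronglyMeasurable[ℱ (j+1)] (D μ ℱ X b j) :=
  ((Y_sm hsup hnonneg hb (j+1)).sub (stronglyMeasurable_condExp.mono (ℱ.mono (Nat.le_succ j))))

lemma D_int (j : ℕ) : Integrable (D μ ℱ X b j) μ :=
  GSATaux.intBdd (((D_sm hsup hnonneg hb j).mono (ℱ.le (j+1))).aestronglyMeasurable)
    (D_bdd_ae hsup hnonneg hb j)

lemma absD_int (j : ℕ) : Integrable (fun ω => |D μ ℱ X b j ω|) μ :=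
  (D_int hsup hnonneg hb j).abs

lemma a_sm (j : ℕ) : StronglyMeasurable[ℱ j] (a μ ℱ X b j) :=
  (Y_sm hsup hnonneg hb j).sub stronglyMeasurable_condExp

lemma a_int (j : ℕ) : Integrable (a μ ℱ X b j) μ :=
  GSATaux.intBdd (((a_sm hsup hnonneg hb j).mono (ℱ.le j)).aestronglyMeasurable)
    (by filter_upwards [a_nonneg_ae hsup hnonneg hb j] with ω ⟨h1, h2⟩
        rw [abs_le]; constructor <;> linarith)

lemma ww_bdd_ae (j : ℕ) : ∀ᵐ ω ∂μ, 0 ≤ ww μ ℱ X b j ω ∧ ww μ ℱ X b j ω ≤ b := by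
  have h0 : (0 : Ω → ℝ) ≤ᵐ[μ] ww μ ℱ X b j :=
    condExp_nonneg (Eventually.of_forall fun ω => abs_nonneg _)
  have h1 : ww μ ℱ X b j ≤ᵐ[μ] fun _ => b := by
    have h := condExp_mono (m := ℱ j) (absD_int hsup hnonneg hb j) (integrable_const b)
      (D_bdd_ae hsup hnonneg hb j)
    rwa [condExp_const (ℱ.le j)] at h
  filter_upwards [h0, h1] with ω u1 u2 using ⟨u1, u2⟩

lemma V_meas (n : ℕ) : Measurable (V X b n) :=
  ((hsup.stronglyMeasurable n).measurable.mono (ℱ.le n) le_rfl).sub measurable_const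
    |>.max measurable_const

lemma V_int (n : ℕ) : Integrable (V X b n) μ := by
  refine (hsup.integrable n).mono' (V_meas hsup hnonneg hb n).aestronglyMeasurable
    (Eventually.of_forall fun ω => ?_)
  have h1 := hnonneg n ω
  have h2 : 0 ≤ V X b n ω := le_max_right _ _
  rw [Real.norm_eq_abs, abs_of_nonneg h2]
  exact max_le (by linarith) (by linarith)

omit hnonneg hb in
lemma V_nonneg (n : ℕ) (ω : Ω) : 0 ≤ V X b n ω := le_max_right _ _

lemma hh_nonneg_ae (j : ℕ) : ∀ᵐ ω ∂μ, 0 ≤ hh μ ℱ X b j ω :=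
  condExp_nonneg (Eventually.of_forall fun ω => V_nonneg hsup (j+1) ω)

lemma condexp_D (j : ℕ) : (μ[D μ ℱ X b j|ℱ j]) =ᵐ[μ] 0 := by
  have h := condExp_sub (m := ℱ j) (Y_int hsup hnonneg hb (j+1))
    (integrable_condExp (f := Y X b (j+1)) (m := ℱ j))
  rw [condExp_of_stronglyMeasurable (ℱ.le j) stronglyMeasurable_condExp integrable_condExp] at h
  have : D μ ℱ X b j = Y X b (j+1) - μ[Y X b (j+1)|ℱ j] := rfl
  rw [this]
  filter_upwards [h] with ω hω
  simp only [Pi.sub_apply] at hω ⊢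
  simp [hω]

end basic

section bounds

variable (hsup : Supermartingale X ℱ μ) (hnonneg : ∀ n ω, 0 ≤ X n ω) (hb : 0 < b)
include hsup hnonneg hb

omit hsup hnonneg hb in
lemma gprop (j : ℕ) (ω : Ω) : g μ ℱ X b j ω =
    (if (∑ i ∈ range (j+1), a μ ℱ X b i ω) ≤ b then (1:ℝ) else 0) := by
  simp [g, Set.indicator_apply]

lemma g_sm (j : ℕ) : StronglyMeasurable[ℱ j] (g μ ℱ X b j) := by
  refine stronglyMeasurable_const.indicator ?_
  have hsum : Measurable[ℱ j] (fun ω => ∑ i ∈ range (j+1), a μ ℱ X b i ω) := by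
    refine Finset.measurable_sum _ (fun i hi => ?_)
    have hij : i ≤ j := Nat.lt_succ_iff.mp (mem_range.mp hi)
    exact ((a_sm hsup hnonneg hb i).mono (ℱ.mono hij)).measurable
  exact measurableSet_le hsum measurable_const

omit hsup hnonneg hb in
lemma g_01 (j : ℕ) (ω : Ω) : 0 ≤ g μ ℱ X b j ω ∧ g μ ℱ X b j ω ≤ 1 := by
  unfold g Set.indicator
  split <;> norm_num

/-- Doob maximal inequality for nonneg supermartingales. -/
lemma maximal (k : ℕ) (hk : 1 ≤ k) :
    b * (μ {ω | ∃ n, n < k ∧ b ≤ X n ω}).toReal ≤ ∫ ω, X 0 ω ∂μ := by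
  classical
  set E1 : Set Ω := {ω | ∃ n, n < k ∧ b ≤ X n ω} with hE1
  have hE1m : MeasurableSet E1 := by
    have : E1 = ⋃ n ∈ range k, {ω | b ≤ X n ω} := by
      ext ω; simp [hE1]
    rw [this]
    exact MeasurableSet.biUnion (Finset.range k).countable_toSet (fun n _ =>
      measurableSet_le measurable_const
        (((hsup.stronglyMeasurable n).mono (ℱ.le n)).measurable))
  set τ0 : Ω → ℕ := hittingBtwn X (Set.Ici b) 0 (k-1) with hτdef
  set τ : Ω → WithTop ℕ := fun ω => (τ0 ω : WithTop ℕ) with hτ'def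
  have hτ : IsStoppingTime ℱ τ :=
    hsup.stronglyAdapted.adapted.isStoppingTime_hittingBtwn measurableSet_Ici
  have hτbdd0 : ∀ ω, τ0 ω ≤ k - 1 := fun ω => hittingBtwn_le ω
  have hτbdd : ∀ ω, τ ω ≤ ((k - 1 : ℕ) : WithTop ℕ) := fun ω => WithTop.coe_le_coe.2 (hτbdd0 ω)
  have hsv_int : Integrable (stoppedValue X τ) μ :=
    integrable_stoppedValue ℕ hτ hsup.integrable hτbdd
  have hos : μ[stoppedValue X τ] ≤ μ[stoppedValue X (fun _ => ((0:ℕ) : WithTop ℕ))] := by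
    have hneg := hsup.neg
    have : μ[stoppedValue (-X) (fun _ => ((0:ℕ) : WithTop ℕ))] ≤ μ[stoppedValue (-X) τ] :=
      hneg.expected_stoppedValue_mono (isStoppingTime_const ℱ 0) hτ
      (fun ω => WithTop.coe_le_coe.2 (Nat.zero_le _)) hτbdd
    have e1 : stoppedValue (-X) (fun _ => ((0:ℕ) : WithTop ℕ)) =
      -stoppedValue X (fun _ => ((0:ℕ) : WithTop ℕ)) := rfl
    have e2 : stoppedValue (-X) τ = -stoppedValue X τ := rfl
    rw [e1, e2] at this
    simp only [Pi.neg_apply] at this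
    rw [integral_neg, integral_neg] at this
    linarith
  have hsv0 : μ[stoppedValue X (fun _ => ((0:ℕ) : WithTop ℕ))] = ∫ ω, X 0 ω ∂μ := rfl
  have hlow : ∀ ω, E1.indicator (fun _ => b) ω ≤ stoppedValue X τ ω := by
    intro ω
    by_cases hω : ω ∈ E1
    · rw [Set.indicator_of_mem hω]
      obtain ⟨n, hn, hbn⟩ := hω
      have hmem : ∃ j ∈ Set.Icc 0 (k-1), X j ω ∈ Set.Ici b :=
        ⟨n, ⟨Nat.zero_le _, by omega⟩, hbn⟩
      exact stoppedValue_hittingBtwn_mem hmem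
    · rw [Set.indicator_of_notMem hω]
      exact hnonneg _ ω
  have hind : ∫ ω, E1.indicator (fun _ => b) ω ∂μ = b * (μ E1).toReal := by
    rw [integral_indicator hE1m, setIntegral_const, smul_eq_mul, mul_comm, measureReal_def]
  calc b * (μ E1).toReal = ∫ ω, E1.indicator (fun _ => b) ω ∂μ := hind.symm
    _ ≤ μ[stoppedValue X τ] := by
        refine integral_mono ((integrable_const b).indicator hE1m) hsv_int hlow
    _ ≤ ∫ ω, X 0 ω ∂μ := le_of_le_of_eq hos hsv0

/-- total drift bound -/
lemma int_Y_succ (j : ℕ) : ∫ ω, (μ[Y X b (j+1)|ℱ j]) ω ∂μ = ∫ ω, Y X b (j+1) ω ∂μ :=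
  integral_condExp (μ := μ) (f := Y X b (j+1)) (ℱ.le j)

lemma drift_sum (k : ℕ) :
    ∫ ω, (∑ j ∈ range k, a μ ℱ X b j ω) ∂μ ≤ ∫ ω, X 0 ω ∂μ := by
  have h1 : ∫ ω, (∑ j ∈ range k, a μ ℱ X b j ω) ∂μ =
      ∑ j ∈ range k, ∫ ω, a μ ℱ X b j ω ∂μ :=
    integral_finset_sum _ (fun j _ => a_int hsup hnonneg hb j)
  have h2 : ∀ j, ∫ ω, a μ ℱ X b j ω ∂μ =
      (∫ ω, Y X b j ω ∂μ) - ∫ ω, Y X b (j+1) ω ∂μ := by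
    intro j
    have := integral_sub (Y_int hsup hnonneg hb j)
      (integrable_condExp (f := Y X b (j+1)) (m := ℱ j))
    simpa [a, int_Y_succ hsup hnonneg hb j] using this
  rw [h1]
  have h3 : ∑ j ∈ range k, ((∫ ω, Y X b j ω ∂μ) - ∫ ω, Y X b (j+1) ω ∂μ) =
      (∫ ω, Y X b 0 ω ∂μ) - ∫ ω, Y X b k ω ∂μ :=
    Finset.sum_range_sub' (fun j => ∫ ω, Y X b j ω ∂μ) k
  rw [Finset.sum_congr rfl (fun j _ => h2 j), h3]
  have h4 : (0:ℝ) ≤ ∫ ω, Y X b k ω ∂μ :=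
    integral_nonneg (fun ω => Y_nonneg hsup hnonneg hb k ω)
  have h5 : ∫ ω, Y X b 0 ω ∂μ ≤ ∫ ω, X 0 ω ∂μ :=
    integral_mono (Y_int hsup hnonneg hb 0) (hsup.integrable 0)
      (fun ω => min_le_left _ _)
  linarith

/-- total tail-loss bound -/
lemma tail_sum (k : ℕ) :
    ∑ j ∈ range k, ∫ ω, (if X j ω < b then (1:ℝ) else 0) * hh μ ℱ X b j ω ∂μ
      ≤ ∫ ω, X 0 ω ∂μ := by
  classical
  -- the set where X j < b and its complement
  set S : ℕ → Set Ω := fun j => {ω | X j ω < b} with hS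
  have hSm : ∀ j, MeasurableSet[ℱ j] (S j) := fun j =>
    measurableSet_lt (hsup.stronglyMeasurable j).measurable measurable_const
  have hSm0 : ∀ j, MeasurableSet (S j) := fun j => ℱ.le j _ (hSm j)
  have hd_nonneg : ∀ j, 0 ≤ᵐ[μ] fun ω => X j ω - (μ[X (j+1)|ℱ j]) ω := by
    intro j
    filter_upwards [hsup.condExp_ae_le (Nat.le_succ j)] with ω hω
    simpa using hω
  have hd_int : ∀ j, Integrable (fun ω => X j ω - (μ[X (j+1)|ℱ j]) ω) μ := fun j =>
    (hsup.integrable j).sub (integrable_condExp (f := X (j+1)) (m := ℱ j))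
  have key : ∀ j, ∫ ω, (if X j ω < b then (1:ℝ) else 0) * hh μ ℱ X b j ω ∂μ ≤
      ((∫ ω, V X b (j+1) ω ∂μ) - ∫ ω, V X b j ω ∂μ) +
        ((∫ ω, X j ω ∂μ) - ∫ ω, X (j+1) ω ∂μ) := by
    intro j
    -- rewrite as set integral of hh, then of V (j+1)
    have e1 : ∫ ω, (if X j ω < b then (1:ℝ) else 0) * hh μ ℱ X b j ω ∂μ
        = ∫ ω in S j, V X b (j+1) ω ∂μ := by
      have : (fun ω => (if X j ω < b then (1:ℝ) else 0) * hh μ ℱ X b j ω)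
          = (S j).indicator (hh μ ℱ X b j) := by
        funext ω
        by_cases hω : ω ∈ S j
        · rw [Set.indicator_of_mem hω]; simp [hS] at hω; simp [hω]
        · rw [Set.indicator_of_notMem hω]; simp [hS] at hω
          rw [if_neg (by exact not_lt.mpr hω)]; ring
      rw [this, integral_indicator (hSm0 j)]
      exact setIntegral_condExp (ℱ.le j) (V_int hsup hnonneg hb (j+1)) (hSm j)
    rw [e1]
    -- split total integral of V (j+1)
    have e2 : ∫ ω in S j, V X b (j+1) ω ∂μ =
        (∫ ω, V X b (j+1) ω ∂μ) - ∫ ω in (S j)ᶜ, V X b (j+1) ω ∂μ := by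
      have := integral_add_compl (hSm0 j) (V_int hsup hnonneg hb (j+1))
      linarith
    rw [e2]
    -- lower bound the integral over the complement
    have hTeq : (S j)ᶜ = {ω | b ≤ X j ω} := by
      ext ω; simp [hS]
    have e3 : ∫ ω in (S j)ᶜ, V X b (j+1) ω ∂μ ≥
        ∫ ω in (S j)ᶜ, (X (j+1) ω - b) ∂μ := by
      refine setIntegral_mono_on ((hsup.integrable (j+1)).sub
        (integrable_const b)).integrableOn
        (V_int hsup hnonneg hb (j+1)).integrableOn (hSm0 j).compl (fun ω _ => le_max_left _ _)
    have e4 : ∫ ω in (S j)ᶜ, (X (j+1) ω - b) ∂μ =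
        (∫ ω in (S j)ᶜ, X (j+1) ω ∂μ) - (μ ((S j)ᶜ)).toReal * b := by
      rw [integral_sub ((hsup.integrable (j+1)).integrableOn) (integrableOn_const (measure_ne_top μ _)), setIntegral_const, smul_eq_mul, measureReal_def]
    have e5 : ∫ ω in (S j)ᶜ, X (j+1) ω ∂μ = ∫ ω in (S j)ᶜ, (μ[X (j+1)|ℱ j]) ω ∂μ :=
      (setIntegral_condExp (ℱ.le j) (hsup.integrable (j+1)) (hSm j).compl).symm
    have e6 : ∫ ω in (S j)ᶜ, (μ[X (j+1)|ℱ j]) ω ∂μ =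
        (∫ ω in (S j)ᶜ, X j ω ∂μ) - ∫ ω in (S j)ᶜ, (X j ω - (μ[X (j+1)|ℱ j]) ω) ∂μ := by
      rw [← integral_sub ((hsup.integrable j).integrableOn) ((hd_int j).integrableOn)]
      congr 1; funext ω; ring_nf
    have e7 : ∫ ω in (S j)ᶜ, (X j ω - (μ[X (j+1)|ℱ j]) ω) ∂μ ≤
        ∫ ω, (X j ω - (μ[X (j+1)|ℱ j]) ω) ∂μ :=
      setIntegral_le_integral (hd_int j) (hd_nonneg j)
    have e8 : ∫ ω, (X j ω - (μ[X (j+1)|ℱ j]) ω) ∂μ =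
        (∫ ω, X j ω ∂μ) - ∫ ω, X (j+1) ω ∂μ := by
      rw [integral_sub (hsup.integrable j) (integrable_condExp (f := X (j+1)) (m := ℱ j)),
        integral_condExp (ℱ.le j)]
    -- the V j identity
    have e9 : ∫ ω, V X b j ω ∂μ = ∫ ω in (S j)ᶜ, (X j ω - b) ∂μ := by
      have : V X b j = ((S j)ᶜ).indicator (fun ω => X j ω - b) := by
        funext ω
        by_cases hω : ω ∈ (S j)ᶜ
        · rw [Set.indicator_of_mem hω]
          rw [hTeq] at hω
          exact max_eq_left (by simpa using hω)
        · rw [Set.indicator_of_notMem hω]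
          simp only [Set.notMem_compl_iff, hS, Set.mem_setOf_eq] at hω
          exact max_eq_right (by linarith)
      rw [this, integral_indicator (hSm0 j).compl]
    have e10 : ∫ ω in (S j)ᶜ, (X j ω - b) ∂μ =
        (∫ ω in (S j)ᶜ, X j ω ∂μ) - (μ ((S j)ᶜ)).toReal * b := by
      rw [integral_sub ((hsup.integrable j).integrableOn) (integrableOn_const (measure_ne_top μ _)), setIntegral_const, smul_eq_mul, measureReal_def]
    have e11 : ∫ ω, V X b (j+1) ω ∂μ ≥ 0 :=
      integral_nonneg (fun ω => V_nonneg hsup (j+1) ω)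
    linarith [e3, e4, e5, e6, e7, e8, e9, e10]
  calc ∑ j ∈ range k, ∫ ω, (if X j ω < b then (1:ℝ) else 0) * hh μ ℱ X b j ω ∂μ
      ≤ ∑ j ∈ range k, (((∫ ω, V X b (j+1) ω ∂μ) - ∫ ω, V X b j ω ∂μ) +
        ((∫ ω, X j ω ∂μ) - ∫ ω, X (j+1) ω ∂μ)) := Finset.sum_le_sum (fun j _ => key j)
    _ = ((∫ ω, V X b k ω ∂μ) - ∫ ω, V X b 0 ω ∂μ) +
        ((∫ ω, X 0 ω ∂μ) - ∫ ω, X k ω ∂μ) := by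
        rw [Finset.sum_add_distrib, Finset.sum_range_sub (fun j => ∫ ω, V X b j ω ∂μ),
          Finset.sum_range_sub' (fun j => ∫ ω, X j ω ∂μ)]
    _ ≤ ∫ ω, X 0 ω ∂μ := by
        have h1 : ∫ ω, V X b k ω ∂μ ≤ ∫ ω, X k ω ∂μ := by
          refine integral_mono (V_int hsup hnonneg hb k) (hsup.integrable k) (fun ω => ?_)
          have := hnonneg k ω
          exact max_le (by linarith) (by linarith)
        have h2 : 0 ≤ ∫ ω, V X b 0 ω ∂μ := integral_nonneg (fun ω => V_nonneg hsup 0 ω)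
        linarith

/-- L² bound on the stopped martingale sum -/
lemma bd_int {f : Ω → ℝ} (hm : Measurable f) {C : ℝ} (h : ∀ᵐ ω ∂μ, |f ω| ≤ C) :
    Integrable f μ := GSATaux.intBdd hm.aestronglyMeasurable h

lemma g_m0 (j : ℕ) : Measurable (g μ ℱ X b j) :=
  ((g_sm hsup hnonneg hb j).mono (ℱ.le j)).measurable

lemma D_m0 (j : ℕ) : Measurable (D μ ℱ X b j) :=
  ((D_sm hsup hnonneg hb j).mono (ℱ.le (j+1))).measurable

lemma ww_m0 (j : ℕ) : Measurable (ww μ ℱ X b j) :=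
  ((stronglyMeasurable_condExp (m := ℱ j)).mono (ℱ.le j)).measurable

omit hsup hnonneg hb in
lemma g_sq (j : ℕ) (ω : Ω) : g μ ℱ X b j ω * g μ ℱ X b j ω = g μ ℱ X b j ω := by
  unfold g Set.indicator
  split <;> norm_num

/-- conditional Jensen step: ∫ g·w² ≤ ∫ g·D². -/
lemma jensen_step (j : ℕ) :
    ∫ ω, g μ ℱ X b j ω * (ww μ ℱ X b j ω)^2 ∂μ ≤
      ∫ ω, g μ ℱ X b j ω * (D μ ℱ X b j ω)^2 ∂μ := by
  have hgw_sm : StronglyMeasurable[ℱ j] (fun ω => g μ ℱ X b j ω * ww μ ℱ X b j ω) :=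
    (g_sm hsup hnonneg hb j).mul stronglyMeasurable_condExp
  have hB : ∀ᵐ ω ∂μ, |D μ ℱ X b j ω| ≤ b ∧ (0 ≤ ww μ ℱ X b j ω ∧ ww μ ℱ X b j ω ≤ b) := by
    filter_upwards [D_bdd_ae hsup hnonneg hb j, ww_bdd_ae hsup hnonneg hb j] with ω h1 h2
    exact ⟨h1, h2⟩
  have hfg_int : Integrable (fun ω => (g μ ℱ X b j ω * ww μ ℱ X b j ω) * |D μ ℱ X b j ω|) μ := by
    refine bd_int hsup hnonneg hb (((g_m0 hsup hnonneg hb j).mul (ww_m0 hsup hnonneg hb j)).mul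
      (D_m0 hsup hnonneg hb j).abs) (C := b * b) ?_
    filter_upwards [hB] with ω ⟨h1, h2a, h2b⟩
    have hg := g_01 (μ := μ) (ℱ := ℱ) (X := X) (b := b) j ω
    have habs : |D μ ℱ X b j ω| = |D μ ℱ X b j ω| := rfl
    rw [abs_mul, abs_mul, abs_abs, abs_of_nonneg hg.1, abs_of_nonneg h2a]
    exact GSATaux.mul3 hg.1 hg.2 h2a h2b (abs_nonneg _) h1
  have pull := GSATaux.integral_mul_condexp j hgw_sm (absD_int hsup hnonneg hb j) hfg_int
  have pull' : ∫ ω, (g μ ℱ X b j ω * ww μ ℱ X b j ω) * |D μ ℱ X b j ω| ∂μ =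
      ∫ ω, g μ ℱ X b j ω * (ww μ ℱ X b j ω)^2 ∂μ := by
    rw [pull]
    congr 1
    funext ω
    show g μ ℱ X b j ω * ww μ ℱ X b j ω * ww μ ℱ X b j ω = _
    ring
  -- integrability of the three pieces
  have hA_int : Integrable (fun ω => g μ ℱ X b j ω * (D μ ℱ X b j ω)^2) μ := by
    refine bd_int hsup hnonneg hb ((g_m0 hsup hnonneg hb j).mul
      ((D_m0 hsup hnonneg hb j).pow measurable_const)) (C := b^2) ?_
    filter_upwards [hB] with ω ⟨h1, _, _⟩
    have hg := g_01 (μ := μ) (ℱ := ℱ) (X := X) (b := b) j ω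
    rw [abs_mul, abs_of_nonneg hg.1]
    have e : |(D μ ℱ X b j ω)^2| = |D μ ℱ X b j ω|^2 := by
      rw [abs_of_nonneg (sq_nonneg _), sq_abs]
    rw [e]
    calc g μ ℱ X b j ω * |D μ ℱ X b j ω|^2 ≤ |D μ ℱ X b j ω|^2 :=
          mul_le_of_le_one_left (sq_nonneg _) hg.2
      _ ≤ b^2 := pow_le_pow_left₀ (abs_nonneg _) h1 2
  have hC_int : Integrable (fun ω => g μ ℱ X b j ω * (ww μ ℱ X b j ω)^2) μ := by
    refine bd_int hsup hnonneg hb ((g_m0 hsup hnonneg hb j).mul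
      ((ww_m0 hsup hnonneg hb j).pow measurable_const)) (C := b^2) ?_
    filter_upwards [hB] with ω ⟨_, h2a, h2b⟩
    have hg := g_01 (μ := μ) (ℱ := ℱ) (X := X) (b := b) j ω
    rw [abs_mul, abs_of_nonneg hg.1]
    rw [abs_of_nonneg (sq_nonneg _)]
    calc g μ ℱ X b j ω * (ww μ ℱ X b j ω)^2 ≤ (ww μ ℱ X b j ω)^2 :=
          mul_le_of_le_one_left (sq_nonneg _) hg.2
      _ ≤ b^2 := pow_le_pow_left₀ h2a h2b 2
  have pos : 0 ≤ ∫ ω, g μ ℱ X b j ω * (|D μ ℱ X b j ω| - ww μ ℱ X b j ω)^2 ∂μ :=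
    integral_nonneg (fun ω => mul_nonneg (g_01 j ω).1 (sq_nonneg _))
  have expand : (fun ω => g μ ℱ X b j ω * (|D μ ℱ X b j ω| - ww μ ℱ X b j ω)^2) =
      fun ω => g μ ℱ X b j ω * (D μ ℱ X b j ω)^2 -
        2 * ((g μ ℱ X b j ω * ww μ ℱ X b j ω) * |D μ ℱ X b j ω|) +
        g μ ℱ X b j ω * (ww μ ℱ X b j ω)^2 := by
    funext ω
    rw [sub_sq, sq_abs]
    ring
  rw [expand] at pos
  rw [integral_add (by exact hA_int.sub (hfg_int.const_mul 2)) hC_int,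
    integral_sub hA_int (hfg_int.const_mul 2), integral_const_mul] at pos
  rw [pull'] at pos
  linarith

lemma var_sum (k : ℕ) :
    ∑ j ∈ range k, ∫ ω, g μ ℱ X b j ω * (ww μ ℱ X b j ω)^2 ∂μ ≤ 4 * b^2 := by
  classical
  set F : ℕ → Ω → ℝ := fun j ω => g μ ℱ X b j ω * D μ ℱ X b j ω with hF
  have hF_m0 : ∀ j, Measurable (F j) := fun j =>
    (g_m0 hsup hnonneg hb j).mul (D_m0 hsup hnonneg hb j)
  have hF_bdd : ∀ j, ∀ᵐ ω ∂μ, |F j ω| ≤ b := by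
    intro j
    filter_upwards [D_bdd_ae hsup hnonneg hb j] with ω h1
    have hg := g_01 (μ := μ) (ℱ := ℱ) (X := X) (b := b) j ω
    show |g μ ℱ X b j ω * D μ ℱ X b j ω| ≤ b
    rw [abs_mul, abs_of_nonneg hg.1]
    calc g μ ℱ X b j ω * |D μ ℱ X b j ω| ≤ |D μ ℱ X b j ω| :=
          mul_le_of_le_one_left (abs_nonneg _) hg.2
      _ ≤ b := h1
  have hFF_int : ∀ i j, Integrable (fun ω => F i ω * F j ω) μ := by
    intro i j
    refine bd_int hsup hnonneg hb ((hF_m0 i).mul (hF_m0 j)) (C := b * b) ?_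
    filter_upwards [hF_bdd i, hF_bdd j] with ω h1 h2
    rw [abs_mul]
    exact mul_le_mul h1 h2 (abs_nonneg _) hb.le
  -- cross terms vanish
  have cross : ∀ i j, i < j → ∫ ω, F i ω * F j ω ∂μ = 0 := by
    intro i j hij
    have hf_sm : StronglyMeasurable[ℱ j] (fun ω => F i ω * g μ ℱ X b j ω) := by
      refine StronglyMeasurable.mul ?_ (g_sm hsup hnonneg hb j)
      exact ((g_sm hsup hnonneg hb i).mono (ℱ.mono hij.le)).mul
        ((D_sm hsup hnonneg hb i).mono (ℱ.mono hij))
    have hint2 : Integrable (fun ω => (F i ω * g μ ℱ X b j ω) * D μ ℱ X b j ω) μ := by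
      refine bd_int hsup hnonneg hb (((hF_m0 i).mul (g_m0 hsup hnonneg hb j)).mul
        (D_m0 hsup hnonneg hb j)) (C := b * b) ?_
      filter_upwards [hF_bdd i, D_bdd_ae hsup hnonneg hb j] with ω h1 h2
      have hg := g_01 (μ := μ) (ℱ := ℱ) (X := X) (b := b) j ω
      rw [abs_mul, abs_mul, abs_of_nonneg hg.1]
      have e : |F i ω| * g μ ℱ X b j ω * |D μ ℱ X b j ω| =
          g μ ℱ X b j ω * |F i ω| * |D μ ℱ X b j ω| := by ring
      rw [e]
      exact GSATaux.mul3 hg.1 hg.2 (abs_nonneg _) h1 (abs_nonneg _) h2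
    have pull := GSATaux.integral_mul_condexp j hf_sm (D_int hsup hnonneg hb j) hint2
    have hzero : (fun ω => (F i ω * g μ ℱ X b j ω) * (μ[D μ ℱ X b j|ℱ j]) ω) =ᵐ[μ] 0 := by
      filter_upwards [condexp_D hsup hnonneg hb j] with ω h
      simp [h]
    have e1 : ∫ ω, F i ω * F j ω ∂μ =
        ∫ ω, (F i ω * g μ ℱ X b j ω) * D μ ℱ X b j ω ∂μ := by
      congr 1; funext ω
      show F i ω * (g μ ℱ X b j ω * D μ ℱ X b j ω) = _
      ring
    rw [e1, pull, integral_congr_ae hzero]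
    simp
  -- double sum expansion
  have hS_eq : ∫ ω, (∑ j ∈ range k, F j ω)^2 ∂μ =
      ∑ i ∈ range k, ∑ j ∈ range k, ∫ ω, F i ω * F j ω ∂μ := by
    have e : (fun ω => (∑ j ∈ range k, F j ω)^2) =
        fun ω => ∑ i ∈ range k, ∑ j ∈ range k, F i ω * F j ω := by
      funext ω
      rw [sq, Finset.sum_mul_sum]
    rw [e, integral_finset_sum _ (fun i _ => integrable_finset_sum _ (fun j _ => hFF_int i j))]
    exact Finset.sum_congr rfl (fun i _ => integral_finset_sum _ (fun j _ => hFF_int i j))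
  have diag : ∀ j, ∫ ω, F j ω * F j ω ∂μ = ∫ ω, g μ ℱ X b j ω * (D μ ℱ X b j ω)^2 ∂μ := by
    intro j
    congr 1; funext ω
    have hgsq := g_sq (μ := μ) (ℱ := ℱ) (X := X) (b := b) j ω
    show (g μ ℱ X b j ω * D μ ℱ X b j ω) * (g μ ℱ X b j ω * D μ ℱ X b j ω) = _
    rw [sq]
    linear_combination (D μ ℱ X b j ω * D μ ℱ X b j ω) * hgsq
  have hdouble : ∑ i ∈ range k, ∑ j ∈ range k, ∫ ω, F i ω * F j ω ∂μ =
      ∑ j ∈ range k, ∫ ω, g μ ℱ X b j ω * (D μ ℱ X b j ω)^2 ∂μ := by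
    refine Finset.sum_congr rfl (fun i hi => ?_)
    rw [Finset.sum_eq_single i]
    · exact diag i
    · intro j hj hne
      rcases lt_or_gt_of_ne hne with h | h
      · have e : ∫ ω, F i ω * F j ω ∂μ = ∫ ω, F j ω * F i ω ∂μ := by
          congr 1; funext ω; ring
        rw [e]; exact cross j i h
      · exact cross i j h
    · intro h; exact absurd hi h
  -- pointwise bound on the martingale sum
  have hSbdd : ∀ᵐ ω ∂μ, |∑ j ∈ range k, F j ω| ≤ 2 * b := by
    have hall : ∀ᵐ ω ∂μ, ∀ j, 0 ≤ a μ ℱ X b j ω ∧ a μ ℱ X b j ω ≤ b :=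
      ae_all_iff.2 (fun j => a_nonneg_ae hsup hnonneg hb j)
    filter_upwards [hall] with ω hω
    have happ := GSATaux.telescoping k b hb.le (fun n => Y X b n ω)
      (fun i => a μ ℱ X b i ω)
      (fun n _ => ⟨Y_nonneg hsup hnonneg hb n ω, Y_le hsup hnonneg hb n ω⟩)
      (fun i _ => (hω i).1)
    have e : ∀ j ∈ range k, F j ω =
        (if (∑ i ∈ range (j+1), a μ ℱ X b i ω) ≤ b then (1:ℝ) else 0) *
          ((Y X b (j+1) ω - Y X b j ω) + a μ ℱ X b j ω) := by
      intro j _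
      show g μ ℱ X b j ω * D μ ℱ X b j ω = _
      rw [gprop]
      congr 1
      show D μ ℱ X b j ω = _
      simp only [D, a]
      ring
    rw [Finset.sum_congr rfl e]
    exact happ
  have hSsq : ∫ ω, (∑ j ∈ range k, F j ω)^2 ∂μ ≤ 4 * b^2 := by
    have hmeas : Measurable (fun ω => (∑ j ∈ range k, F j ω)^2) :=
      (Finset.measurable_sum _ (fun j _ => hF_m0 j)).pow measurable_const
    have hbd : ∀ᵐ ω ∂μ, (∑ j ∈ range k, F j ω)^2 ≤ 4 * b^2 := by
      filter_upwards [hSbdd] with ω h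
      have h2 : (∑ j ∈ range k, F j ω)^2 ≤ (2*b)^2 :=
        sq_le_sq' (by linarith [abs_le.1 h]) (abs_le.1 h).2
      nlinarith
    have hint : Integrable (fun ω => (∑ j ∈ range k, F j ω)^2) μ := by
      refine bd_int hsup hnonneg hb hmeas (C := 4 * b^2) ?_
      filter_upwards [hbd] with ω h
      rw [abs_of_nonneg (sq_nonneg _)]
      exact h
    calc ∫ ω, (∑ j ∈ range k, F j ω)^2 ∂μ ≤ ∫ _ω, 4 * b^2 ∂μ :=
          integral_mono_ae hint (integrable_const _) hbd
      _ = 4 * b^2 := by simp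
  calc ∑ j ∈ range k, ∫ ω, g μ ℱ X b j ω * (ww μ ℱ X b j ω)^2 ∂μ
      ≤ ∑ j ∈ range k, ∫ ω, g μ ℱ X b j ω * (D μ ℱ X b j ω)^2 ∂μ :=
        Finset.sum_le_sum (fun j _ => jensen_step hsup hnonneg hb j)
    _ = ∫ ω, (∑ j ∈ range k, F j ω)^2 ∂μ := by rw [hS_eq, hdouble]
    _ ≤ 4 * b^2 := hSsq

end bounds

section trich

variable (hsup : Supermartingale X ℱ μ) (hnonneg : ∀ n ω, 0 ≤ X n ω) (hb : 0 < b)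
  {δ : ℝ} (hδ : 0 < δ)
include hsup hnonneg hb hδ

omit hδ in
lemma Ydiff (n : ℕ) (ω : Ω) : Y X b n ω = X n ω - V X b n ω := by
  rcases le_total (X n ω) b with h | h
  · simp [Y, V, min_eq_left h, max_eq_right (by linarith : X n ω - b ≤ 0)]
  · simp [Y, V, min_eq_right h, max_eq_left (by linarith : (0:ℝ) ≤ X n ω - b)]

lemma trichotomy
    (hLBCAD : ∀ n : ℕ, ∀ᵐ ω ∂μ,
      0 < X n ω → δ ≤ (μ[fun ω' => |X (n + 1) ω' - X n ω'| | ℱ n]) ω) (j : ℕ) :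
    ∀ᵐ ω ∂μ, (0 < X j ω ∧ X j ω < b) →
      (δ/4 ≤ a μ ℱ X b j ω ∨ δ/4 ≤ hh μ ℱ X b j ω ∨ δ/2 ≤ ww μ ℱ X b j ω) := by
  classical
  set fX : Ω → ℝ := fun ω => |X (j + 1) ω - X j ω| with hfX_def
  have hfX : Integrable fX μ := ((hsup.integrable (j+1)).sub (hsup.integrable j)).abs
  set fY : Ω → ℝ := fun ω => |Y X b (j+1) ω - Y X b j ω| with hfY_def
  have hfY : Integrable fY μ :=
    ((Y_int hsup hnonneg hb (j+1)).sub (Y_int hsup hnonneg hb j)).abs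
  have habs_a : Integrable (fun ω => |a μ ℱ X b j ω|) μ := (a_int hsup hnonneg hb j).abs
  have hVj_sm : StronglyMeasurable[ℱ j] (V X b j) :=
    (((hsup.stronglyMeasurable j).measurable.sub measurable_const).max
      measurable_const).stronglyMeasurable
  have ha_abs_sm : StronglyMeasurable[ℱ j] (fun ω => |a μ ℱ X b j ω|) := by
    have h : Measurable[ℱ j] fun ω => |a μ ℱ X b j ω| :=
      measurable_abs.comp (a_sm hsup hnonneg hb j).measurable
    exact h.stronglyMeasurable
  -- lower bound on E[|ΔY| | ℱ j]
  have mono1 : μ[fX - V X b (j+1) - V X b j|ℱ j] ≤ᵐ[μ] μ[fY|ℱ j] := by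
    refine condExp_mono ((hfX.sub (V_int hsup hnonneg hb (j+1))).sub (V_int hsup hnonneg hb j))
      hfY (Eventually.of_forall fun ω => ?_)
    simp only [Pi.sub_apply, hfX_def, hfY_def]
    have hY1 := Ydiff hsup hnonneg hb (j+1) ω
    have hY2 := Ydiff hsup hnonneg hb j ω
    have hVa := V_nonneg (b := b) hsup (j+1) ω
    have hVb := V_nonneg (b := b) hsup j ω
    have h : X (j+1) ω - X j ω =
        (Y X b (j+1) ω - Y X b j ω) + (V X b (j+1) ω - V X b j ω) := by
      rw [hY1, hY2]; ring
    have h2 : |X (j+1) ω - X j ω| ≤ |Y X b (j+1) ω - Y X b j ω| + |V X b (j+1) ω - V X b j ω| := by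
      rw [h]; exact abs_add_le _ _
    have h3 : |V X b (j+1) ω - V X b j ω| ≤ V X b (j+1) ω + V X b j ω :=
      abs_le.2 ⟨by linarith, by linarith⟩
    linarith
  have split1 : μ[fX - V X b (j+1) - V X b j|ℱ j] =ᵐ[μ]
      μ[fX|ℱ j] - μ[V X b (j+1)|ℱ j] - V X b j := by
    have eA := condExp_sub (m := ℱ j) (hfX.sub (V_int hsup hnonneg hb (j+1)))
      (V_int hsup hnonneg hb j)
    have eB := condExp_sub (m := ℱ j) hfX (V_int hsup hnonneg hb (j+1))
    rw [condExp_of_stronglyMeasurable (ℱ.le j) hVj_sm (V_int hsup hnonneg hb j)] at eA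
    exact eA.trans (eB.sub EventuallyEq.rfl)
  -- upper bound on E[|ΔY| | ℱ j]
  have mono2 : μ[fY|ℱ j] ≤ᵐ[μ] ww μ ℱ X b j + fun ω => |a μ ℱ X b j ω| := by
    have hle : fY ≤ᵐ[μ] (fun ω => |D μ ℱ X b j ω|) + fun ω => |a μ ℱ X b j ω| := by
      refine Eventually.of_forall fun ω => ?_
      simp only [Pi.add_apply, hfY_def]
      have h : Y X b (j+1) ω - Y X b j ω = D μ ℱ X b j ω - a μ ℱ X b j ω := by
        simp only [D, a]; ring
      rw [h]; exact abs_sub _ _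
    have := condExp_mono (m := ℱ j) hfY ((absD_int hsup hnonneg hb j).add habs_a) hle
    have e2 := condExp_add (m := ℱ j) (absD_int hsup hnonneg hb j) habs_a
    rw [condExp_of_stronglyMeasurable (ℱ.le j) ha_abs_sm habs_a] at e2
    exact this.trans e2.le
  filter_upwards [hLBCAD j, mono1, split1, mono2, a_nonneg_ae hsup hnonneg hb j]
    with ω hLB h1 h2 h3 ⟨ha0, _⟩
  rintro ⟨hx0, hxb⟩
  have hV0 : V X b j ω = 0 := by
    simp only [V]; exact max_eq_right (by linarith)
  rw [h2] at h1
  simp only [Pi.sub_apply, Pi.add_apply, hV0, sub_zero] at h1 h3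
  have hd : δ ≤ (μ[fX|ℱ j]) ω := hLB hx0
  have habs : |a μ ℱ X b j ω| = a μ ℱ X b j ω := abs_of_nonneg ha0
  rw [habs] at h3
  by_cases hA : δ/4 ≤ a μ ℱ X b j ω
  · exact Or.inl hA
  by_cases hH : δ/4 ≤ hh μ ℱ X b j ω
  · exact Or.inr (Or.inl hH)
  refine Or.inr (Or.inr ?_)
  push_neg at hA hH
  have : (μ[V X b (j+1)|ℱ j]) ω = hh μ ℱ X b j ω := rfl
  linarith [h1, h3]

end trich

/-- main tail bound for fixed k and cutoff b -/
theorem tail_bound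
    (hsup : Supermartingale X ℱ μ)
    (x₀ : ℝ) (hX0 : ∀ᵐ ω ∂μ, X 0 ω = x₀)
    (hnonneg : ∀ n ω, 0 ≤ X n ω)
    (δ : ℝ) (hδ : 0 < δ)
    (hLBCAD : ∀ n : ℕ, ∀ᵐ ω ∂μ,
      0 < X n ω → δ ≤ (μ[fun ω' => |X (n + 1) ω' - X n ω'| | ℱ n]) ω)
    (hb : 0 < b) (k : ℕ) (hk : 1 ≤ k) (hbk : 12 * b ≤ k * δ) :
    (μ {ω | ∀ n < k, 0 < X n ω}).toReal ≤
      2*x₀/b + 12*x₀/(k*δ) + 48*b^2/(k*δ^2) := by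
  classical
  have hnonnegY := hnonneg
  have hx0 : ∫ ω, X 0 ω ∂μ = x₀ := by
    rw [integral_congr_ae hX0]; simp
  have hkδ : 0 < (k:ℝ) * δ := by
    have : (1:ℝ) ≤ (k:ℝ) := by exact_mod_cast hk
    nlinarith
  -- events
  set A : Set Ω := {ω | ∀ n < k, 0 < X n ω} with hA
  set E1 : Set Ω := {ω | ∃ n, n < k ∧ b ≤ X n ω} with hE1
  set f2 : Ω → ℝ := fun ω => ∑ j ∈ range k, a μ ℱ X b j ω with hf2
  set E2 : Set Ω := {ω | b ≤ f2 ω} with hE2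
  set f3 : Ω → ℝ := fun ω =>
    ∑ j ∈ range k, (if X j ω < b then (1:ℝ) else 0) * hh μ ℱ X b j ω with hf3
  set E3 : Set Ω := {ω | (k:ℝ)*δ/12 ≤ f3 ω} with hE3
  set B : Set Ω := A ∩ (E1ᶜ ∩ (E2ᶜ ∩ E3ᶜ)) with hB
  -- measurability
  have hXm : ∀ n, Measurable (X n) := fun n => ((hsup.stronglyMeasurable n).mono (ℱ.le n)).measurable
  have hAm : MeasurableSet A := by
    have : A = ⋂ n ∈ Finset.range k, {ω | 0 < X n ω} := by ext ω; simp [hA]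
    rw [this]
    exact MeasurableSet.biInter (Finset.range k).countable_toSet
      (fun n _ => measurableSet_lt measurable_const (hXm n))
  have hE1m : MeasurableSet E1 := by
    have : E1 = ⋃ n ∈ Finset.range k, {ω | b ≤ X n ω} := by ext ω; simp [hE1]
    rw [this]
    exact MeasurableSet.biUnion (Finset.range k).countable_toSet
      (fun n _ => measurableSet_le measurable_const (hXm n))
  have ha_m0 : ∀ j, Measurable (a μ ℱ X b j) := fun j =>
    ((a_sm hsup hnonneg hb j).mono (ℱ.le j)).measurable
  have hf2m : Measurable f2 := Finset.measurable_sum _ (fun j _ => ha_m0 j)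
  have hE2m : MeasurableSet E2 := measurableSet_le measurable_const hf2m
  have hhh_m0 : ∀ j, Measurable (hh μ ℱ X b j) := fun j =>
    ((stronglyMeasurable_condExp (m := ℱ j)).mono (ℱ.le j)).measurable
  have hf3m : Measurable f3 := by
    refine Finset.measurable_sum _ (fun j _ => ?_)
    exact (Measurable.ite (measurableSet_lt (hXm j) measurable_const)
      measurable_const measurable_const).mul (hhh_m0 j)
  have hE3m : MeasurableSet E3 := measurableSet_le measurable_const hf3m
  have hBm : MeasurableSet B := hAm.inter (hE1m.compl.inter (hE2m.compl.inter hE3m.compl))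
  -- decomposition
  have hsub : A ⊆ E1 ∪ (E2 ∪ (E3 ∪ B)) := by
    intro ω hω
    by_cases h1 : ω ∈ E1
    · exact Or.inl h1
    by_cases h2 : ω ∈ E2
    · exact Or.inr (Or.inl h2)
    by_cases h3 : ω ∈ E3
    · exact Or.inr (Or.inr (Or.inl h3))
    · exact Or.inr (Or.inr (Or.inr ⟨hω, h1, h2, h3⟩))
  have hAle : (μ A).toReal ≤
      (μ E1).toReal + (μ E2).toReal + (μ E3).toReal + (μ B).toReal := by
    have h1 : μ A ≤ μ E1 + (μ E2 + (μ E3 + μ B)) :=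
      le_trans (measure_mono hsub) (le_trans (measure_union_le _ _)
        (add_le_add le_rfl (le_trans (measure_union_le _ _)
          (add_le_add le_rfl (measure_union_le _ _)))))
    have hne : ∀ s : Set Ω, μ s ≠ ⊤ := fun s => measure_ne_top μ s
    calc (μ A).toReal ≤ (μ E1 + (μ E2 + (μ E3 + μ B))).toReal :=
          ENNReal.toReal_mono (by simp [ENNReal.add_ne_top, hne]) h1
      _ = (μ E1).toReal + (μ E2).toReal + (μ E3).toReal + (μ B).toReal := by
          rw [ENNReal.toReal_add (hne _) (by simp [ENNReal.add_ne_top, hne]),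
            ENNReal.toReal_add (hne _) (by simp [ENNReal.add_ne_top, hne]),
            ENNReal.toReal_add (hne _) (hne _)]
          ring
  -- bound 1
  have hb1 : (μ E1).toReal ≤ x₀/b := by
    rw [le_div_iff₀ hb, mul_comm]
    rw [← hx0]
    exact maximal hsup hnonneg hb k hk
  -- bound 2
  have hb2 : (μ E2).toReal ≤ x₀/b := by
    have hnn : 0 ≤ᵐ[μ] f2 := by
      have hall : ∀ᵐ ω ∂μ, ∀ j, 0 ≤ a μ ℱ X b j ω ∧ a μ ℱ X b j ω ≤ b :=
        ae_all_iff.2 (fun j => a_nonneg_ae hsup hnonneg hb j)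
      filter_upwards [hall] with ω hω
      exact Finset.sum_nonneg (fun j _ => (hω j).1)
    have hint : Integrable f2 μ := integrable_finset_sum _ (fun j _ => a_int hsup hnonneg hb j)
    have hmk := mul_meas_ge_le_integral_of_nonneg hnn hint b
    have hds := drift_sum hsup hnonneg hb k
    rw [le_div_iff₀ hb, mul_comm]
    calc b * (μ E2).toReal ≤ ∫ ω, f2 ω ∂μ := hmk
      _ ≤ x₀ := by rw [← hx0]; exact hds
  -- bound 3
  have hb3 : (μ E3).toReal ≤ 12*x₀/((k:ℝ)*δ) := by
    have hnn : 0 ≤ᵐ[μ] f3 := by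
      have hall : ∀ᵐ ω ∂μ, ∀ j, 0 ≤ hh μ ℱ X b j ω :=
        ae_all_iff.2 (fun j => hh_nonneg_ae hsup hnonneg hb j)
      filter_upwards [hall] with ω hω
      refine Finset.sum_nonneg (fun j _ => ?_)
      by_cases hc : X j ω < b <;> simp [hc, hω j]
    have hint : Integrable f3 μ := by
      refine integrable_finset_sum _ (fun j _ => ?_)
      have : (fun ω => (if X j ω < b then (1:ℝ) else 0) * hh μ ℱ X b j ω)
          = Set.indicator {ω | X j ω < b} (hh μ ℱ X b j) := by
        funext ω
        by_cases hc : X j ω < b <;> simp [Set.indicator_apply, hc]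
      rw [this]
      exact (integrable_condExp (f := V X b (j+1)) (m := ℱ j)).indicator
        (measurableSet_lt (hXm j) measurable_const)
    have hmk := mul_meas_ge_le_integral_of_nonneg hnn hint ((k:ℝ)*δ/12)
    have hsum : ∫ ω, f3 ω ∂μ ≤ x₀ := by
      rw [hf3, integral_finset_sum _ (fun j _ => ?_)]
      · rw [← hx0]; exact tail_sum hsup hnonneg hb k
      · have : (fun ω => (if X j ω < b then (1:ℝ) else 0) * hh μ ℱ X b j ω)
            = Set.indicator {ω | X j ω < b} (hh μ ℱ X b j) := by
          funext ω
          by_cases hc : X j ω < b <;> simp [Set.indicator_apply, hc]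
        rw [this]
        exact (integrable_condExp (f := V X b (j+1)) (m := ℱ j)).indicator
          (measurableSet_lt (hXm j) measurable_const)
    have hmk' : (k:ℝ)*δ/12 * (μ E3).toReal ≤ ∫ ω, f3 ω ∂μ := hmk
    rw [le_div_iff₀ hkδ]
    calc (μ E3).toReal * ((k:ℝ)*δ) = ((k:ℝ)*δ/12 * (μ E3).toReal) * 12 := by ring
      _ ≤ (∫ ω, f3 ω ∂μ) * 12 := by linarith
      _ ≤ 12 * x₀ := by linarith
  -- bound 4 : the variance argument
  have hb4 : (μ B).toReal ≤ 48*b^2/((k:ℝ)*δ^2) := by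
    -- a.e. lower bound on the weighted sum over B
    have hcount : ∀ᵐ ω ∂μ, ω ∈ B →
        (k:ℝ)*δ^2/12 ≤ ∑ j ∈ range k, g μ ℱ X b j ω * (ww μ ℱ X b j ω)^2 := by
      have h1 : ∀ᵐ ω ∂μ, ∀ j, (0 < X j ω ∧ X j ω < b) →
          (δ/4 ≤ a μ ℱ X b j ω ∨ δ/4 ≤ hh μ ℱ X b j ω ∨ δ/2 ≤ ww μ ℱ X b j ω) :=
        ae_all_iff.2 (fun j => trichotomy hsup hnonneg hb hδ hLBCAD j)
      have h2 : ∀ᵐ ω ∂μ, ∀ j, 0 ≤ a μ ℱ X b j ω ∧ a μ ℱ X b j ω ≤ b :=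
        ae_all_iff.2 (fun j => a_nonneg_ae hsup hnonneg hb j)
      have h3 : ∀ᵐ ω ∂μ, ∀ j, 0 ≤ hh μ ℱ X b j ω :=
        ae_all_iff.2 (fun j => hh_nonneg_ae hsup hnonneg hb j)
      have h4 : ∀ᵐ ω ∂μ, ∀ j, 0 ≤ ww μ ℱ X b j ω ∧ ww μ ℱ X b j ω ≤ b :=
        ae_all_iff.2 (fun j => ww_bdd_ae hsup hnonneg hb j)
      filter_upwards [h1, h2, h3, h4] with ω htri ha hhh hww
      rintro ⟨hωA, hωE1, hωE2, hωE3⟩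
      simp only [hA, Set.mem_setOf_eq] at hωA
      simp only [hE1, Set.mem_compl_iff, Set.mem_setOf_eq, not_exists] at hωE1
      simp only [hE2, Set.mem_compl_iff, Set.mem_setOf_eq, not_le] at hωE2
      simp only [hE3, Set.mem_compl_iff, Set.mem_setOf_eq, not_le] at hωE3
      have hXb : ∀ j, j < k → X j ω < b := by
        intro j hj
        by_contra hcon
        exact hωE1 j ⟨hj, not_lt.mp hcon⟩
      -- the three index sets
      set Dr := (range k).filter (fun j => δ/4 ≤ a μ ℱ X b j ω) with hDr
      set Tl := (range k).filter (fun j => δ/4 ≤ hh μ ℱ X b j ω) with hTl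
      set Vr := (range k).filter (fun j => δ/2 ≤ ww μ ℱ X b j ω) with hVr
      have hcover : range k ⊆ Dr ∪ Tl ∪ Vr := by
        intro j hj
        have hjk := Finset.mem_range.mp hj
        rcases htri j ⟨hωA j hjk, hXb j hjk⟩ with h | h | h
        · exact Finset.mem_union_left _ (Finset.mem_union_left _ (Finset.mem_filter.mpr ⟨hj, h⟩))
        · exact Finset.mem_union_left _ (Finset.mem_union_right _ (Finset.mem_filter.mpr ⟨hj, h⟩))
        · exact Finset.mem_union_right _ (Finset.mem_filter.mpr ⟨hj, h⟩)
      have hcard : (k:ℝ) ≤ (Dr.card : ℝ) + Tl.card + Vr.card := by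
        have h5 : k ≤ Dr.card + Tl.card + Vr.card := by
          calc k = (range k).card := (Finset.card_range k).symm
            _ ≤ (Dr ∪ Tl ∪ Vr).card := Finset.card_le_card hcover
            _ ≤ (Dr ∪ Tl).card + Vr.card := Finset.card_union_le _ _
            _ ≤ Dr.card + Tl.card + Vr.card :=
                add_le_add_left (Finset.card_union_le _ _) _
        exact_mod_cast h5
      -- drift count
      have hDrb : (Dr.card : ℝ) * (δ/4) ≤ b := by
        calc (Dr.card : ℝ) * (δ/4) ≤ ∑ j ∈ Dr, a μ ℱ X b j ω := by
              have := Finset.card_nsmul_le_sum Dr (fun j => a μ ℱ X b j ω) (δ/4)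
                (fun j hj => (Finset.mem_filter.mp hj).2)
              simpa [nsmul_eq_mul] using this
          _ ≤ ∑ j ∈ range k, a μ ℱ X b j ω :=
              Finset.sum_le_sum_of_subset_of_nonneg (Finset.filter_subset _ _)
                (fun j _ _ => (ha j).1)
          _ ≤ b := le_of_lt hωE2
      -- tail count
      have hTlb : (Tl.card : ℝ) * (δ/4) ≤ (k:ℝ)*δ/12 := by
        calc (Tl.card : ℝ) * (δ/4) ≤ ∑ j ∈ Tl, hh μ ℱ X b j ω := by
              have := Finset.card_nsmul_le_sum Tl (fun j => hh μ ℱ X b j ω) (δ/4)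
                (fun j hj => (Finset.mem_filter.mp hj).2)
              simpa [nsmul_eq_mul] using this
          _ = ∑ j ∈ Tl, (if X j ω < b then (1:ℝ) else 0) * hh μ ℱ X b j ω := by
              refine Finset.sum_congr rfl (fun j hj => ?_)
              have hjk := Finset.mem_range.mp (Finset.mem_filter.mp hj).1
              rw [if_pos (hXb j hjk), one_mul]
          _ ≤ ∑ j ∈ range k, (if X j ω < b then (1:ℝ) else 0) * hh μ ℱ X b j ω := by
              refine Finset.sum_le_sum_of_subset_of_nonneg (Finset.filter_subset _ _)
                (fun j _ _ => ?_)
              by_cases hc : X j ω < b <;> simp [hc, hhh j]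
          _ ≤ (k:ℝ)*δ/12 := le_of_lt hωE3
      -- variance count
      have hVrb : (k:ℝ)/3 ≤ (Vr.card : ℝ) := by
        have hd : (Dr.card : ℝ) ≤ (k:ℝ)/3 := by
          have h6 : (Dr.card : ℝ) * δ ≤ 4 * b := by linarith
          nlinarith
        have ht : (Tl.card : ℝ) ≤ (k:ℝ)/3 := by nlinarith
        linarith
      -- conclude
      have hg1 : ∀ j ∈ Vr, g μ ℱ X b j ω = 1 := by
        intro j hj
        have hjk := Finset.mem_range.mp (Finset.mem_filter.mp hj).1
        rw [gprop]
        rw [if_pos]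
        refine le_of_lt (lt_of_le_of_lt ?_ hωE2)
        refine Finset.sum_le_sum_of_subset_of_nonneg ?_ (fun i _ _ => (ha i).1)
        exact Finset.range_subset_range.mpr (by omega)
      calc (k:ℝ)*δ^2/12 = ((k:ℝ)/3) * ((δ/2)^2) := by ring
        _ ≤ (Vr.card : ℝ) * ((δ/2)^2) := by nlinarith [sq_nonneg (δ/2)]
        _ ≤ ∑ j ∈ Vr, g μ ℱ X b j ω * (ww μ ℱ X b j ω)^2 := by
            have hstep : ∀ j ∈ Vr, (δ/2)^2 ≤ g μ ℱ X b j ω * (ww μ ℱ X b j ω)^2 := by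
              intro j hj
              rw [hg1 j hj, one_mul]
              have hwj := (Finset.mem_filter.mp hj).2
              have hw0 := (hww j).1
              nlinarith
            have := Finset.card_nsmul_le_sum Vr
              (fun j => g μ ℱ X b j ω * (ww μ ℱ X b j ω)^2) ((δ/2)^2) hstep
            simpa [nsmul_eq_mul] using this
        _ ≤ ∑ j ∈ range k, g μ ℱ X b j ω * (ww μ ℱ X b j ω)^2 := by
            refine Finset.sum_le_sum_of_subset_of_nonneg (Finset.filter_subset _ _)
              (fun j _ _ => mul_nonneg (g_01 j ω).1 (sq_nonneg _))
    -- Markov-type step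
    have hgw_int : ∀ j, Integrable (fun ω => g μ ℱ X b j ω * (ww μ ℱ X b j ω)^2) μ := by
      intro j
      refine bd_int hsup hnonneg hb ((g_m0 hsup hnonneg hb j).mul
        ((ww_m0 hsup hnonneg hb j).pow measurable_const)) (C := b^2) ?_
      filter_upwards [ww_bdd_ae hsup hnonneg hb j] with ω ⟨h2a, h2b⟩
      have hg := g_01 (μ := μ) (ℱ := ℱ) (X := X) (b := b) j ω
      rw [abs_mul, abs_of_nonneg hg.1, abs_of_nonneg (sq_nonneg _)]
      calc g μ ℱ X b j ω * (ww μ ℱ X b j ω)^2 ≤ (ww μ ℱ X b j ω)^2 :=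
            mul_le_of_le_one_left (sq_nonneg _) hg.2
        _ ≤ b^2 := pow_le_pow_left₀ h2a h2b 2
    have hSum_int : Integrable (fun ω => ∑ j ∈ range k, g μ ℱ X b j ω * (ww μ ℱ X b j ω)^2) μ :=
      integrable_finset_sum _ (fun j _ => hgw_int j)
    have hmark : ((k:ℝ)*δ^2/12) * (μ B).toReal ≤ 4*b^2 := by
      have hind : ∫ ω, B.indicator (fun _ => (k:ℝ)*δ^2/12) ω ∂μ =
          ((k:ℝ)*δ^2/12) * (μ B).toReal := by
        rw [integral_indicator hBm, setIntegral_const, smul_eq_mul, mul_comm, measureReal_def]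
      have hmono : ∫ ω, B.indicator (fun _ => (k:ℝ)*δ^2/12) ω ∂μ ≤
          ∫ ω, (∑ j ∈ range k, g μ ℱ X b j ω * (ww μ ℱ X b j ω)^2) ∂μ := by
        refine integral_mono_ae ((integrable_const _).indicator hBm) hSum_int ?_
        filter_upwards [hcount] with ω hω
        by_cases hωB : ω ∈ B
        · rw [Set.indicator_of_mem hωB]; exact hω hωB
        · rw [Set.indicator_of_notMem hωB]
          exact Finset.sum_nonneg (fun j _ => mul_nonneg (g_01 j ω).1 (sq_nonneg _))
      have hvar : ∫ ω, (∑ j ∈ range k, g μ ℱ X b j ω * (ww μ ℱ X b j ω)^2) ∂μ ≤ 4*b^2 := by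
        rw [integral_finset_sum _ (fun j _ => hgw_int j)]
        exact var_sum hsup hnonneg hb k
      linarith [hind, hmono, hvar]
    have hkδ2 : 0 < (k:ℝ)*δ^2 := by positivity
    rw [le_div_iff₀ hkδ2]
    calc (μ B).toReal * ((k:ℝ)*δ^2) = ((k:ℝ)*δ^2/12 * (μ B).toReal) * 12 := by ring
      _ ≤ (4*b^2) * 12 := by linarith
      _ = 48*b^2 := by ring
  calc (μ A).toReal ≤ (μ E1).toReal + (μ E2).toReal + (μ E3).toReal + (μ B).toReal := hAle
    _ ≤ x₀/b + x₀/b + 12*x₀/((k:ℝ)*δ) + 48*b^2/((k:ℝ)*δ^2) := by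
        exact add_le_add (add_le_add (add_le_add hb1 hb2) hb3) hb4
    _ = 2*x₀/b + 12*x₀/(k*δ) + 48*b^2/(k*δ^2) := by ring

end GSAT

open MeasureTheory ProbabilityTheory

/-- **General (not necessarily difference-bounded) supermartingales terminate a.s.
with `O(k^{−1/6})` tail bound.**
`P(Z_Γ < ∞) = μ {ω | ∃ n, X n ω ≤ 0}` and `P(Z_Γ ≥ k) = μ {ω | ∀ n < k, 0 < X n ω}`. -/
theorem general_supermartingale_as_termination
    {Ω : Type*} {m0 : MeasurableSpace Ω} {μ : Measure Ω} [IsProbabilityMeasure μ]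
    (ℱ : Filtration ℕ m0) (X : ℕ → Ω → ℝ)
    (hsup : Supermartingale X ℱ μ)
    (x₀ : ℝ) (hX0 : ∀ᵐ ω ∂μ, X 0 ω = x₀)
    (hnonneg : ∀ n ω, 0 ≤ X n ω)
    (habsorb : ∀ n ω, X n ω = 0 → X (n + 1) ω = 0)
    (δ : ℝ) (hδ : 0 < δ)
    (hLBCAD : ∀ n : ℕ, ∀ᵐ ω ∂μ,
      0 < X n ω → δ ≤ (μ[fun ω' => |X (n + 1) ω' - X n ω'| | ℱ n]) ω) :
    μ {ω | ∃ n : ℕ, X n ω ≤ 0} = 1 ∧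
      ∃ C > (0 : ℝ), ∃ K : ℕ, ∀ k : ℕ, K ≤ k →
        (μ {ω | ∀ n < k, 0 < X n ω}).toReal ≤ C * (k : ℝ) ^ (-(1 / 6) : ℝ) := by
  classical
  have hXM : ∀ n, Measurable (X n) := fun n =>
    ((hsup.stronglyMeasurable n).mono (ℱ.le n)).measurable
  have hx0nn : 0 ≤ x₀ := by
    have hne : (MeasureTheory.ae μ).NeBot := ae_neBot.mpr (IsProbabilityMeasure.ne_zero μ)
    obtain ⟨ω, hω⟩ := hX0.exists
    rw [← hω]; exact hnonneg 0 ω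
  set C : ℝ := 2*x₀ + 12*x₀/δ + 48/δ^2 + 1 with hCdef
  have hCpos : 0 < C := by
    have h1 : 0 ≤ 2*x₀ := by linarith
    have h2 : 0 ≤ 12*x₀/δ := div_nonneg (by linarith) hδ.le
    have h3 : 0 < 48/δ^2 := by positivity
    rw [hCdef]; linarith
  set r : ℝ := max 1 (12/δ) with hrdef
  have hr1 : (1:ℝ) ≤ r := le_max_left _ _
  set K : ℕ := ⌈r ^ ((3:ℝ)/2)⌉₊ + 1 with hKdef
  -- the key tail estimate
  have key : ∀ k : ℕ, K ≤ k →
      (μ {ω | ∀ n < k, 0 < X n ω}).toReal ≤ C * (k : ℝ) ^ (-(1 / 6) : ℝ) := by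
    intro k hk
    have hk1 : 1 ≤ k := le_trans (by omega) hk
    have hkR : (1:ℝ) ≤ (k:ℝ) := by exact_mod_cast hk1
    have hkpos : (0:ℝ) < (k:ℝ) := by linarith
    set b : ℝ := (k:ℝ) ^ ((1:ℝ)/3) with hbdef
    have hbpos : 0 < b := Real.rpow_pos_of_pos hkpos _
    have hkr : r ^ ((3:ℝ)/2) ≤ (k:ℝ) := by
      have h1 : (⌈r ^ ((3:ℝ)/2)⌉₊ : ℝ) ≤ (k:ℝ) := by
        have : ⌈r ^ ((3:ℝ)/2)⌉₊ ≤ k := by omega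
        exact_mod_cast this
      exact le_trans (Nat.le_ceil _) h1
    have h23 : 12/δ ≤ (k:ℝ) ^ ((2:ℝ)/3) := by
      have hrnn : (0:ℝ) ≤ r := by linarith
      have hid : (r ^ ((3:ℝ)/2)) ^ ((2:ℝ)/3) = r := by
        rw [← Real.rpow_mul hrnn]
        norm_num
      calc 12/δ ≤ r := le_max_right _ _
        _ = (r ^ ((3:ℝ)/2)) ^ ((2:ℝ)/3) := hid.symm
        _ ≤ (k:ℝ) ^ ((2:ℝ)/3) :=
            Real.rpow_le_rpow (Real.rpow_nonneg hrnn _) hkr (by norm_num)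
    have hcond : 12 * b ≤ (k:ℝ) * δ := by
      have h2 : 12 ≤ δ * (k:ℝ)^((2:ℝ)/3) := by
        rw [div_le_iff₀ hδ] at h23
        linarith
      calc 12 * b ≤ (δ * (k:ℝ)^((2:ℝ)/3)) * (k:ℝ)^((1:ℝ)/3) :=
            mul_le_mul_of_nonneg_right h2 (Real.rpow_nonneg hkpos.le _)
        _ = δ * ((k:ℝ)^((2:ℝ)/3) * (k:ℝ)^((1:ℝ)/3)) := by ring
        _ = δ * (k:ℝ) := by
            rw [← Real.rpow_add hkpos]
            norm_num
        _ = (k:ℝ) * δ := mul_comm _ _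
    have hTB := GSAT.tail_bound hsup x₀ hX0 hnonneg δ hδ hLBCAD hbpos k hk1 hcond
    -- rpow manipulations
    have hbinv : x₀/b ≤ x₀ * (k:ℝ)^(-(1/3):ℝ) := by
      rw [Real.rpow_neg hkpos.le, div_eq_mul_inv]
    have e1 : 2*x₀/b = (2*x₀) * (k:ℝ)^(-(1/3):ℝ) := by
      rw [Real.rpow_neg hkpos.le, div_eq_mul_inv]
    have hkinv : (k:ℝ)^(-(1:ℝ)) ≤ (k:ℝ)^(-(1/3):ℝ) :=
      Real.rpow_le_rpow_of_exponent_le hkR (by norm_num)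
    have e2 : 12*x₀/((k:ℝ)*δ) = (12*x₀/δ) * (k:ℝ)^(-(1:ℝ)) := by
      rw [Real.rpow_neg_one, div_eq_mul_inv, div_eq_mul_inv, mul_inv]
      ring
    have e3 : 48*b^2/((k:ℝ)*δ^2) = (48/δ^2) * (k:ℝ)^(-(1/3):ℝ) := by
      have hb2 : b^2 = (k:ℝ)^((2:ℝ)/3) := by
        rw [hbdef, sq, ← Real.rpow_add hkpos]
        norm_num
      rw [hb2, Real.rpow_neg hkpos.le]
      rw [show (1/3:ℝ) = 1 - (2:ℝ)/3 by norm_num, Real.rpow_sub hkpos, Real.rpow_one]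
      field_simp
    have hx13 : (0:ℝ) ≤ (k:ℝ)^(-(1/3):ℝ) := Real.rpow_nonneg hkpos.le _
    have hmid : 2*x₀/b + 12*x₀/((k:ℝ)*δ) + 48*b^2/((k:ℝ)*δ^2) ≤ C * (k:ℝ)^(-(1/3):ℝ) := by
      rw [e1, e2, e3]
      have h4 : (12*x₀/δ) * (k:ℝ)^(-(1:ℝ)) ≤ (12*x₀/δ) * (k:ℝ)^(-(1/3):ℝ) :=
        mul_le_mul_of_nonneg_left hkinv (div_nonneg (by linarith) hδ.le)
      have h5 : (2*x₀) * (k:ℝ)^(-(1/3):ℝ) + (12*x₀/δ) * (k:ℝ)^(-(1/3):ℝ)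
          + (48/δ^2) * (k:ℝ)^(-(1/3):ℝ) ≤ C * (k:ℝ)^(-(1/3):ℝ) := by
        have : (2*x₀) + 12*x₀/δ + 48/δ^2 ≤ C := by rw [hCdef]; linarith
        nlinarith
      linarith
    have hfin : C * (k:ℝ)^(-(1/3):ℝ) ≤ C * (k:ℝ)^(-(1/6):ℝ) :=
      mul_le_mul_of_nonneg_left
        (Real.rpow_le_rpow_of_exponent_le hkR (by norm_num)) hCpos.le
    calc (μ {ω | ∀ n < k, 0 < X n ω}).toReal
        ≤ 2*x₀/b + 12*x₀/((k:ℝ)*δ) + 48*b^2/((k:ℝ)*δ^2) := hTB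
      _ ≤ C * (k:ℝ)^(-(1/3):ℝ) := hmid
      _ ≤ C * (k:ℝ)^(-(1/6):ℝ) := hfin
  refine ⟨?_, C, hCpos, K, key⟩
  -- almost sure termination
  set N : Set Ω := {ω | ∀ n, 0 < X n ω} with hNdef
  have hNm : MeasurableSet N := by
    have : N = ⋂ n, {ω | 0 < X n ω} := by ext ω; simp [hNdef]
    rw [this]
    exact MeasurableSet.iInter (fun n => measurableSet_lt measurable_const (hXM n))
  have hN0 : μ N = 0 := by
    have hle : ∀ k:ℕ, K ≤ k → (μ N).toReal ≤ C * (k:ℝ)^(-(1/6):ℝ) := by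
      intro k hk
      refine le_trans ?_ (key k hk)
      refine ENNReal.toReal_mono (measure_ne_top μ _) (measure_mono ?_)
      intro ω hω n _
      exact hω n
    have htend : Tendsto (fun k:ℕ => C * (k:ℝ)^(-(1/6):ℝ)) atTop (nhds 0) := by
      have h := (tendsto_rpow_neg_atTop (y := (1/6:ℝ)) (by norm_num)).comp
        tendsto_natCast_atTop_atTop (α := ℕ)
      have h2 := h.const_mul C
      simpa using h2
    have hle0 : (μ N).toReal ≤ 0 :=
      ge_of_tendsto htend (Filter.eventually_atTop.2 ⟨K, hle⟩)
    have h3 : (μ N).toReal = 0 := le_antisymm hle0 ENNReal.toReal_nonneg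
    exact ((ENNReal.toReal_eq_zero_iff _).mp h3).resolve_right (measure_ne_top μ _)
  have hcompl : {ω | ∃ n : ℕ, X n ω ≤ 0} = Nᶜ := by
    ext ω
    simp [hNdef, not_forall, not_lt]
  rw [hcompl, measure_compl hNm (measure_ne_top μ _), hN0, measure_univ, tsub_zero]
end

section
/- Let {X_n}_{n∈ℕ₀} be a nonnegative supermartingale adapted to a filtration {F_n}_{n∈ℕ₀} satisfying the LBCAD condition with parameter δ ∈ (0,∞), and let M > 0. Define X'_n := min(X_n, M) for all n. Then {X'_n}_{n∈ℕ₀} is a supermartingale adapted to {F_n}, and for every n it holds a.s. that E[|X'_{n+1} − X'_n| | F_n] ≥ 1_{0 < X'_n < M} · δ/2. -/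
open MeasureTheory ProbabilityTheory

/-- **Truncation `X'_n := min(X_n, M)` of a nonnegative LBCAD supermartingale.**
The truncated process is again a supermartingale and a.s.
`E[|X'_{n+1} − X'_n| | F_n] ≥ 1_{0 < X'_n < M} · δ/2`. -/
theorem truncated_supermartingale_LBCAD
    {Ω : Type*} {m0 : MeasurableSpace Ω} {μ : Measure Ω} [IsProbabilityMeasure μ]
    (ℱ : Filtration ℕ m0) (X : ℕ → Ω → ℝ)
    (hsup : Supermartingale X ℱ μ)
    (hnonneg : ∀ n ω, 0 ≤ X n ω)
    (δ : ℝ) (hδ : 0 < δ)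
    (hLBCAD : ∀ n : ℕ, ∀ᵐ ω ∂μ,
      0 < X n ω → δ ≤ (μ[fun ω' => |X (n + 1) ω' - X n ω'| | ℱ n]) ω)
    (M : ℝ) (hM : 0 < M) :
    Supermartingale (fun n ω => min (X n ω) M) ℱ μ ∧
      ∀ n : ℕ, ∀ᵐ ω ∂μ,
        Set.indicator {ω' | 0 < min (X n ω') M ∧ min (X n ω') M < M}
            (fun _ => δ / 2) ω ≤
          (μ[fun ω' => |min (X (n + 1) ω') M - min (X n ω') M| | ℱ n]) ω := by
  have hXint : ∀ n, Integrable (X n) μ := hsup.integrable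
  have hYint : ∀ n, Integrable (fun ω => min (X n ω) M) μ := fun n =>
    (hXint n).inf (integrable_const M)
  have hYadp : StronglyAdapted ℱ fun n ω => min (X n ω) M := fun n => by
    have h1 : StronglyMeasurable[ℱ n] (X n) := hsup.stronglyAdapted n
    have h2 : StronglyMeasurable[ℱ n] (fun _ : Ω => M) :=
      @stronglyMeasurable_const Ω ℝ (ℱ n) _ M
    exact @StronglyMeasurable.inf Ω ℝ (X n) (fun _ => M) (ℱ n) _ _ _ h1 h2
  have hYsup : Supermartingale (fun n ω => min (X n ω) M) ℱ μ := by
    refine supermartingale_nat hYadp hYint fun n => ?_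
    have h1 : μ[fun ω => min (X (n + 1) ω) M | ℱ n] ≤ᵐ[μ] μ[X (n + 1) | ℱ n] :=
      condExp_mono (hYint (n + 1)) (hXint (n + 1))
        (Filter.Eventually.of_forall fun ω => min_le_left _ _)
    have h2 : μ[X (n + 1) | ℱ n] ≤ᵐ[μ] X n := hsup.2.1 n (n + 1) (Nat.le_succ n)
    have h3 : μ[fun ω => min (X (n + 1) ω) M | ℱ n] ≤ᵐ[μ] μ[fun _ => M | ℱ n] :=
      condExp_mono (hYint (n + 1)) (integrable_const M)
        (Filter.Eventually.of_forall fun ω => min_le_right _ _)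
    have h4 : μ[(fun _ => M : Ω → ℝ) | ℱ n] =ᵐ[μ] fun _ => M := Filter.EventuallyEq.of_eq (condExp_const (ℱ.le n) M)
    filter_upwards [h1, h2, h3, h4] with ω h1 h2 h3 h4
    exact le_min (h1.trans h2) (by simpa [h4] using h3)
  refine ⟨hYsup, fun n => ?_⟩
  -- notation
  set f : Ω → ℝ := fun ω => |X (n + 1) ω - X n ω| with hf
  set g : Ω → ℝ := fun ω' => |min (X (n + 1) ω') M - min (X n ω') M| with hg
  set h : Ω → ℝ := fun ω => max (X (n + 1) ω - X n ω) 0 with hh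
  set d : Ω → ℝ := fun ω => X (n + 1) ω - X n ω with hd
  have hfint : Integrable f μ := ((hXint (n + 1)).sub (hXint n)).abs
  have hgint : Integrable g μ := ((hYint (n + 1)).sub (hYint n)).abs
  have hdint : Integrable d μ := (hXint (n + 1)).sub (hXint n)
  have hhint : Integrable h μ := hdint.sup (integrable_const 0)
  set A : Set Ω := {ω | X n ω < M} with hA
  have hAmeas : MeasurableSet[ℱ n] A :=
    measurableSet_lt (hsup.stronglyAdapted n).measurable measurable_const
  have hAmeas0 : MeasurableSet A := ℱ.le n _ hAmeas
  -- pointwise key inequality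
  have hkey : ∀ ω, A.indicator f ω ≤ A.indicator g ω + A.indicator h ω := by
    intro ω
    by_cases hω : ω ∈ A
    · rw [Set.indicator_of_mem hω, Set.indicator_of_mem hω, Set.indicator_of_mem hω]
      have haM : X n ω < M := hω
      rcases le_total (X (n + 1) ω) M with hb | hb
      · simp only [hf, hg, hh, min_eq_left hb, min_eq_left haM.le]
        exact le_add_of_nonneg_right (le_max_right _ _)
      · simp only [hf, hg, hh, min_eq_right hb, min_eq_left haM.le]
        have h1 : (0:ℝ) ≤ X (n + 1) ω - X n ω := by linarith
        rw [abs_of_nonneg h1, abs_of_nonneg (by linarith : (0:ℝ) ≤ M - X n ω),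
          max_eq_left h1]
        linarith
    · rw [Set.indicator_of_notMem hω, Set.indicator_of_notMem hω,
        Set.indicator_of_notMem hω]
      norm_num
  have hc1 : μ[A.indicator f | ℱ n] ≤ᵐ[μ]
      μ[fun ω => A.indicator g ω + A.indicator h ω | ℱ n] :=
    condExp_mono (hfint.indicator hAmeas0)
      ((hgint.indicator hAmeas0).add (hhint.indicator hAmeas0))
      (Filter.Eventually.of_forall hkey)
  have hc2 : μ[fun ω => A.indicator g ω + A.indicator h ω | ℱ n] =ᵐ[μ]
      μ[A.indicator g | ℱ n] + μ[A.indicator h | ℱ n] :=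
    condExp_add (hgint.indicator hAmeas0) (hhint.indicator hAmeas0) _
  have hc3f : μ[A.indicator f | ℱ n] =ᵐ[μ] A.indicator (μ[f | ℱ n]) :=
    condExp_indicator hfint hAmeas
  have hc3g : μ[A.indicator g | ℱ n] =ᵐ[μ] A.indicator (μ[g | ℱ n]) :=
    condExp_indicator hgint hAmeas
  have hc3h : μ[A.indicator h | ℱ n] =ᵐ[μ] A.indicator (μ[h | ℱ n]) :=
    condExp_indicator hhint hAmeas
  -- bound on condexp of h
  have hhe : h = (2⁻¹ : ℝ) • (f + d) := by
    funext ω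
    simp only [hh, hf, hd, Pi.smul_apply, Pi.add_apply, smul_eq_mul]
    rcases le_total (X (n + 1) ω - X n ω) 0 with h0 | h0
    · rw [max_eq_right h0, abs_of_nonpos h0]; ring
    · rw [max_eq_left h0, abs_of_nonneg h0]; ring
  have hc4 : μ[h | ℱ n] ≤ᵐ[μ] fun ω => (μ[f | ℱ n]) ω / 2 := by
    have e1 : μ[h | ℱ n] =ᵐ[μ] (2⁻¹ : ℝ) • μ[f + d | ℱ n] := by
      rw [hhe]; exact condExp_smul _ _ _
    have e2 : μ[f + d | ℱ n] =ᵐ[μ] μ[f | ℱ n] + μ[d | ℱ n] := condExp_add hfint hdint _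
    have e3 : μ[d | ℱ n] =ᵐ[μ] μ[X (n + 1) | ℱ n] - μ[X n | ℱ n] :=
      condExp_sub (hXint (n + 1)) (hXint n) _
    have e4 : μ[X n | ℱ n] =ᵐ[μ] X n :=
      Filter.EventuallyEq.of_eq
      (condExp_of_stronglyMeasurable (ℱ.le n) (hsup.stronglyAdapted n) (hXint n))
    have e5 : μ[X (n + 1) | ℱ n] ≤ᵐ[μ] X n := hsup.2.1 n (n + 1) (Nat.le_succ n)
    filter_upwards [e1, e2, e3, e4, e5] with ω e1 e2 e3 e4 e5
    have : (μ[d | ℱ n]) ω ≤ 0 := by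
      rw [e3]; simp only [Pi.sub_apply]; rw [e4]; linarith
    rw [e1]
    simp only [Pi.smul_apply, smul_eq_mul]
    rw [e2]
    simp only [Pi.add_apply]
    linarith
  have hgnn : 0 ≤ᵐ[μ] μ[g | ℱ n] :=
    condExp_nonneg (Filter.Eventually.of_forall fun ω => abs_nonneg _)
  filter_upwards [hc1, hc2, hc3f, hc3g, hc3h, hc4, hgnn, hLBCAD n]
    with ω hc1 hc2 hc3f hc3g hc3h hc4 hgnn hLB
  by_cases hωB : ω ∈ {ω' | 0 < min (X n ω') M ∧ min (X n ω') M < M}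
  · rw [Set.indicator_of_mem hωB]
    obtain ⟨hpos, hlt⟩ := hωB
    have hXlt : X n ω < M := by
      rcases le_total (X n ω) M with h1 | h1
      · rcases h1.lt_or_eq with h2 | h2
        · exact h2
        · rw [min_eq_left h1, h2] at hlt; exact absurd hlt (lt_irrefl M)
      · rw [min_eq_right h1] at hlt; exact absurd hlt (lt_irrefl M)
    have hXpos : 0 < X n ω := by
      rw [min_eq_left hXlt.le] at hpos; exact hpos
    have hωA : ω ∈ A := hXlt
    have hδf : δ ≤ (μ[f | ℱ n]) ω := hLB hXpos
    have key : (μ[f | ℱ n]) ω ≤ (μ[g | ℱ n]) ω + (μ[h | ℱ n]) ω := by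
      have := hc1.trans_eq hc2
      rw [hc3f, Set.indicator_of_mem hωA] at this
      rw [Pi.add_apply, hc3g, hc3h, Set.indicator_of_mem hωA,
        Set.indicator_of_mem hωA] at this
      exact this
    have : (μ[h | ℱ n]) ω ≤ (μ[f | ℱ n]) ω / 2 := hc4
    linarith
  · rw [Set.indicator_of_notMem hωB]
    exact hgnn
end

section
/- Let Γ = {X_n}_{n∈ℕ₀} be a supermartingale adapted to a filtration {F_n}_{n∈ℕ₀} such that X_0 is a.s. constant with X_0 > 0, for all n and ω one has X_n(ω) ≥ 0 and X_n(ω) = 0 implies X_{n+1}(ω) = 0, and Γ satisfies the LBCAD condition with parameter δ ∈ (0,∞). Fix c ∈ (0,1) with Σ_{j=3}^∞ c^{j−2}/j! ≤ δ²/16. Then there exists a constant C > 0 (depending only on E(X_0) and δ) such that for every sufficiently large M > E(X_0), the stopping time R_M defined by R_M(ω) := min{n : X_n(ω) ≤ 0 or X_n(ω) ≥ M} (min ∅ := ∞) satisfies P(R_M < ∞) = 1 and P(R_M ≥ k) ≤ C/√k for all natural numbers k ≥ M⁶/c². -/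
open MeasureTheory ProbabilityTheory

private lemma my_cs {Ω : Type*} {m0 : MeasurableSpace Ω} (ν : Measure Ω) [IsFiniteMeasure ν]
    {f : Ω → ℝ} (hf : Integrable f ν) (hf2 : Integrable (fun ω => f ω ^ 2) ν) :
    (∫ ω, f ω ∂ν) ^ 2 ≤ (ν Set.univ).toReal * ∫ ω, f ω ^ 2 ∂ν := by
  set T := (ν Set.univ).toReal with hT
  set S := ∫ ω, f ω ∂ν with hS
  have hTnn : 0 ≤ T := ENNReal.toReal_nonneg
  rcases eq_or_lt_of_le hTnn with h0 | hTpos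
  · have hν : ν = 0 := by
      have := (ENNReal.toReal_eq_zero_iff _).mp h0.symm
      rcases this with h | h
      · exact Measure.measure_univ_eq_zero.mp h
      · exact absurd h (measure_ne_top ν _)
    subst hν
    simp [hS]
  · have key : 0 ≤ ∫ ω, (T * f ω - S) ^ 2 ∂ν := integral_nonneg fun ω => sq_nonneg _
    have hint1 : Integrable (fun ω => T ^ 2 * f ω ^ 2 - 2 * T * S * f ω) ν :=
      (hf2.const_mul _).sub (hf.const_mul _)
    have expand : ∫ ω, (T * f ω - S) ^ 2 ∂ν
        = T ^ 2 * (∫ ω, f ω ^ 2 ∂ν) - 2 * T * S * S + S ^ 2 * T := by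
      have hpt : ∀ ω, (T * f ω - S) ^ 2 = (T ^ 2 * f ω ^ 2 - 2 * T * S * f ω) + S ^ 2 := by
        intro ω; ring
      simp_rw [hpt]
      rw [integral_add hint1 (integrable_const _),
        integral_sub (hf2.const_mul _) (hf.const_mul _), integral_const_mul, integral_const_mul,
        integral_const, smul_eq_mul, measureReal_def]
      ring
    rw [expand] at key
    nlinarith [sq_nonneg S, integral_nonneg (f := fun ω => f ω ^ 2) (fun ω => sq_nonneg (f ω)) (μ := ν)]

set_option maxHeartbeats 2000000 in
/-- **The two-sided exit time `R_M` of a LBCAD supermartingale is a.s. finite,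
with a `C/√k` tail bound for `k ≥ M⁶/c²`.**
`R_M(ω) = min {n | X n ω ≤ 0 ∨ X n ω ≥ M}`; hence
`P(R_M < ∞) = μ {ω | ∃ n, X n ω ≤ 0 ∨ M ≤ X n ω}` and
`P(R_M ≥ k) = μ {ω | ∀ n < k, 0 < X n ω ∧ X n ω < M}`.
The sum `Σ_{j=3}^∞ c^{j−2}/j!` is written as `Σ'_{i:ℕ} c^{i+1}/(i+3)!`. -/
theorem exit_time_tail_bound
    {Ω : Type*} {m0 : MeasurableSpace Ω} {μ : Measure Ω} [IsProbabilityMeasure μ]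
    (ℱ : Filtration ℕ m0) (X : ℕ → Ω → ℝ)
    (hsup : Supermartingale X ℱ μ)
    (x₀ : ℝ) (hx₀pos : 0 < x₀) (hX0 : ∀ᵐ ω ∂μ, X 0 ω = x₀)
    (hnonneg : ∀ n ω, 0 ≤ X n ω)
    (habsorb : ∀ n ω, X n ω = 0 → X (n + 1) ω = 0)
    (δ : ℝ) (hδ : 0 < δ)
    (hLBCAD : ∀ n : ℕ, ∀ᵐ ω ∂μ,
      0 < X n ω → δ ≤ (μ[fun ω' => |X (n + 1) ω' - X n ω'| | ℱ n]) ω)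
    (c : ℝ) (hc : c ∈ Set.Ioo (0 : ℝ) 1)
    (hcsum : ∑' i : ℕ, c ^ (i + 1) / (Nat.factorial (i + 3) : ℝ) ≤ δ ^ 2 / 16) :
    ∃ C > (0 : ℝ), ∃ M₀ : ℝ, ∀ M : ℝ, M₀ ≤ M → (∫ ω, X 0 ω ∂μ) < M →
      μ {ω | ∃ n : ℕ, X n ω ≤ 0 ∨ M ≤ X n ω} = 1 ∧
        ∀ k : ℕ, M ^ 6 / c ^ 2 ≤ (k : ℝ) →
          (μ {ω | ∀ n < k, 0 < X n ω ∧ X n ω < M}).toReal ≤ C / Real.sqrt k := by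
  obtain ⟨hc0, hc1⟩ := hc
  refine ⟨12 / δ ^ 2, by positivity, 1, fun M hM _hEM => ?_⟩
  have hM0 : (0:ℝ) < M := lt_of_lt_of_le one_pos hM
  -- the capped process Y n = min (X n) M
  set Y : ℕ → Ω → ℝ := fun n ω => min (X n ω) M with hYdef
  have hY0 : ∀ n ω, 0 ≤ Y n ω := fun n ω => le_min (hnonneg n ω) hM0.le
  have hYle : ∀ n ω, Y n ω ≤ M := fun n ω => min_le_right _ _
  have hYleX : ∀ n ω, Y n ω ≤ X n ω := fun n ω => min_le_left _ _
  have hYsm : ∀ n, StronglyMeasurable[ℱ n] (Y n) := fun n =>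
    (continuous_id.min continuous_const).comp_stronglyMeasurable (hsup.stronglyAdapted n)
  have hYsm0 : ∀ n, AEStronglyMeasurable (Y n) μ := fun n =>
    ((hYsm n).mono (ℱ.le n)).aestronglyMeasurable
  have hYbdd : ∀ n, ∃ C, ∀ ω, ‖Y n ω‖ ≤ C := fun n =>
    ⟨M, fun ω => by rw [Real.norm_eq_abs, abs_of_nonneg (hY0 n ω)]; exact hYle n ω⟩
  have hYint : ∀ n, Integrable (Y n) μ := fun n =>
    Integrable.mono' (integrable_const M) (hYsm0 n)
      (ae_of_all _ fun ω => by rw [Real.norm_eq_abs, abs_of_nonneg (hY0 n ω)]; exact hYle n ω)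
  have hYsq_int : ∀ n, Integrable (fun ω => Y n ω ^ 2) μ := fun n => by
    have := (hYint n).bdd_mul (hYsm0 n) (ae_of_all _ (hYbdd n).choose_spec)
    simpa [pow_two] using this
  -- the events E k
  set E : ℕ → Set Ω := fun k => {ω | ∀ n < k, 0 < X n ω ∧ X n ω < M} with hEdef
  have hEanti : ∀ {j k : ℕ}, j ≤ k → E k ⊆ E j := fun hjk ω hω n hn =>
    hω n (lt_of_lt_of_le hn hjk)
  have hEmeasF : ∀ n : ℕ, MeasurableSet[ℱ n] (E (n+1)) := by
    intro n
    have hrw : E (n+1) = ⋂ m, ⋂ (_ : m < n+1), ({ω | 0 < X m ω} ∩ {ω | X m ω < M}) := by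
      ext ω; simp [hEdef, Set.mem_iInter]
    rw [hrw]
    refine MeasurableSet.iInter fun m => MeasurableSet.iInter fun hm => ?_
    have hsm : Measurable[ℱ n] (X m) :=
      ((hsup.stronglyAdapted m).mono (ℱ.mono (Nat.lt_succ_iff.mp hm))).measurable
    exact (measurableSet_lt measurable_const hsm).inter (measurableSet_lt hsm measurable_const)
  have hEmeas : ∀ k : ℕ, MeasurableSet (E k) := by
    intro k
    have hrw : E k = ⋂ m, ⋂ (_ : m < k), ({ω | 0 < X m ω} ∩ {ω | X m ω < M}) := by
      ext ω; simp [hEdef, Set.mem_iInter]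
    rw [hrw]
    refine MeasurableSet.iInter fun m => MeasurableSet.iInter fun _ => ?_
    have hsm : Measurable (X m) := ((hsup.stronglyAdapted m).mono (ℱ.le m)).measurable
    exact (measurableSet_lt measurable_const hsm).inter (measurableSet_lt hsm measurable_const)
  set b : ℕ → ℝ := fun n => ∫ ω, Y n ω ∂μ with hbdef
  set q : ℕ → ℝ := fun n => ∫ ω, Y n ω ^ 2 ∂μ with hqdef
  set p : ℕ → ℝ := fun k => (μ (E k)).toReal with hpdef
  have hpnn : ∀ k, 0 ≤ p k := fun k => ENNReal.toReal_nonneg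
  have hpmono : ∀ {j k : ℕ}, j ≤ k → p k ≤ p j := fun {j k} h =>
    ENNReal.toReal_mono (measure_ne_top μ _) (measure_mono (hEanti h))
  -- the one-step inequality
  have step : ∀ n : ℕ, q n + 2*M*(b (n+1) - b n) + (δ/2)^2 * p (n+1) ≤ q (n+1) := by
    intro n
    set A := E (n+1) with hAdef
    have hAm0 : MeasurableSet A := hEmeas (n+1)
    set D : Ω → ℝ := fun ω => Y (n+1) ω - Y n ω with hDdef
    have hDint : Integrable D μ := (hYint (n+1)).sub (hYint n)
    have hDabs_int : Integrable (fun ω => |D ω|) μ := hDint.abs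
    have hDsq_int : Integrable (fun ω => D ω ^ 2) μ := by
      have hb : ∃ C, ∀ ω, ‖D ω‖ ≤ C := by
        refine ⟨M, fun ω => ?_⟩
        have hDrfl : D ω = Y (n+1) ω - Y n ω := rfl
        rw [Real.norm_eq_abs, abs_le, hDrfl]
        constructor <;> nlinarith [hY0 n ω, hY0 (n+1) ω, hYle n ω, hYle (n+1) ω]
      have := hDint.bdd_mul hDint.aestronglyMeasurable (ae_of_all _ hb.choose_spec)
      simpa [pow_two] using this
    -- (i) the one-step supermartingale inequality for Y
    have hWle : μ[Y (n+1)|ℱ n] ≤ᵐ[μ] Y n := by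
      have h1 : μ[Y (n+1)|ℱ n] ≤ᵐ[μ] μ[X (n+1)|ℱ n] :=
        condExp_mono (hYint _) (hsup.integrable _) (ae_of_all _ fun ω => hYleX (n+1) ω)
      have h2 := hsup.condExp_ae_le (Nat.le_succ n)
      have h3 : μ[Y (n+1)|ℱ n] ≤ᵐ[μ] fun _ => M := by
        have := condExp_mono (m := ℱ n) (hYint (n+1)) (integrable_const M)
          (ae_of_all _ fun ω => hYle (n+1) ω)
        rwa [condExp_const (ℱ.le n)] at this
      filter_upwards [h1, h2, h3] with ω e1 e2 e3
      exact le_min (e1.trans e2) e3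
    -- (ii) the cross term
    have hprod_int : Integrable (fun ω => Y n ω * Y (n+1) ω) μ :=
      (hYint (n+1)).bdd_mul (hYsm0 n) (ae_of_all _ (hYbdd n).choose_spec)
    have hpull : (fun ω => Y n ω * (μ[Y (n+1)|ℱ n]) ω)
        =ᵐ[μ] μ[fun ω => Y n ω * Y (n+1) ω|ℱ n] :=
      (condExp_mul_of_stronglyMeasurable_left (hYsm n) hprod_int (hYint (n+1))).symm
    have hcross : M * (b (n+1) - b n) ≤ (∫ ω, Y n ω * Y (n+1) ω ∂μ) - q n := by
      have hWint : Integrable (fun ω => (μ[Y (n+1)|ℱ n]) ω - Y n ω) μ :=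
        integrable_condExp.sub (hYint n)
      have hint2 : Integrable (fun ω => Y n ω * ((μ[Y (n+1)|ℱ n]) ω - Y n ω)) μ :=
        hWint.bdd_mul (hYsm0 n) (ae_of_all _ (hYbdd n).choose_spec)
      have hcondprod_int : Integrable (fun ω => Y n ω * (μ[Y (n+1)|ℱ n]) ω) μ :=
        integrable_condExp.bdd_mul (hYsm0 n) (ae_of_all _ (hYbdd n).choose_spec)
      have hmono : ∫ ω, M * ((μ[Y (n+1)|ℱ n]) ω - Y n ω) ∂μ
          ≤ ∫ ω, Y n ω * ((μ[Y (n+1)|ℱ n]) ω - Y n ω) ∂μ := by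
        refine integral_mono_ae (hWint.const_mul M) hint2 ?_
        filter_upwards [hWle] with ω hω
        have hw : (μ[Y (n+1)|ℱ n]) ω - Y n ω ≤ 0 := sub_nonpos.mpr hω
        nlinarith [hY0 n ω, hYle n ω]
      have hL : ∫ ω, M * ((μ[Y (n+1)|ℱ n]) ω - Y n ω) ∂μ = M * (b (n+1) - b n) := by
        rw [integral_const_mul, integral_sub integrable_condExp (hYint n),
          integral_condExp (ℱ.le n)]
      have hR : ∫ ω, Y n ω * ((μ[Y (n+1)|ℱ n]) ω - Y n ω) ∂μ
          = (∫ ω, Y n ω * Y (n+1) ω ∂μ) - q n := by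
        have e1 : ∀ ω, Y n ω * ((μ[Y (n+1)|ℱ n]) ω - Y n ω)
            = Y n ω * (μ[Y (n+1)|ℱ n]) ω - Y n ω ^ 2 := by intro ω; ring
        simp_rw [e1]
        rw [integral_sub hcondprod_int (hYsq_int n)]
        have : ∫ ω, Y n ω * (μ[Y (n+1)|ℱ n]) ω ∂μ = ∫ ω, Y n ω * Y (n+1) ω ∂μ := by
          rw [integral_congr_ae hpull, integral_condExp (ℱ.le n)]
        rw [this]
      linarith [hmono, hL.symm.le, hR.symm.le, hL.le, hR.le]
    -- (iii) lower bound for ∫_A |D|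
    have hAsub : (δ/2) * p (n+1) ≤ ∫ ω in A, |D ω| ∂μ := by
      set g : Ω → ℝ := fun ω => |X (n+1) ω - X n ω| - (X (n+1) ω - X n ω) with hgdef
      have habs_int : Integrable (fun ω' => |X (n+1) ω' - X n ω'|) μ :=
        ((hsup.integrable (n+1)).sub (hsup.integrable n)).abs
      have hXd_int : Integrable (fun ω' => X (n+1) ω' - X n ω') μ :=
        (hsup.integrable (n+1)).sub (hsup.integrable n)
      have hg_int : Integrable g μ := habs_int.sub hXd_int
      -- conditional drift is nonpositive
      have hdrift0 : μ[fun ω' => X (n+1) ω' - X n ω'|ℱ n] ≤ᵐ[μ] fun _ => 0 := by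
        have hXeq : μ[X n|ℱ n] = X n :=
          condExp_of_stronglyMeasurable (ℱ.le n) (hsup.stronglyAdapted n) (hsup.integrable n)
        have hsub := condExp_sub (m := ℱ n) (μ := μ) (hsup.integrable (n+1)) (hsup.integrable n)
        filter_upwards [hsub, hsup.condExp_ae_le (Nat.le_succ n)] with ω h1 h2
        have : (μ[X (n+1) - X n|ℱ n]) ω = (μ[X (n+1)|ℱ n]) ω - (μ[X n|ℱ n]) ω := h1
        simp only [hXeq] at this
        have hle : (μ[X (n+1) - X n|ℱ n]) ω ≤ 0 := by rw [this]; simpa using sub_nonpos.mpr h2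
        exact hle
      -- conditional expectation of g is at least δ on {0 < X n}
      have hcondg : μ[g|ℱ n] =ᵐ[μ]
          fun ω => (μ[fun ω' => |X (n+1) ω' - X n ω'| | ℱ n]) ω
            - (μ[fun ω' => X (n+1) ω' - X n ω'|ℱ n]) ω := by
        have := condExp_sub (m := ℱ n) (μ := μ) habs_int hXd_int
        filter_upwards [this] with ω h
        exact h
      have hdelta : ∀ᵐ ω ∂μ, ω ∈ A → δ ≤ (μ[g|ℱ n]) ω := by
        filter_upwards [hcondg, hdrift0, hLBCAD n] with ω h1 h2 h3
        intro hA
        have hXpos : 0 < X n ω := (hA n (Nat.lt_succ_self n)).1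
        have := h3 hXpos
        rw [h1]
        have h2' : (μ[fun ω' => X (n+1) ω' - X n ω'|ℱ n]) ω ≤ 0 := h2
        linarith
      have h1 : ∫ ω in A, δ ∂μ ≤ ∫ ω in A, (μ[g|ℱ n]) ω ∂μ := by
        refine setIntegral_mono_on_ae (integrableOn_const (measure_ne_top μ A))
          integrable_condExp.integrableOn hAm0 ?_
        exact hdelta
      rw [setIntegral_const, smul_eq_mul, measureReal_def] at h1
      have h2 : ∫ ω in A, (μ[g|ℱ n]) ω ∂μ = ∫ ω in A, g ω ∂μ :=
        setIntegral_condExp (ℱ.le n) hg_int (hEmeasF n)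
      have h3 : ∫ ω in A, g ω ∂μ ≤ ∫ ω in A, 2 * |D ω| ∂μ := by
        refine setIntegral_mono_on hg_int.integrableOn
          ((hDabs_int.const_mul 2).integrableOn) hAm0 ?_
        intro ω hω
        have hXn := hω n (Nat.lt_succ_self n)
        rcases le_total (X (n+1) ω) (X n ω) with h | h
        · have hy1 : Y (n+1) ω = X (n+1) ω := min_eq_left (h.trans hXn.2.le)
          have hy2 : Y n ω = X n ω := min_eq_left hXn.2.le
          have hDeq : |D ω| = X n ω - X (n+1) ω := by
            rw [hDdef]
            simp only [hy1, hy2]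
            rw [abs_of_nonpos (by linarith)]
            ring
          rw [hgdef]
          simp only []
          rw [hDeq, abs_of_nonpos (by linarith : X (n+1) ω - X n ω ≤ 0)]
          linarith
        · have hg0 : g ω ≤ 2 * (X (n+1) ω - X n ω) - (X (n+1) ω - X n ω) + 0 := by
            rw [hgdef]; simp only []
            rw [abs_of_nonneg (by linarith : (0:ℝ) ≤ X (n+1) ω - X n ω)]
            linarith
          have : g ω = 0 := by
            rw [hgdef]; simp only []
            rw [abs_of_nonneg (by linarith : (0:ℝ) ≤ X (n+1) ω - X n ω)]; ring
          rw [this]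
          positivity
      have h4 : ∫ ω in A, 2 * |D ω| ∂μ = 2 * ∫ ω in A, |D ω| ∂μ := by
        rw [integral_const_mul]
      have hp' : p (n+1) = (μ A).toReal := rfl
      rw [h2] at h1
      rw [h4] at h3
      rw [hp']
      linarith
    -- (iv) Cauchy–Schwarz on A
    have hCS : (∫ ω in A, |D ω| ∂μ) ^ 2 ≤ p (n+1) * ∫ ω in A, D ω ^ 2 ∂μ := by
      have h := my_cs (μ.restrict A) hDabs_int.restrict
        (by simpa [sq_abs] using (hDsq_int.restrict (s := A)))
      simpa [Measure.restrict_apply_univ, sq_abs] using h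
    -- (v) variance lower bound
    have hvar : (δ/2)^2 * p (n+1) ≤ ∫ ω, D ω ^ 2 ∂μ := by
      have h4 : ∫ ω in A, D ω ^ 2 ∂μ ≤ ∫ ω, D ω ^ 2 ∂μ :=
        setIntegral_le_integral hDsq_int (ae_of_all _ fun ω => sq_nonneg _)
      rcases eq_or_lt_of_le (hpnn (n+1)) with h0 | hpos
      · rw [← h0]
        simpa using integral_nonneg (f := fun ω => D ω ^ 2) (fun ω => sq_nonneg (D ω)) (μ := μ)
      · have hsq : ((δ/2) * p (n+1))^2 ≤ p (n+1) * ∫ ω in A, D ω ^ 2 ∂μ := by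
          refine le_trans ?_ hCS
          have hnn : 0 ≤ (δ/2) * p (n+1) := by positivity
          nlinarith [hAsub]
        nlinarith [h4, hpos]
    -- (vi) combine
    have hqid : q (n+1) = 2*(∫ ω, Y n ω * Y (n+1) ω ∂μ) - q n + ∫ ω, D ω ^ 2 ∂μ := by
      have e : (fun ω => Y (n+1) ω ^ 2)
          = fun ω => (2*(Y n ω * Y (n+1) ω) - Y n ω ^2) + D ω ^2 := by
        funext ω; rw [hDdef]; ring
      have h5 : q (n+1) = ∫ ω, ((2*(Y n ω * Y (n+1) ω) - Y n ω ^2) + D ω ^2) ∂μ := by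
        rw [hqdef]; exact integral_congr_ae (ae_of_all _ fun ω => congrFun e ω)
      have hint3 : Integrable (fun ω => 2*(Y n ω * Y (n+1) ω) - Y n ω ^2) μ :=
        (hprod_int.const_mul 2).sub (hYsq_int n)
      rw [h5, integral_add hint3 hDsq_int,
        integral_sub (hprod_int.const_mul 2) (hYsq_int n), integral_const_mul]
    linarith [hcross, hvar, hqid.le, hqid.symm.le]
  -- telescoping
  have tele : ∀ k : ℕ, q 0 + 2*M*(b k - b 0) + (δ/2)^2 * (∑ n ∈ Finset.range k, p (n+1)) ≤ q k := by
    intro k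
    induction k with
    | zero => simp
    | succ k ih =>
      have hs := step k
      rw [Finset.sum_range_succ]
      linarith
  have hsum_ge : ∀ k : ℕ, (k : ℝ) * p k ≤ ∑ n ∈ Finset.range k, p (n+1) := by
    intro k
    calc (k:ℝ) * p k = ∑ _n ∈ Finset.range k, p k := by
          rw [Finset.sum_const, Finset.card_range, nsmul_eq_mul]
      _ ≤ ∑ n ∈ Finset.range k, p (n+1) :=
          Finset.sum_le_sum fun n hn => hpmono (Finset.mem_range.mp hn)
  have hq_le : ∀ k, q k ≤ M^2 := by
    intro k
    have h := integral_mono (hYsq_int k) (integrable_const (M^2))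
      (fun ω => by nlinarith [hY0 k ω, hYle k ω])
    simpa using h
  have hq0 : 0 ≤ q 0 := integral_nonneg fun ω => sq_nonneg _
  have hb0 : b 0 ≤ M := by
    have := integral_mono (hYint 0) (integrable_const M) (fun ω => hYle 0 ω)
    simpa using this
  have hbk : ∀ k, 0 ≤ b k := fun k => integral_nonneg (hY0 k)
  have key : ∀ k : ℕ, (δ/2)^2 * ((k:ℝ) * p k) ≤ 3 * M^2 := by
    intro k
    have h1 := tele k
    have h2 := hsum_ge k
    have h3 : (δ/2)^2 * ((k:ℝ)*p k) ≤ (δ/2)^2 * ∑ n ∈ Finset.range k, p (n+1) :=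
      mul_le_mul_of_nonneg_left h2 (by positivity)
    nlinarith [hq_le k, hq0, hb0, hbk k, hM0]
  -- the tail bound
  have tail : ∀ k : ℕ, M^6/c^2 ≤ (k:ℝ) → p k ≤ (12/δ^2)/Real.sqrt k := by
    intro k hk
    have hM2 : (1:ℝ) ≤ M^2 := by nlinarith
    have hM3 : (1:ℝ) ≤ M^3 := by nlinarith
    have hM6 : (1:ℝ) ≤ M^6/c^2 := by
      rw [le_div_iff₀ (by positivity)]
      nlinarith
    have hk1 : (1:ℝ) ≤ k := le_trans hM6 hk
    have hkpos : (0:ℝ) < k := by linarith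
    have hsqrtk : Real.sqrt k * Real.sqrt k = k := Real.mul_self_sqrt hkpos.le
    have hsqrt_pos : 0 < Real.sqrt k := Real.sqrt_pos.mpr hkpos
    have hsqrt_ge : M^3/c ≤ Real.sqrt k := by
      have h1 : Real.sqrt (M^6/c^2) ≤ Real.sqrt k := Real.sqrt_le_sqrt hk
      have he : Real.sqrt (M^6/c^2) = M^3/c := by
        rw [show M^6/c^2 = (M^3/c)^2 by rw [div_pow]; ring_nf]
        exact Real.sqrt_sq (by positivity)
      linarith
    have hpk := key k
    have hppos := hpnn k
    rw [div_div, le_div_iff₀ (by positivity : (0:ℝ) < δ^2 * Real.sqrt k)]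
    have h3 : M^2 ≤ Real.sqrt k := by
      have h : M^2 ≤ M^3/c := by rw [le_div_iff₀ hc0]; nlinarith [hc1.le]
      linarith
    have h4 : (p k * (δ^2 * Real.sqrt k)) * Real.sqrt k ≤ 12 * Real.sqrt k := by
      calc (p k * (δ^2*Real.sqrt k)) * Real.sqrt k
            = δ^2*((Real.sqrt k * Real.sqrt k)*p k) := by ring
        _ = δ^2*((k:ℝ)*p k) := by rw [hsqrtk]
        _ ≤ 12*M^2 := by nlinarith [hpk]
        _ ≤ 12*Real.sqrt k := by linarith [h3]
    exact le_of_mul_le_mul_right h4 hsqrt_pos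
  -- almost sure exit
  have hSmeas : MeasurableSet {ω | ∃ n : ℕ, X n ω ≤ 0 ∨ M ≤ X n ω} := by
    have hrw : {ω | ∃ n : ℕ, X n ω ≤ 0 ∨ M ≤ X n ω}
        = ⋃ n, ({ω | X n ω ≤ 0} ∪ {ω | M ≤ X n ω}) := by
      ext ω; simp [Set.mem_iUnion]
    rw [hrw]
    refine MeasurableSet.iUnion fun n => MeasurableSet.union ?_ ?_
    · exact measurableSet_le ((hsup.stronglyAdapted n).mono (ℱ.le n)).measurable measurable_const
    · exact measurableSet_le measurable_const ((hsup.stronglyAdapted n).mono (ℱ.le n)).measurable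
  have hcompl : ∀ k : ℕ, {ω | ∃ n : ℕ, X n ω ≤ 0 ∨ M ≤ X n ω}ᶜ ⊆ E k := by
    intro k ω hω n _
    simp only [Set.mem_compl_iff, Set.mem_setOf_eq, not_exists, not_or, not_le] at hω
    exact hω n
  have hmain : μ {ω | ∃ n : ℕ, X n ω ≤ 0 ∨ M ≤ X n ω} = 1 := by
    have hle : ∀ k : ℕ, 1 ≤ k → (μ {ω | ∃ n : ℕ, X n ω ≤ 0 ∨ M ≤ X n ω}ᶜ).toReal
        ≤ (12*M^2/δ^2) / k := by
      intro k hk1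
      have hkpos : (0:ℝ) < k := by exact_mod_cast hk1
      have hμle : (μ {ω | ∃ n : ℕ, X n ω ≤ 0 ∨ M ≤ X n ω}ᶜ).toReal ≤ p k :=
        ENNReal.toReal_mono (measure_ne_top μ _) (measure_mono (hcompl k))
      have hpk := key k
      have : p k ≤ 12*M^2/δ^2/k := by
        rw [div_div, le_div_iff₀ (by positivity)]
        nlinarith [hpk, hpnn k]
      linarith
    have htend := tendsto_const_div_atTop_nhds_zero_nat (12*M^2/δ^2)
    have h0 : (μ {ω | ∃ n : ℕ, X n ω ≤ 0 ∨ M ≤ X n ω}ᶜ).toReal ≤ 0 :=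
      ge_of_tendsto htend (Filter.eventually_atTop.mpr ⟨1, hle⟩)
    have hz : (μ {ω | ∃ n : ℕ, X n ω ≤ 0 ∨ M ≤ X n ω}ᶜ).toReal = 0 :=
      le_antisymm h0 ENNReal.toReal_nonneg
    have hzero : μ {ω | ∃ n : ℕ, X n ω ≤ 0 ∨ M ≤ X n ω}ᶜ = 0 := by
      rcases (ENNReal.toReal_eq_zero_iff _).mp hz with h | h
      · exact h
      · exact absurd h (measure_ne_top μ _)
    exact (prob_compl_eq_zero_iff hSmeas).mp hzero
  exact ⟨hmain, tail⟩
end
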